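/- arXiv:2203.11748 — 8 statements merged into one kernel-verified Lean document; each statement's English description precedes it below -/
import Mathlib

section
/- Let (x_n)_{n≥1} and (y_n)_{n≥1} be sequences of reals in (0,1) such that −(2/n)·log x_n → c_1 and −(2/n)·log y_n → c_2 as n → ∞, for some constants c_1, c_2 > 0. For α ∈ (0,1) define N_1(α) as the least integer N such that x_n < α for all n ≥ N, and N_2(α) as the least integer N such that y_n < α for all n ≥ N (both are finite since x_n, y_n → 0). Then N_2(α)/N_1(α) → c_1/c_2 as α → 0 from the right. -/
open Filter Set

set_option maxHeartbeats 1000000 in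
/-- Key lemma: if `-(2/n) log x n → c > 0` and `N α` is the least index from which
all `x n < α`, then `N α / (-log α) → 2/c` as `α → 0⁺`. -/
lemma bahadur_slope_aux (x : ℕ → ℝ) (c : ℝ) (hc : 0 < c)
    (hx : ∀ n, x n ∈ Ioo (0 : ℝ) 1)
    (hxc : Tendsto (fun n : ℕ => -(2 / (n : ℝ)) * Real.log (x n)) atTop (nhds c))
    (N : ℝ → ℕ)
    (hN : ∀ α ∈ Ioo (0 : ℝ) 1, IsLeast {M : ℕ | ∀ n ≥ M, x n < α} (N α)) :
    Tendsto (fun α : ℝ => (N α : ℝ) / (-Real.log α))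
      (nhdsWithin 0 (Ioi 0)) (nhds (2 / c)) := by
  rw [Metric.tendsto_nhds]
  intro ε hε
  obtain ⟨δ, hδ, hδc2, hδε⟩ : ∃ δ : ℝ, 0 < δ ∧ δ ≤ c / 2 ∧ δ ≤ ε * c ^ 2 / 8 :=
    ⟨min (c / 2) (ε * c ^ 2 / 8), lt_min (by positivity) (by positivity),
      min_le_left _ _, min_le_right _ _⟩
  have hδc : δ < c := lt_of_le_of_lt hδc2 (by linarith)
  obtain ⟨M₀, hM₀⟩ := (Metric.tendsto_atTop.mp hxc δ hδ)
  obtain ⟨M, hM, hM1⟩ : ∃ M : ℕ, (∀ n ≥ M, |(-(2 / (n : ℝ)) * Real.log (x n)) - c| < δ)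
      ∧ 1 ≤ M :=
    ⟨M₀ + 1, fun n hn => hM₀ n (le_trans (Nat.le_succ M₀) hn),
      Nat.succ_le_succ (Nat.zero_le _)⟩
  have hMcast : (1 : ℝ) ≤ (M : ℝ) := by exact_mod_cast hM1
  -- L := -log α → ∞
  have hLtop : Tendsto (fun α : ℝ => -Real.log α) (nhdsWithin 0 (Ioi 0)) atTop := by
    have := Real.tendsto_log_nhdsGT_zero
    exact tendsto_neg_atBot_atTop.comp this
  filter_upwards [hLtop.eventually
    (eventually_gt_atTop (((M : ℝ) + 1) * c + 2 / ε + 1)),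
    Ioo_mem_nhdsGT_of_mem (by norm_num : (0:ℝ) ∈ Ico (0:ℝ) 1)] with α hLK hα
  obtain ⟨L, hLdef⟩ : ∃ L : ℝ, L = -Real.log α := ⟨_, rfl⟩
  rw [Real.dist_eq, show (N α : ℝ) / (-Real.log α) = (N α : ℝ) / L by rw [hLdef]]
  rw [← hLdef] at hLK
  have hα0 : 0 < α := hα.1
  have hα1 : α < 1 := hα.2
  have hL0 : 0 < L := by
    have : Real.log α < 0 := Real.log_neg hα0 hα1
    rw [hLdef]; linarith
  have hLne : L ≠ 0 := ne_of_gt hL0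
  have hLM : ((M : ℝ) + 1) * c < L := by
    have h2ε : 0 < 2 / ε := by positivity
    linarith
  have hL2ε : 2 / ε < L := by
    have hMc : 0 < ((M:ℝ)+1)*c := by positivity
    linarith
  obtain ⟨hNαmem, hNαlb⟩ := hN α hα
  -- Lower bound: N α > 2L/(c+δ)
  have hcδp : 0 < c + δ := by linarith
  have key_lower : 2 * L / (c + δ) < (N α : ℝ) := by
    set n₀ : ℕ := ⌊2 * L / (c + δ)⌋₊ with hn₀def
    have hfrac0 : 0 ≤ 2 * L / (c + δ) := by positivity
    have hMn₀ : (M : ℝ) ≤ 2 * L / (c + δ) := by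
      rw [le_div_iff₀ hcδp]
      nlinarith [hMcast, hδc, hc, hLM]
    have hMle : M ≤ n₀ := Nat.le_floor hMn₀
    have hn₀pos : 0 < (n₀ : ℝ) := by
      have h1 : (M:ℝ) ≤ (n₀:ℝ) := Nat.cast_le.mpr hMle
      linarith
    have hn₀ne : (n₀ : ℝ) ≠ 0 := ne_of_gt hn₀pos
    have hbound := hM n₀ hMle
    rw [abs_lt] at hbound
    have hlog : -(2 / (n₀ : ℝ)) * Real.log (x n₀) < c + δ := by linarith [hbound.2]
    have h2 : -(2 * Real.log (x n₀)) < (c + δ) * (n₀ : ℝ) := by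
      have h := mul_lt_mul_of_pos_right hlog hn₀pos
      rwa [show (-(2/(n₀:ℝ)) * Real.log (x n₀)) * (n₀:ℝ)
          = -(2 * Real.log (x n₀)) by field_simp] at h
    have hfl : (n₀ : ℝ) ≤ 2 * L / (c + δ) := Nat.floor_le hfrac0
    have hfl2 : (n₀ : ℝ) * (c + δ) ≤ 2 * L := by
      rw [← le_div_iff₀ hcδp]; exact hfl
    have hxα : α < x n₀ := by
      have hlogα : Real.log α = -L := by rw [hLdef]; ring
      have : Real.log α < Real.log (x n₀) := by
        rw [hlogα]; linarith [h2, hfl2]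
      exact (Real.log_lt_log_iff hα0 (hx n₀).1).mp this
    have hlt : n₀ < N α := by
      by_contra h
      push_neg at h
      exact absurd (hNαmem n₀ h) (not_lt.mpr hxα.le)
    have hflo : 2 * L / (c + δ) < (n₀ : ℝ) + 1 := Nat.lt_floor_add_one _
    have : ((n₀ : ℝ) + 1) ≤ (N α : ℝ) := by exact_mod_cast hlt
    linarith
  -- Upper bound: N α ≤ 2L/(c-δ) + 1
  have hcδm : 0 < c - δ := by linarith
  have key_upper : (N α : ℝ) ≤ 2 * L / (c - δ) + 1 := by
    have hfrac0 : 0 ≤ 2 * L / (c - δ) := by positivity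
    set n₁ : ℕ := max M ⌈2 * L / (c - δ)⌉₊ with hn₁def
    have hmem : n₁ ∈ {M : ℕ | ∀ n ≥ M, x n < α} := by
      intro n hn
      have hMn : M ≤ n := le_trans (le_max_left _ _) hn
      have hceil : (2 * L / (c - δ)) ≤ (n : ℝ) := by
        have h1 : ⌈2 * L / (c - δ)⌉₊ ≤ n := le_trans (le_max_right _ _) hn
        calc 2 * L / (c - δ) ≤ (⌈2 * L / (c - δ)⌉₊ : ℝ) := Nat.le_ceil _
        _ ≤ (n : ℝ) := Nat.cast_le.mpr h1
      have hnpos : 0 < (n : ℝ) := by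
        have h1 : (M:ℝ) ≤ (n:ℝ) := Nat.cast_le.mpr hMn
        linarith
      have hbound := hM n hMn
      rw [abs_lt] at hbound
      have hlog : c - δ < -(2 / (n : ℝ)) * Real.log (x n) := by linarith [hbound.1]
      have h2 : (c - δ) * (n : ℝ) < -(2 * Real.log (x n)) := by
        have h := mul_lt_mul_of_pos_right hlog hnpos
        rwa [show (-(2/(n:ℝ)) * Real.log (x n)) * (n:ℝ)
            = -(2 * Real.log (x n)) by field_simp] at h
      have hceil2 : 2 * L ≤ (n : ℝ) * (c - δ) := by
        rw [div_le_iff₀ hcδm] at hceil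
        linarith
      have hlogα : Real.log α = -L := by rw [hLdef]; ring
      have : Real.log (x n) < Real.log α := by
        rw [hlogα]; linarith [h2, hceil2]
      exact (Real.log_lt_log_iff (hx n).1 hα0).mp this
    have hle := hNαlb hmem
    have hcast : (N α : ℝ) ≤ (n₁ : ℝ) := Nat.cast_le.mpr hle
    have hn₁ : (n₁ : ℝ) ≤ 2 * L / (c - δ) + 1 := by
      rw [hn₁def, Nat.cast_max]
      apply max_le
      · have : (M : ℝ) ≤ 2 * L / (c - δ) := by
          rw [le_div_iff₀ hcδm]
          nlinarith [hMcast, hδ, hc, hLM, hL0]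
        linarith
      · exact le_of_lt (Nat.ceil_lt_add_one hfrac0)
    linarith
  -- combine
  have hclow : 2 / c - 2 / (c + δ) ≤ ε / 4 := by
    rw [div_sub_div _ _ (ne_of_gt hc) (ne_of_gt hcδp), div_le_iff₀ (by positivity)]
    nlinarith [hδε, mul_nonneg (mul_nonneg hε.le hc.le) hδ.le]
  have hchigh : 2 / (c - δ) - 2 / c ≤ ε / 2 := by
    rw [div_sub_div _ _ (ne_of_gt hcδm) (ne_of_gt hc), div_le_iff₀ (by positivity)]
    nlinarith [hδε, mul_le_mul_of_nonneg_left hδc2 (by positivity : (0:ℝ) ≤ ε * c)]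
  rw [abs_lt]
  constructor
  · -- -ε < N α / L - 2/c
    have h1 : 2 / (c + δ) < (N α : ℝ) / L := by
      rw [lt_div_iff₀ hL0, show 2 / (c + δ) * L = 2 * L / (c + δ) by ring]
      exact key_lower
    linarith
  · -- N α / L - 2/c < ε
    have h1 : (N α : ℝ) / L ≤ 2 / (c - δ) + 1 / L := by
      rw [div_le_iff₀ hL0, show (2 / (c - δ) + 1 / L) * L = 2 * L / (c - δ) + 1 by
        field_simp]
      exact key_upper
    have h2 : 1 / L < ε / 2 := by
      rw [div_lt_iff₀ hL0]
      rw [div_lt_iff₀ hε] at hL2ε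
      linarith [hL2ε, mul_comm L ε]
    linarith

/-- Exact Bahadur relative efficiency: if two p-value sequences have exact slopes
`c₁, c₂ > 0`, then the ratio of the smallest sample sizes needed to reach
significance level `α` converges to `c₁ / c₂` as `α → 0⁺`. -/
theorem bahadur_relative_efficiency
    (x y : ℕ → ℝ) (c₁ c₂ : ℝ) (hc₁ : 0 < c₁) (hc₂ : 0 < c₂)
    (hx : ∀ n, x n ∈ Ioo (0 : ℝ) 1) (hy : ∀ n, y n ∈ Ioo (0 : ℝ) 1)
    (hxc : Tendsto (fun n : ℕ => -(2 / (n : ℝ)) * Real.log (x n)) atTop (nhds c₁))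
    (hyc : Tendsto (fun n : ℕ => -(2 / (n : ℝ)) * Real.log (y n)) atTop (nhds c₂))
    (N₁ N₂ : ℝ → ℕ)
    (hN₁ : ∀ α ∈ Ioo (0 : ℝ) 1, IsLeast {N : ℕ | ∀ n ≥ N, x n < α} (N₁ α))
    (hN₂ : ∀ α ∈ Ioo (0 : ℝ) 1, IsLeast {N : ℕ | ∀ n ≥ N, y n < α} (N₂ α)) :
    Tendsto (fun α : ℝ => (N₂ α : ℝ) / (N₁ α : ℝ))
      (nhdsWithin 0 (Ioi 0)) (nhds (c₁ / c₂)) := by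
  have h1 := bahadur_slope_aux x c₁ hc₁ hx hxc N₁ hN₁
  have h2 := bahadur_slope_aux y c₂ hc₂ hy hyc N₂ hN₂
  have hne : (2 : ℝ) / c₁ ≠ 0 := by positivity
  have h3 := h2.div h1 hne
  have heq : (2 / c₂) / (2 / c₁) = c₁ / c₂ := by
    rw [div_div_div_comm, div_self (two_ne_zero : (2:ℝ) ≠ 0), one_div_div]
  rw [heq] at h3
  refine h3.congr' ?_
  filter_upwards [Ioo_mem_nhdsGT_of_mem (by norm_num : (0:ℝ) ∈ Ico (0:ℝ) 1)] with α hα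
  have hlogneg : Real.log α < 0 := Real.log_neg hα.1 hα.2
  have hlogne : Real.log α ≠ 0 := ne_of_lt hlogneg
  rcases eq_or_ne ((N₁ α : ℝ)) 0 with rb | rb
  · simp [rb]
  · simp only [Pi.div_apply]; field_simp
end

section
/- Let a > 0 and r > 0, and let Γ_{a,r} denote the Gamma distribution on ℝ with shape a and rate r. Then log(Γ_{a,r}([t,∞)))/t → −r as t → ∞. In particular, for every integer j ≥ 1, the survival function \bar F_{χ²_{2j}} of the chi-squared distribution with 2j degrees of freedom (Gamma with shape j and rate 1/2) satisfies log(\bar F_{χ²_{2j}}(t))/t → −1/2 as t → ∞. -/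
open MeasureTheory Filter Set ProbabilityTheory

open Real in
lemma gta_integrable (a r : ℝ) (ha : 0 < a) (hr : 0 < r) :
    Integrable (gammaPDFReal a r) := by
  refine ⟨(measurable_gammaPDFReal a r).aestronglyMeasurable, ?_⟩
  rw [hasFiniteIntegral_iff_ofReal (ae_of_all _ (gammaPDFReal_nonneg ha hr))]
  have h := lintegral_gammaPDF_eq_one ha hr
  simp only [gammaPDF] at h
  rw [h]
  exact ENNReal.one_lt_top

lemma gta_S_eq (a r : ℝ) (ha : 0 < a) (hr : 0 < r) (t : ℝ) :
    (gammaMeasure a r (Ici t)).toReal = ∫ x in Ici t, gammaPDFReal a r x := by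
  rw [gammaMeasure, withDensity_apply _ measurableSet_Ici]
  simp only [gammaPDF]
  rw [← ofReal_integral_eq_lintegral_ofReal ((gta_integrable a r ha hr).integrableOn)
    (ae_of_all _ (gammaPDFReal_nonneg ha hr)),
    ENNReal.toReal_ofReal (setIntegral_nonneg measurableSet_Ici
      (fun x _ => gammaPDFReal_nonneg ha hr x))]

lemma gta_bound_tendsto (r C B : ℝ) :
    Tendsto (fun t : ℝ => (C + B * Real.log t - r * t) / t) atTop (nhds (-r)) := by
  have h1 : Tendsto (fun t : ℝ => C / t) atTop (nhds 0) :=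
    tendsto_const_nhds.div_atTop tendsto_id
  have h2 : Tendsto (fun t : ℝ => Real.log t / t) atTop (nhds 0) :=
    Real.isLittleO_log_id_atTop.tendsto_div_nhds_zero
  have h3 : Tendsto (fun t : ℝ => C / t + B * (Real.log t / t) - r) atTop (nhds (-r)) := by
    have := (h1.add (h2.const_mul B)).sub (tendsto_const_nhds (x := r))
    simpa using this
  refine h3.congr' ?_
  filter_upwards [eventually_gt_atTop 0] with t ht
  field_simp

open Real in
lemma gta_lower (a r : ℝ) (ha : 0 < a) (hr : 0 < r) {t : ℝ} (ht : 1 ≤ t) :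
    r ^ a / Gamma a * (t + 1) ^ (-|a - 1|) * Real.exp (-(r * (t + 1))) ≤
      ∫ x in Ici t, gammaPDFReal a r x := by
  have ht0 : (0 : ℝ) < t := by linarith
  have ht1 : (1 : ℝ) ≤ t + 1 := by linarith
  set c := r ^ a / Gamma a with hc
  have hcpos : 0 < c := div_pos (rpow_pos_of_pos hr a) (Gamma_pos_of_pos ha)
  set L := c * (t + 1) ^ (-|a - 1|) * Real.exp (-(r * (t + 1))) with hL
  have key : ∀ x ∈ Ioc t (t + 1), L ≤ gammaPDFReal a r x := by
    intro x hx
    obtain ⟨hx1, hx2⟩ := hx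
    have hx0 : (0 : ℝ) < x := lt_trans ht0 hx1
    have hx1' : (1 : ℝ) ≤ x := le_trans ht hx1.le
    rw [gammaPDFReal, if_pos hx0.le]
    have h1 : (t + 1) ^ (-|a - 1|) ≤ x ^ (a - 1) := by
      rcases le_or_gt 1 a with h | h
      · rw [abs_of_nonneg (by linarith : (0:ℝ) ≤ a - 1)]
        calc (t + 1) ^ (-(a - 1)) ≤ 1 :=
              rpow_le_one_of_one_le_of_nonpos ht1 (by linarith)
          _ ≤ x ^ (a - 1) := one_le_rpow hx1' (by linarith)
      · rw [abs_of_neg (by linarith : a - 1 < 0), neg_neg]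
        exact rpow_le_rpow_of_nonpos hx0 hx2 (by linarith)
    have h2 : Real.exp (-(r * (t + 1))) ≤ Real.exp (-(r * x)) := by
      apply Real.exp_le_exp.2
      have := mul_le_mul_of_nonneg_left hx2 hr.le
      linarith
    calc L = c * ((t + 1) ^ (-|a - 1|) * Real.exp (-(r * (t + 1)))) := by rw [hL]; ring
      _ ≤ c * (x ^ (a - 1) * Real.exp (-(r * x))) := by
          apply mul_le_mul_of_nonneg_left _ hcpos.le
          exact mul_le_mul h1 h2 (Real.exp_pos _).le (rpow_pos_of_pos hx0 _).le
      _ = c * x ^ (a - 1) * Real.exp (-(r * x)) := by ring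
  have hint : IntegrableOn (gammaPDFReal a r) (Ici t) :=
    (gta_integrable a r ha hr).integrableOn
  have hsub : Ioc t (t + 1) ⊆ Ici t := fun x hx => hx.1.le
  have step1 : ∫ x in Ioc t (t + 1), gammaPDFReal a r x ≤ ∫ x in Ici t, gammaPDFReal a r x :=
    setIntegral_mono_set hint (ae_of_all _ (gammaPDFReal_nonneg ha hr))
      (HasSubset.Subset.eventuallyLE hsub)
  have hμ : volume (Ioc t (t + 1)) ≠ ⊤ := by
    rw [Real.volume_Ioc]; exact ENNReal.ofReal_ne_top
  have step2 := setIntegral_ge_of_const_le_real measurableSet_Ioc hμ key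
    (hint.mono_set hsub)
  rw [Measure.real, Real.volume_Ioc, show t + 1 - t = 1 by ring, ENNReal.toReal_ofReal one_pos.le,
    mul_one] at step2
  exact le_trans step2 step1

open Real in
lemma gta_upper (a r : ℝ) (ha : 0 < a) (hr : 0 < r) {t : ℝ} (ht : 1 ≤ t)
    (ht2 : 2 * max (a - 1) 0 / r ≤ t) :
    ∫ x in Ici t, gammaPDFReal a r x ≤
      2 * (r ^ a / Gamma a) / r * t ^ max (a - 1) 0 * Real.exp (-(r * t)) := by
  have ht0 : (0 : ℝ) < t := by linarith
  set c := r ^ a / Gamma a with hc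
  have hcpos : 0 < c := div_pos (rpow_pos_of_pos hr a) (Gamma_pos_of_pos ha)
  set b := max (a - 1) 0 with hb
  have hb0 : 0 ≤ b := le_max_right _ _
  have hbt : 2 * b ≤ r * t := by
    rw [div_le_iff₀ hr] at ht2; linarith
  set K := c * t ^ b * Real.exp (-(r / 2 * t)) with hK
  have key : ∀ x ∈ Ici t, gammaPDFReal a r x ≤ K * Real.exp (-(r / 2 * x)) := by
    intro x hx
    have hxt : t ≤ x := hx
    have hx0 : (0 : ℝ) < x := lt_of_lt_of_le ht0 hxt
    have hx1 : (1 : ℝ) ≤ x := le_trans ht hxt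
    rw [gammaPDFReal, if_pos hx0.le]
    have h1 : x ^ (a - 1) ≤ x ^ b := rpow_le_rpow_of_exponent_le hx1 (le_max_left _ _)
    have h2 : x ^ b ≤ t ^ b * Real.exp (r / 2 * (x - t)) := by
      have hdiv : (0 : ℝ) < x / t := div_pos hx0 ht0
      have hxb : x ^ b = t ^ b * (x / t) ^ b := by
        rw [div_rpow hx0.le ht0.le, mul_div_cancel₀]
        exact (rpow_pos_of_pos ht0 b).ne'
      rw [hxb]
      apply mul_le_mul_of_nonneg_left _ (rpow_pos_of_pos ht0 b).le
      rw [rpow_def_of_pos hdiv]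
      apply Real.exp_le_exp.2
      have hlog : Real.log (x / t) ≤ x / t - 1 := log_le_sub_one_of_pos hdiv
      have h3 : Real.log (x / t) * b ≤ (x / t - 1) * b :=
        mul_le_mul_of_nonneg_right hlog hb0
      refine le_trans h3 ?_
      rw [show x / t - 1 = (x - t) / t by field_simp, div_mul_eq_mul_div, div_le_iff₀ ht0]
      nlinarith [sub_nonneg.2 hxt]
    calc c * x ^ (a - 1) * Real.exp (-(r * x))
        ≤ c * (t ^ b * Real.exp (r / 2 * (x - t))) * Real.exp (-(r * x)) := by
          apply mul_le_mul_of_nonneg_right _ (Real.exp_pos _).le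
          exact mul_le_mul_of_nonneg_left (le_trans h1 h2) hcpos.le
      _ = c * t ^ b * (Real.exp (r / 2 * (x - t)) * Real.exp (-(r * x))) := by ring
      _ = K * Real.exp (-(r / 2 * x)) := by
          rw [show Real.exp (r / 2 * (x - t)) * Real.exp (-(r * x)) =
            Real.exp (-(r / 2 * t)) * Real.exp (-(r / 2 * x)) by
              rw [← Real.exp_add, ← Real.exp_add]; congr 1; ring, hK]
          ring
  have hint : IntegrableOn (gammaPDFReal a r) (Ici t) := by
    refine ⟨(measurable_gammaPDFReal a r).aestronglyMeasurable.restrict, ?_⟩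
    refine ((gammaPDFReal_nonneg ha hr) |> fun h => ?_)
    rw [hasFiniteIntegral_iff_ofReal (ae_of_all _ (gammaPDFReal_nonneg ha hr))]
    calc ∫⁻ x in Ici t, ENNReal.ofReal (gammaPDFReal a r x)
        ≤ ∫⁻ x, ENNReal.ofReal (gammaPDFReal a r x) := setLIntegral_le_lintegral _ _
      _ = 1 := by
          have h := lintegral_gammaPDF_eq_one ha hr
          simp only [gammaPDF] at h; exact h
      _ < ⊤ := ENNReal.one_lt_top
  have hint2 : IntegrableOn (fun x => K * Real.exp (-(r / 2 * x))) (Ici t) := by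
    have : IntegrableOn (fun x => Real.exp (-(r / 2) * x)) (Ioi t) :=
      exp_neg_integrableOn_Ioi t (half_pos hr)
    have h2 : IntegrableOn (fun x => Real.exp (-(r / 2 * x))) (Ici t) := by
      rw [integrableOn_Ici_iff_integrableOn_Ioi]
      simpa [neg_mul] using this
    exact h2.const_mul K
  have step : ∫ x in Ici t, gammaPDFReal a r x ≤
      ∫ x in Ici t, K * Real.exp (-(r / 2 * x)) :=
    setIntegral_mono_on hint hint2 measurableSet_Ici key
  have hval : ∫ x in Ici t, K * Real.exp (-(r / 2 * x)) =
      K * ((r / 2)⁻¹ * Real.exp (-(r / 2 * t))) := by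
    rw [integral_const_mul]
    congr 1
    rw [integral_Ici_eq_integral_Ioi]
    have := integral_comp_mul_left_Ioi (fun y => Real.exp (-y)) t (half_pos hr)
    simp only [smul_eq_mul] at this
    rw [this, integral_exp_neg_Ioi]
  refine le_trans step ?_
  rw [hval, hK]
  have : Real.exp (-(r / 2 * t)) * Real.exp (-(r / 2 * t)) = Real.exp (-(r * t)) := by
    rw [← Real.exp_add]; congr 1; ring
  rw [show c * t ^ b * Real.exp (-(r / 2 * t)) * ((r / 2)⁻¹ * Real.exp (-(r / 2 * t))) =
    (r / 2)⁻¹ * c * t ^ b * (Real.exp (-(r / 2 * t)) * Real.exp (-(r / 2 * t))) by ring, this]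
  rw [show (r / 2)⁻¹ * c = 2 * c / r by field_simp]

open Real in
lemma gta_main (a r : ℝ) (ha : 0 < a) (hr : 0 < r) :
    Tendsto (fun t : ℝ => Real.log ((gammaMeasure a r (Ici t)).toReal) / t)
      atTop (nhds (-r)) := by
  set c := r ^ a / Gamma a with hc
  have hcpos : 0 < c := div_pos (rpow_pos_of_pos hr a) (Gamma_pos_of_pos ha)
  set b := max (a - 1) 0 with hb
  set b1 := |a - 1| with hb1
  have hb10 : 0 ≤ b1 := abs_nonneg _
  refine tendsto_of_tendsto_of_tendsto_of_le_of_le'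
    (gta_bound_tendsto r (Real.log c - b1 * Real.log 2 - r) (-b1))
    (gta_bound_tendsto r (Real.log (2 * c / r)) b) ?_ ?_
  · filter_upwards [eventually_ge_atTop (max 2 (2 * b / r))] with t htT
    have ht2 : (2 : ℝ) ≤ t := le_trans (le_max_left _ _) htT
    have ht1 : (1 : ℝ) ≤ t := by linarith
    have ht0 : (0 : ℝ) < t := by linarith
    rw [gta_S_eq a r ha hr t]
    set S := ∫ x in Ici t, gammaPDFReal a r x with hS
    have hLS := gta_lower a r ha hr ht1
    have hLpos : 0 < c * (t + 1) ^ (-b1) * Real.exp (-(r * (t + 1))) := by positivity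
    have hlogL : Real.log (c * (t + 1) ^ (-b1) * Real.exp (-(r * (t + 1)))) =
        Real.log c + (-b1) * Real.log (t + 1) + (-(r * (t + 1))) := by
      rw [Real.log_mul (by positivity) (Real.exp_pos _).ne',
        Real.log_mul hcpos.ne' (by positivity), Real.log_rpow (by linarith), Real.log_exp]
    have hmono : Real.log (c * (t + 1) ^ (-b1) * Real.exp (-(r * (t + 1)))) ≤ Real.log S :=
      Real.log_le_log hLpos hLS
    have hlog2 : Real.log (t + 1) ≤ Real.log 2 + Real.log t := by
      rw [← Real.log_mul two_ne_zero ht0.ne']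
      exact Real.log_le_log (by linarith) (by linarith)
    have : Real.log c - b1 * Real.log 2 - r + (-b1) * Real.log t - r * t ≤ Real.log S := by
      refine le_trans ?_ hmono
      rw [hlogL]
      nlinarith [mul_le_mul_of_nonneg_left hlog2 hb10]
    exact div_le_div_of_nonneg_right this ht0.le
  · filter_upwards [eventually_ge_atTop (max 2 (2 * b / r))] with t htT
    have ht2 : (2 : ℝ) ≤ t := le_trans (le_max_left _ _) htT
    have htb : 2 * b / r ≤ t := le_trans (le_max_right _ _) htT
    have ht1 : (1 : ℝ) ≤ t := by linarith
    have ht0 : (0 : ℝ) < t := by linarith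
    rw [gta_S_eq a r ha hr t]
    set S := ∫ x in Ici t, gammaPDFReal a r x with hS
    have hSU := gta_upper a r ha hr ht1 htb
    have hSpos : 0 < S := lt_of_lt_of_le (by positivity) (gta_lower a r ha hr ht1)
    have hmono : Real.log S ≤ Real.log (2 * c / r * t ^ b * Real.exp (-(r * t))) :=
      Real.log_le_log hSpos hSU
    have hlogU : Real.log (2 * c / r * t ^ b * Real.exp (-(r * t))) =
        Real.log (2 * c / r) + b * Real.log t - r * t := by
      rw [Real.log_mul (by positivity) (Real.exp_pos _).ne',
        Real.log_mul (by positivity) (by positivity), Real.log_rpow ht0, Real.log_exp]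
      ring
    have : Real.log S ≤ Real.log (2 * c / r) + b * Real.log t - r * t := hlogU ▸ hmono
    exact div_le_div_of_nonneg_right this ht0.le

/-- Tail log-asymptotic of the Gamma distribution: for shape `a > 0` and rate `r > 0`,
`log Γ_{a,r}([t,∞)) / t → -r` as `t → ∞`; in particular, the survival function of the
chi-squared distribution with `2j` degrees of freedom (Gamma with shape `j`, rate `1/2`)
satisfies `log F̄(t) / t → -1/2`. -/
theorem gamma_tail_log_asymptotic (a r : ℝ) (ha : 0 < a) (hr : 0 < r) :
    (Tendsto (fun t : ℝ => Real.log ((gammaMeasure a r (Ici t)).toReal) / t)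
      atTop (nhds (-r))) ∧
    ∀ j : ℕ, 1 ≤ j →
      Tendsto
        (fun t : ℝ => Real.log ((gammaMeasure (j : ℝ) (1 / 2) (Ici t)).toReal) / t)
        atTop (nhds (-(1 / 2))) := by
  refine ⟨gta_main a r ha hr, fun j hj => ?_⟩
  exact gta_main (j : ℝ) (1 / 2) (by exact_mod_cast Nat.lt_of_lt_of_le Nat.zero_lt_one hj)
    one_half_pos
end

section
/- Fix an integer K ≥ 1 and an integer ℓ with 1 ≤ ℓ ≤ K. Fix reals λ_1,…,λ_K > 0 and c_1,…,c_ℓ > 0, and set c_i = 0 for ℓ < i ≤ K. Fix sequences n_1,…,n_K : ℕ → ℕ with n_i(n)/n → λ_i as n → ∞. On a probability space, for each n let p_1^{(n)},…,p_K^{(n)} be random variables with values in (0,1) such that: (i) for each 1 ≤ i ≤ ℓ, −(2/n_i(n))·log p_i^{(n)} → c_i almost surely as n → ∞; (ii) for each ℓ < i ≤ K and every n, p_i^{(n)} is uniformly distributed on (0,1). Define the Fisher combined p-value q_n = \bar F_{χ²_{2K}}(∑_{i=1}^K −2·log p_i^{(n)}). Then −(2/n)·log q_n → ∑_{i=1}^ℓ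 λ_i·c_i almost surely as n → ∞; i.e., Fisher's method attains the maximum attainable exact slope ∑_{i=1}^ℓ λ_i c_i (it is asymptotically Bahadur optimal). -/
open MeasureTheory Filter Set ProbabilityTheory Real

namespace FisherABO

lemma pow_le_factorial_mul_exp (m : ℕ) {x : ℝ} (hx : 0 ≤ x) :
    x ^ m ≤ (Nat.factorial m : ℝ) * Real.exp x := by
  have h : x ^ m / (Nat.factorial m : ℝ) ≤ Real.exp x :=
    le_trans (Finset.single_le_sum (f := fun i => x ^ i / (Nat.factorial i : ℝ))
      (fun i _ => by positivity) (Finset.self_mem_range_succ m))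
      (Real.sum_le_exp_of_nonneg hx (m + 1))
  have hm : (0:ℝ) < (Nat.factorial m : ℝ) := by positivity
  calc x ^ m = (x ^ m / (Nat.factorial m : ℝ)) * (Nat.factorial m : ℝ) := by field_simp
  _ ≤ Real.exp x * (Nat.factorial m : ℝ) := by gcongr
  _ = (Nat.factorial m : ℝ) * Real.exp x := mul_comm _ _

lemma gamma_tail_upper (K : ℕ) (hK : 1 ≤ K) {ε : ℝ} (hε : 0 < ε) (hε2 : ε < 1/2) :
    ∃ A : ℝ, 0 < A ∧ ∀ t : ℝ, 0 ≤ t →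
      (gammaMeasure (K:ℝ) (1/2) (Ici t)).toReal ≤ A * Real.exp (-(1/2 - ε) * t) := by
  set a : ℝ := 1/2 - ε with ha_def
  have ha : 0 < a := by simp only [ha_def]; linarith
  set C : ℝ := (1/2:ℝ) ^ (K:ℝ) / Real.Gamma K * ((Nat.factorial (K-1) : ℝ) / ε ^ (K-1)) with hC_def
  have hΓ : 0 < Real.Gamma K := Real.Gamma_pos_of_pos (by exact_mod_cast hK)
  have hC : 0 < C := by
    apply mul_pos (div_pos (Real.rpow_pos_of_pos (by norm_num) _) hΓ)
    positivity
  refine ⟨C * a⁻¹, by positivity, fun t ht => ?_⟩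
  -- pointwise bound
  have hpt : ∀ x : ℝ, 0 ≤ x →
      gammaPDFReal (K:ℝ) (1/2) x ≤ C * Real.exp (-a * x) := by
    intro x hx
    rw [gammaPDFReal, if_pos hx]
    have hcast : (K:ℝ) - 1 = ((K - 1 : ℕ) : ℝ) := by
      push_cast [Nat.cast_sub hK]; ring
    rw [hcast, Real.rpow_natCast x (K-1)]
    have key : x ^ (K-1) ≤ (Nat.factorial (K-1) : ℝ) / ε ^ (K-1) * Real.exp (ε * x) := by
      have h1 : (ε * x) ^ (K-1) ≤ (Nat.factorial (K-1) : ℝ) * Real.exp (ε * x) :=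
        pow_le_factorial_mul_exp (K-1) (by positivity)
      rw [mul_pow] at h1
      rw [div_mul_eq_mul_div, le_div_iff₀ (by positivity)]
      calc x ^ (K-1) * ε ^ (K-1) = ε ^ (K-1) * x ^ (K-1) := by ring
      _ ≤ (Nat.factorial (K-1) : ℝ) * Real.exp (ε * x) := h1
    have hexp : Real.exp (ε * x) * Real.exp (-(1/2 * x)) = Real.exp (-a * x) := by
      rw [← Real.exp_add]; congr 1; simp only [ha_def]; ring
    calc (1/2:ℝ) ^ (K:ℝ) / Real.Gamma K * x ^ (K-1) * Real.exp (-(1/2 * x))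
        ≤ (1/2:ℝ) ^ (K:ℝ) / Real.Gamma K * ((Nat.factorial (K-1) : ℝ) / ε ^ (K-1) * Real.exp (ε * x)) *
            Real.exp (-(1/2 * x)) := by
          gcongr
    _ = C * (Real.exp (ε * x) * Real.exp (-(1/2 * x))) := by rw [hC_def]; ring
    _ = C * Real.exp (-a * x) := by rw [hexp]
  -- integral bound
  have hint : IntegrableOn (fun x : ℝ => C * Real.exp (-a * x)) (Ici t) := by
    rw [integrableOn_Ici_iff_integrableOn_Ioi]
    exact (exp_neg_integrableOn_Ioi t ha).const_mul C
  have hmono : gammaMeasure (K:ℝ) (1/2) (Ici t) ≤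
      ENNReal.ofReal (∫ x in Ici t, C * Real.exp (-a * x)) := by
    rw [gammaMeasure, withDensity_apply _ measurableSet_Ici]
    refine le_trans (setLIntegral_mono' (g := fun x => ENNReal.ofReal (C * Real.exp (-a * x))) measurableSet_Ici
      (fun x hx => ?_)) ?_
    · exact ENNReal.ofReal_le_ofReal (hpt x (le_trans ht hx))
    · rw [← ofReal_integral_eq_lintegral_ofReal hint
        (ae_of_all _ (fun x => by positivity))]
  have hval : (∫ x in Ici t, C * Real.exp (-a * x)) = C * a⁻¹ * Real.exp (-a * t) := by
    rw [integral_Ici_eq_integral_Ioi, integral_const_mul]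
    have h := integral_comp_mul_left_Ioi (fun y : ℝ => Real.exp (-y)) t ha
    simp only [smul_eq_mul] at h
    simp only [neg_mul]
    rw [h, integral_exp_neg_Ioi]
    ring
  calc (gammaMeasure (K:ℝ) (1/2) (Ici t)).toReal
      ≤ (ENNReal.ofReal (∫ x in Ici t, C * Real.exp (-a * x))).toReal := by
        apply ENNReal.toReal_mono ENNReal.ofReal_ne_top hmono
  _ = C * a⁻¹ * Real.exp (-a * t) := by
        rw [hval, ENNReal.toReal_ofReal (by positivity)]

lemma gamma_tail_lower (K : ℕ) (hK : 1 ≤ K) :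
    ∃ B : ℝ, 0 < B ∧ ∀ t : ℝ, 1 ≤ t →
      B * Real.exp (-(t+1)/2) ≤ (gammaMeasure (K:ℝ) (1/2) (Ici t)).toReal := by
  have hΓ : 0 < Real.Gamma K := Real.Gamma_pos_of_pos (by exact_mod_cast hK)
  set B : ℝ := (1/2:ℝ) ^ (K:ℝ) / Real.Gamma K with hB_def
  have hB : 0 < B := div_pos (Real.rpow_pos_of_pos (by norm_num) _) hΓ
  refine ⟨B, hB, fun t ht => ?_⟩
  have hprob : IsProbabilityMeasure (gammaMeasure (K:ℝ) (1/2)) :=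
    isProbabilityMeasure_gammaMeasure (by exact_mod_cast hK) (by norm_num)
  have hfin : gammaMeasure (K:ℝ) (1/2) (Ici t) ≠ ⊤ := measure_ne_top _ _
  have hpt : ∀ x ∈ Icc t (t+1),
      ENNReal.ofReal (B * Real.exp (-(t+1)/2)) ≤ gammaPDF (K:ℝ) (1/2) x := by
    intro x hx
    have hx1 : (1:ℝ) ≤ x := le_trans ht hx.1
    have hx0 : (0:ℝ) ≤ x := by linarith
    rw [gammaPDF_of_nonneg hx0]
    apply ENNReal.ofReal_le_ofReal
    have h1 : (1:ℝ) ≤ x ^ ((K:ℝ) - 1) :=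
      Real.one_le_rpow hx1 (by simp; exact_mod_cast hK)
    have h2 : Real.exp (-(t+1)/2) ≤ Real.exp (-(1/2 * x)) := by
      apply Real.exp_le_exp.2; linarith [hx.2]
    calc B * Real.exp (-(t+1)/2) = B * 1 * Real.exp (-(t+1)/2) := by ring
    _ ≤ B * x ^ ((K:ℝ) - 1) * Real.exp (-(1/2 * x)) := by gcongr
  have key : ENNReal.ofReal (B * Real.exp (-(t+1)/2)) ≤ gammaMeasure (K:ℝ) (1/2) (Ici t) := by
    rw [gammaMeasure, withDensity_apply _ measurableSet_Ici]
    calc ENNReal.ofReal (B * Real.exp (-(t+1)/2))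
        = ENNReal.ofReal (B * Real.exp (-(t+1)/2)) * volume (Icc t (t+1)) := by
          rw [Real.volume_Icc]
          norm_num
    _ = ∫⁻ _ in Icc t (t+1), ENNReal.ofReal (B * Real.exp (-(t+1)/2)) := by
          rw [setLIntegral_const]
    _ ≤ ∫⁻ x in Icc t (t+1), gammaPDF (K:ℝ) (1/2) x :=
          setLIntegral_mono' measurableSet_Icc hpt
    _ ≤ ∫⁻ x in Ici t, gammaPDF (K:ℝ) (1/2) x :=
          lintegral_mono_set (Icc_subset_Ici_self)
  calc B * Real.exp (-(t+1)/2)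
      = (ENNReal.ofReal (B * Real.exp (-(t+1)/2))).toReal := by
        rw [ENNReal.toReal_ofReal (by positivity)]
  _ ≤ (gammaMeasure (K:ℝ) (1/2) (Ici t)).toReal := ENNReal.toReal_mono hfin key

lemma barF_le_one (K : ℕ) (hK : 1 ≤ K) (t : ℝ) :
    (gammaMeasure (K:ℝ) (1/2) (Ici t)).toReal ≤ 1 := by
  have hprob : IsProbabilityMeasure (gammaMeasure (K:ℝ) (1/2)) :=
    isProbabilityMeasure_gammaMeasure (by exact_mod_cast hK) (by norm_num)
  exact ENNReal.toReal_le_of_le_ofReal zero_le_one (by rw [ENNReal.ofReal_one]; exact prob_le_one)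

lemma tendsto_slope_barF (K : ℕ) (hK : 1 ≤ K) {s : ℝ} (hs : 0 < s) (t : ℕ → ℝ)
    (ht : Tendsto (fun n : ℕ => t n / (n:ℝ)) atTop (nhds s)) :
    Tendsto (fun n : ℕ => -(2 / (n:ℝ)) *
        Real.log ((gammaMeasure (K:ℝ) (1/2) (Ici (t n))).toReal))
      atTop (nhds s) := by
  obtain ⟨B, hB, hBle⟩ := gamma_tail_lower K hK
  -- eventually t n ≥ 1
  have hev1 : ∀ᶠ n : ℕ in atTop, 1 ≤ t n := by
    have h1 : ∀ᶠ n : ℕ in atTop, s/2 ≤ t n / n :=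
      ht.eventually (eventually_ge_nhds (by linarith))
    have h2 : ∀ᶠ n : ℕ in atTop, (2/s : ℝ) ≤ (n:ℝ) :=
      tendsto_natCast_atTop_atTop.eventually_ge_atTop _
    filter_upwards [h1, h2, eventually_gt_atTop 0] with n hn1 hn2 hn3
    have hnpos : (0:ℝ) < (n:ℝ) := by exact_mod_cast hn3
    have := (le_div_iff₀ hnpos).1 hn1
    calc (1:ℝ) = s/2 * (2/s) := by field_simp
    _ ≤ s/2 * (n:ℝ) := by gcongr
    _ ≤ t n := by linarith
  have hpos : ∀ᶠ n : ℕ in atTop,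
      0 < (gammaMeasure (K:ℝ) (1/2) (Ici (t n))).toReal := by
    filter_upwards [hev1] with n hn
    exact lt_of_lt_of_le (by positivity) (hBle (t n) hn)
  rw [tendsto_order]
  constructor
  · -- lower bound
    intro a ha
    set ε : ℝ := min (1/4) ((s - a)/(4*s)) with hε_def
    have hε : 0 < ε := lt_min (by norm_num) (div_pos (by linarith) (by linarith))
    have hε2 : ε < 1/2 := lt_of_le_of_lt (min_le_left _ _) (by norm_num)
    have hlim : a < (1 - 2*ε)*s - 0 := by
      have h1 : ε ≤ (s - a)/(4*s) := min_le_right _ _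
      have h2 : 2*ε*s ≤ (s-a)/2 := by
        have := mul_le_mul_of_nonneg_right h1 (le_of_lt hs)
        calc 2*ε*s ≤ 2*((s - a)/(4*s)*s) := by nlinarith
        _ = (s-a)/2 := by field_simp; ring
      nlinarith
    obtain ⟨A, hA, hAle⟩ := gamma_tail_upper K hK hε hε2
    have hg : Tendsto (fun n : ℕ => (1 - 2*ε) * (t n / n) - 2/(n:ℝ) * Real.log A)
        atTop (nhds ((1 - 2*ε)*s - 0)) := by
      apply Tendsto.sub (ht.const_mul _)
      have h0 : Tendsto (fun n : ℕ => 2/(n:ℝ)) atTop (nhds 0) :=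
        tendsto_const_div_atTop_nhds_zero_nat 2
      simpa using h0.mul_const (Real.log A)
    filter_upwards [hg.eventually (eventually_gt_nhds hlim), hev1, hpos,
      eventually_gt_atTop 0] with n hgn h1n hposn hn0
    have hnpos : (0:ℝ) < (n:ℝ) := by exact_mod_cast hn0
    have ht0 : 0 ≤ t n := by linarith
    have hub := hAle (t n) ht0
    have hlog : Real.log ((gammaMeasure (K:ℝ) (1/2) (Ici (t n))).toReal)
        ≤ Real.log A + (-(1/2 - ε) * t n) := by
      calc Real.log ((gammaMeasure (K:ℝ) (1/2) (Ici (t n))).toReal)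
          ≤ Real.log (A * Real.exp (-(1/2 - ε) * t n)) :=
            Real.log_le_log hposn hub
      _ = Real.log A + (-(1/2 - ε) * t n) := by
            rw [Real.log_mul (ne_of_gt hA) (Real.exp_ne_zero _), Real.log_exp]
    have h2n : (0:ℝ) < 2/(n:ℝ) := by positivity
    calc a < (1 - 2*ε) * (t n / n) - 2/(n:ℝ) * Real.log A := hgn
    _ = -(2/(n:ℝ)) * (Real.log A + (-(1/2 - ε) * t n)) := by
          field_simp; ring
    _ ≤ -(2/(n:ℝ)) * Real.log ((gammaMeasure (K:ℝ) (1/2) (Ici (t n))).toReal) := by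
          simp only [neg_mul]
          exact neg_le_neg (mul_le_mul_of_nonneg_left (by linarith [hlog]) (le_of_lt h2n))
  · -- upper bound
    intro b hb
    have hg : Tendsto (fun n : ℕ => (t n / n + 1/(n:ℝ)) - 2/(n:ℝ) * Real.log B)
        atTop (nhds ((s + 0) - 0)) := by
      apply Tendsto.sub
      · exact ht.add (tendsto_const_div_atTop_nhds_zero_nat 1)
      · have h0 : Tendsto (fun n : ℕ => 2/(n:ℝ)) atTop (nhds 0) :=
          tendsto_const_div_atTop_nhds_zero_nat 2
        simpa using h0.mul_const (Real.log B)
    have hlim : (s + 0) - 0 < b := by simpa using hb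
    filter_upwards [hg.eventually (eventually_lt_nhds hlim), hev1, hpos,
      eventually_gt_atTop 0] with n hgn h1n hposn hn0
    have hnpos : (0:ℝ) < (n:ℝ) := by exact_mod_cast hn0
    have hlb := hBle (t n) h1n
    have hlog : Real.log B + (-(t n + 1)/2)
        ≤ Real.log ((gammaMeasure (K:ℝ) (1/2) (Ici (t n))).toReal) := by
      calc Real.log B + (-(t n + 1)/2)
          = Real.log (B * Real.exp (-(t n + 1)/2)) := by
            rw [Real.log_mul (ne_of_gt hB) (Real.exp_ne_zero _), Real.log_exp]
      _ ≤ Real.log ((gammaMeasure (K:ℝ) (1/2) (Ici (t n))).toReal) :=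
            Real.log_le_log (by positivity) hlb
    have h2n : (0:ℝ) < 2/(n:ℝ) := by positivity
    calc -(2/(n:ℝ)) * Real.log ((gammaMeasure (K:ℝ) (1/2) (Ici (t n))).toReal)
        ≤ -(2/(n:ℝ)) * (Real.log B + (-(t n + 1)/2)) := by
          simp only [neg_mul]
          exact neg_le_neg (mul_le_mul_of_nonneg_left hlog (le_of_lt h2n))
    _ = (t n / n + 1/(n:ℝ)) - 2/(n:ℝ) * Real.log B := by field_simp; ring
    _ < b := hgn

lemma null_component {Ω : Type*} [MeasurableSpace Ω] (μ : Measure Ω)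
    [IsProbabilityMeasure μ] (X : ℕ → Ω → ℝ) (hmeas : ∀ n, Measurable (X n))
    (hval : ∀ n ω, X n ω ∈ Ioo (0:ℝ) 1)
    (hdist : ∀ n, Measure.map (X n) μ = volume.restrict (Ioo (0:ℝ) 1)) :
    ∀ᵐ ω ∂μ, Tendsto (fun n : ℕ => -2 * Real.log (X n ω) / n) atTop (nhds 0) := by
  have hBC : ∀ k : ℕ, ∀ᵐ ω ∂μ, ∀ᶠ n : ℕ in atTop,
      ¬ (X n ω ≤ Real.exp (-(n:ℝ) * ((1:ℝ)/(k+1)) / 2)) := by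
    intro k
    set δ : ℝ := (1:ℝ)/(k+1) with hδ_def
    have hδ : 0 < δ := by positivity
    set A : ℕ → Set Ω := fun n => X n ⁻¹' (Iic (Real.exp (-(n:ℝ) * δ / 2))) with hA_def
    have hμA : ∀ n, μ (A n) ≤ ENNReal.ofReal (Real.exp (-δ/2) ^ n) := by
      intro n
      have hmap : μ (A n) = (volume.restrict (Ioo (0:ℝ) 1)) (Iic (Real.exp (-(n:ℝ) * δ / 2))) := by
        rw [hA_def, ← Measure.map_apply (hmeas n) measurableSet_Iic, hdist n]
      rw [hmap, Measure.restrict_apply measurableSet_Iic]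
      have hsub : Iic (Real.exp (-(n:ℝ) * δ / 2)) ∩ Ioo (0:ℝ) 1 ⊆
          Ioc 0 (Real.exp (-(n:ℝ) * δ / 2)) := by
        rintro x ⟨hx1, hx2, _⟩; exact ⟨hx2, hx1⟩
      calc volume (Iic (Real.exp (-(n:ℝ) * δ / 2)) ∩ Ioo (0:ℝ) 1)
          ≤ volume (Ioc 0 (Real.exp (-(n:ℝ) * δ / 2))) := measure_mono hsub
      _ = ENNReal.ofReal (Real.exp (-(n:ℝ) * δ / 2) - 0) := Real.volume_Ioc
      _ = ENNReal.ofReal (Real.exp (-δ/2) ^ n) := by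
          rw [sub_zero, ← Real.exp_nat_mul]
          congr 1
          ring
    have hsum : (∑' n, μ (A n)) ≠ ⊤ := by
      apply ne_top_of_le_ne_top (b := ENNReal.ofReal (∑' n, Real.exp (-δ/2) ^ n))
        ENNReal.ofReal_ne_top
      have hgeom : Summable (fun n : ℕ => Real.exp (-δ/2) ^ n) :=
        summable_geometric_of_lt_one (Real.exp_nonneg _)
          (Real.exp_lt_one_iff.2 (by linarith))
      calc (∑' n, μ (A n)) ≤ ∑' n, ENNReal.ofReal (Real.exp (-δ/2) ^ n) :=
            ENNReal.tsum_le_tsum hμA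
      _ = ENNReal.ofReal (∑' n, Real.exp (-δ/2) ^ n) :=
            (ENNReal.ofReal_tsum_of_nonneg (fun n => by positivity) hgeom).symm
    filter_upwards [ae_eventually_notMem hsum] with ω hω
    filter_upwards [hω] with n hn
    exact hn
  rw [← ae_all_iff] at hBC
  filter_upwards [hBC] with ω hω
  rw [tendsto_order]
  constructor
  · intro a ha
    filter_upwards [eventually_gt_atTop 0] with n hn
    have hnpos : (0:ℝ) < (n:ℝ) := by exact_mod_cast hn
    have hlog : Real.log (X n ω) < 0 :=
      Real.log_neg (hval n ω).1 (hval n ω).2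
    have : 0 < -2 * Real.log (X n ω) / n := by
      apply div_pos (by linarith) hnpos
    linarith
  · intro b hb
    obtain ⟨k, hk⟩ := exists_nat_one_div_lt hb
    filter_upwards [hω k, eventually_gt_atTop 0] with n hn hn0
    have hnpos : (0:ℝ) < (n:ℝ) := by exact_mod_cast hn0
    push_neg at hn
    have hlog : -(n:ℝ) * ((1:ℝ)/(k+1)) / 2 ≤ Real.log (X n ω) := by
      calc -(n:ℝ) * ((1:ℝ)/(k+1)) / 2
          = Real.log (Real.exp (-(n:ℝ) * ((1:ℝ)/(k+1)) / 2)) := (Real.log_exp _).symm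
      _ ≤ Real.log (X n ω) := Real.log_le_log (Real.exp_pos _) hn.le
    have h1 : -2 * Real.log (X n ω) / n ≤ (1:ℝ)/(k+1) := by
      rw [div_le_iff₀ hnpos]
      nlinarith
    calc -2 * Real.log (X n ω) / n ≤ (1:ℝ)/(k+1) := h1
    _ < b := by exact_mod_cast hk

end FisherABO

/-- Fisher's method is asymptotically Bahadur optimal: its combined p-value has
exact slope `∑ i, λ i * c i` (the maximum attainable exact slope, since `c i = 0`
for the null components). -/
theorem fisher_is_ABO
    {K : ℕ} (hK : 1 ≤ K) (ℓ : ℕ) (hℓ : 1 ≤ ℓ) (hℓK : ℓ ≤ K)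
    (lam c : Fin K → ℝ)
    (hlam : ∀ i, 0 < lam i)
    (hcpos : ∀ i : Fin K, (i : ℕ) < ℓ → 0 < c i)
    (hcnull : ∀ i : Fin K, ℓ ≤ (i : ℕ) → c i = 0)
    (nseq : Fin K → ℕ → ℕ)
    (hn : ∀ i, Tendsto (fun n : ℕ => (nseq i n : ℝ) / (n : ℝ)) atTop (nhds (lam i)))
    {Ω : Type*} [MeasurableSpace Ω] (μ : Measure Ω) [IsProbabilityMeasure μ]
    (p : ℕ → Fin K → Ω → ℝ)
    (hmeas : ∀ n i, Measurable (p n i))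
    (hval : ∀ n i ω, p n i ω ∈ Ioo (0 : ℝ) 1)
    (hslope : ∀ i : Fin K, (i : ℕ) < ℓ →
      ∀ᵐ ω ∂μ, Tendsto (fun n : ℕ => -(2 / (nseq i n : ℝ)) * Real.log (p n i ω))
        atTop (nhds (c i)))
    (hnull : ∀ i : Fin K, ℓ ≤ (i : ℕ) →
      ∀ n, Measure.map (p n i) μ = volume.restrict (Ioo (0 : ℝ) 1))
    -- the Fisher combined p-value
    (q : ℕ → Ω → ℝ)
    (hq : ∀ n ω, q n ω =
      (gammaMeasure (K : ℝ) (1 / 2)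
        (Ici (∑ i : Fin K, -2 * Real.log (p n i ω)))).toReal) :
    ∀ᵐ ω ∂μ, Tendsto (fun n : ℕ => -(2 / (n : ℝ)) * Real.log (q n ω))
      atTop (nhds (∑ i : Fin K, lam i * c i)) := by
  have hs : 0 < ∑ i : Fin K, lam i * c i := by
    apply Finset.sum_pos' (fun i _ => ?_)
    · exact ⟨⟨0, lt_of_lt_of_le hℓ hℓK⟩, Finset.mem_univ _,
        mul_pos (hlam _) (hcpos _ (lt_of_lt_of_le Nat.zero_lt_one hℓ))⟩
    · rcases lt_or_ge (i:ℕ) ℓ with h | h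
      · exact (mul_pos (hlam i) (hcpos i h)).le
      · rw [hcnull i h, mul_zero]
  have hcomp : ∀ i : Fin K, ∀ᵐ ω ∂μ,
      Tendsto (fun n : ℕ => -2 * Real.log (p n i ω) / n) atTop (nhds (lam i * c i)) := by
    intro i
    rcases lt_or_ge (i:ℕ) ℓ with h | h
    · filter_upwards [hslope i h] with ω hω
      have hmul : Tendsto (fun n : ℕ =>
          (nseq i n : ℝ)/(n:ℝ) * (-(2 / (nseq i n : ℝ)) * Real.log (p n i ω)))
          atTop (nhds (lam i * c i)) := (hn i).mul hω
      apply hmul.congr'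
      have hev : ∀ᶠ n : ℕ in atTop, 0 < nseq i n := by
        have h1 : ∀ᶠ n : ℕ in atTop, lam i / 2 ≤ (nseq i n : ℝ)/(n:ℝ) :=
          (hn i).eventually (eventually_ge_nhds (by linarith [hlam i]))
        filter_upwards [h1] with n h1n
        rcases Nat.eq_zero_or_pos (nseq i n) with hc | hc
        · rw [hc] at h1n; simp at h1n; linarith [hlam i]
        · exact hc
      filter_upwards [hev, eventually_gt_atTop 0] with n hposn hn0
      have ha : (nseq i n : ℝ) ≠ 0 := by positivity
      have hb : (n : ℝ) ≠ 0 := by positivity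
      field_simp
    · have h0 := FisherABO.null_component μ (fun n => p n i)
        (fun n => hmeas n i) (fun n ω => hval n i ω) (hnull i h)
      rw [hcnull i h, mul_zero]
      exact h0
  have hae := ae_all_iff.2 hcomp
  filter_upwards [hae] with ω hω
  have hT : Tendsto (fun n : ℕ => (∑ i : Fin K, -2 * Real.log (p n i ω)) / (n:ℝ))
      atTop (nhds (∑ i : Fin K, lam i * c i)) := by
    have hsum := tendsto_finset_sum Finset.univ (fun i (_ : i ∈ Finset.univ) => hω i)
    apply hsum.congr
    intro n
    rw [Finset.sum_div]
  have hfin := FisherABO.tendsto_slope_barF K hK hs _ hT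
  exact hfin.congr fun n => by rw [hq n ω]
end

section
/- Fix an integer K ≥ 1 and an integer ℓ with 1 ≤ ℓ ≤ K. Fix reals λ_1,…,λ_K > 0 and c_1,…,c_ℓ > 0, and set c_i = 0 for ℓ < i ≤ K. Fix sequences n_1,…,n_K : ℕ → ℕ with n_i(n)/n → λ_i as n → ∞. On a probability space, for each n let p_1^{(n)},…,p_K^{(n)} be random variables with values in (0,1) such that: (i) for each 1 ≤ i ≤ ℓ, −(2/n_i(n))·log p_i^{(n)} → c_i almost surely as n → ∞; (ii) for each ℓ < i ≤ K and every n, p_i^{(n)} is uniformly distributed on (0,1). Let Φ be the cumulative distribution function of the standard Gaussian distribution on ℝ and let Q : (0,1) → ℝ be a function satisfying Φ(Q(u)) = u for all u ∈ (0,1). Define the Stouffer statistic T_n = ∑_{i=1}^K Q(1 − p_i^{(n)}) and its combined p-value r_n = 1 − Φ(T_n/√K). Then −(2/n)·log r_n → (1/K)·(∑_{i=1}^ℓ (λ_i·c_i)^{1/2})² almost surely as n → ∞; in particular, when ℓ ≥ 2, Stouffer's method is not asymptotically Bahadur optimal since (1/K)(∑_{i=1}^ℓ √(λ_i c_i))²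 < ∑_{i=1}^ℓ λ_i c_i. -/
open MeasureTheory Filter Set ProbabilityTheory Topology

noncomputable def sg (t : ℝ) : ℝ := (Real.sqrt (2 * Real.pi))⁻¹ * Real.exp (-(t ^ 2) / 2)

lemma sg_eq : sg = gaussianPDFReal 0 1 := by
  ext t
  simp only [sg, gaussianPDFReal, NNReal.coe_one, mul_one, sub_zero]

lemma sg_pos (t : ℝ) : 0 < sg t := by
  apply mul_pos (inv_pos.2 (Real.sqrt_pos.2 (by positivity))) (Real.exp_pos _)

lemma sg_integrable : Integrable sg := by
  rw [sg_eq]; exact integrable_gaussianPDFReal 0 1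

lemma sg_integral : ∫ t, sg t = 1 := by
  rw [sg_eq]; exact integral_gaussianPDFReal_eq_one 0 one_ne_zero

lemma sg_cont : Continuous sg := by
  apply Continuous.mul continuous_const
  exact (Real.continuous_exp.comp (by continuity))

noncomputable def Phi (x : ℝ) : ℝ := ((gaussianReal 0 1) (Iic x)).toReal

lemma Phi_eq (x : ℝ) : Phi x = ∫ t in Iic x, sg t := by
  rw [Phi, gaussianReal_apply_eq_integral 0 one_ne_zero, ← sg_eq,
    ENNReal.toReal_ofReal]
  exact setIntegral_nonneg measurableSet_Iic fun t _ => (sg_pos t).le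

lemma one_sub_Phi (x : ℝ) : 1 - Phi x = ∫ t in Ioi x, sg t := by
  have := intervalIntegral.integral_Iic_add_Ioi (f := sg) (b := x) (μ := volume)
    sg_integrable.integrableOn sg_integrable.integrableOn
  rw [sg_integral] at this
  rw [Phi_eq]
  linarith

lemma Phi_lt_one (x : ℝ) : Phi x < 1 := by
  have h : 0 < ∫ t in Ioi x, sg t := by
    rw [setIntegral_pos_iff_support_of_nonneg_ae
      (ae_of_all _ fun t => (sg_pos t).le) sg_integrable.integrableOn]
    have : Function.support sg ∩ Ioi x = Ioi x := by
      rw [inter_eq_right]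
      intro t _
      exact (sg_pos t).ne'
    rw [this]
    simp
  have := one_sub_Phi x
  linarith

lemma Phi_pos (x : ℝ) : 0 < Phi x := by
  rw [Phi_eq]
  rw [setIntegral_pos_iff_support_of_nonneg_ae
    (ae_of_all _ fun t => (sg_pos t).le) sg_integrable.integrableOn]
  have : Function.support sg ∩ Iic x = Iic x := by
    rw [inter_eq_right]; intro t _; exact (sg_pos t).ne'
  rw [this]
  simp

lemma Phi_mono {x y : ℝ} (h : x ≤ y) : Phi x ≤ Phi y := by
  rw [Phi_eq, Phi_eq]
  exact setIntegral_mono_set sg_integrable.integrableOn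
    (ae_of_all _ fun t => (sg_pos t).le) (HasSubset.Subset.eventuallyLE (Iic_subset_Iic.2 h))

lemma sg_even (t : ℝ) : sg (-t) = sg t := by simp [sg]

lemma Phi_neg (x : ℝ) : Phi (-x) = 1 - Phi x := by
  rw [Phi_eq, one_sub_Phi]
  rw [show (∫ t in Iic (-x), sg t) = ∫ t in Iic (-x), sg (-t) by
    exact setIntegral_congr_fun measurableSet_Iic fun t _ => (sg_even t).symm]
  rw [integral_comp_neg_Iic, neg_neg]

lemma integral_exp_neg_mul_Ioi {b : ℝ} (hb : 0 < b) (a : ℝ) :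
    ∫ u in Ioi a, Real.exp (-b * u) = Real.exp (-b * a) / b := by
  have hd : ∀ x ∈ Ici a, HasDerivAt (fun u => -Real.exp (-b * u) / b)
      (Real.exp (-b * x)) x := by
    intro x _
    have h1 : HasDerivAt (fun u : ℝ => -b * u) (-b) x := by
      simpa using (hasDerivAt_id x).const_mul (-b)
    have h2 := (h1.exp).neg.div_const b
    convert h2 using 1
    · rfl
    · rfl
    · rfl
    · field_simp
  have hlim : Tendsto (fun u => -Real.exp (-b * u) / b) atTop (𝓝 0) := by
    have : Tendsto (fun u : ℝ => Real.exp (-b * u)) atTop (𝓝 0) :=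
      Real.tendsto_exp_atBot.comp (tendsto_id.const_mul_atTop_of_neg (neg_neg_iff_pos.2 hb))
    simpa using (this.neg).div_const b
  have := integral_Ioi_of_hasDerivAt_of_tendsto' hd (exp_neg_integrableOn_Ioi a hb) hlim
  rw [this]
  field_simp
  ring

lemma tail_le {t : ℝ} (ht : 0 < t) :
    1 - Phi t ≤ (Real.sqrt (2 * Real.pi))⁻¹ * (Real.exp (-(t ^ 2) / 2) / t) := by
  rw [one_sub_Phi]
  have hb : ∀ u ∈ Ioi t, sg u ≤
      (Real.sqrt (2 * Real.pi))⁻¹ * Real.exp (t ^ 2 / 2) * Real.exp (-t * u) := by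
    intro u _
    rw [sg, mul_assoc, ← Real.exp_add]
    apply mul_le_mul_of_nonneg_left _ (by positivity)
    apply Real.exp_le_exp.2
    nlinarith [sq_nonneg (u - t)]
  have hint : IntegrableOn (fun u => (Real.sqrt (2 * Real.pi))⁻¹ * Real.exp (t ^ 2 / 2) *
      Real.exp (-t * u)) (Ioi t) := (exp_neg_integrableOn_Ioi t ht).const_mul _
  calc ∫ u in Ioi t, sg u
      ≤ ∫ u in Ioi t, (Real.sqrt (2 * Real.pi))⁻¹ * Real.exp (t ^ 2 / 2) *
        Real.exp (-t * u) :=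
        setIntegral_mono_on sg_integrable.integrableOn hint measurableSet_Ioi hb
    _ = (Real.sqrt (2 * Real.pi))⁻¹ * Real.exp (t ^ 2 / 2) * (Real.exp (-t * t) / t) := by
        rw [integral_const_mul, integral_exp_neg_mul_Ioi ht]
    _ = (Real.sqrt (2 * Real.pi))⁻¹ * (Real.exp (-(t ^ 2) / 2) / t) := by
        have he : Real.exp (t ^ 2 / 2) * Real.exp (-t * t) = Real.exp (-(t ^ 2) / 2) := by
          rw [← Real.exp_add]; ring_nf
        rw [mul_assoc, ← mul_div_assoc, he]
  
lemma tail_ge {t : ℝ} (ht : 0 ≤ t) : sg (t + 1) ≤ 1 - Phi t := by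
  rw [one_sub_Phi]
  calc sg (t + 1) = sg (t + 1) * (volume (Ioc t (t + 1))).toReal := by simp
    _ ≤ ∫ u in Ioc t (t + 1), sg u := by
        show sg (t + 1) * volume.real (Ioc t (t + 1)) ≤ _
        apply setIntegral_ge_of_const_le_real measurableSet_Ioc (by simp)
        · intro u hu
          unfold sg
          apply mul_le_mul_of_nonneg_left _ (by positivity)
          apply Real.exp_le_exp.2
          have h1 : 0 < u := lt_of_le_of_lt ht hu.1
          nlinarith [hu.2, hu.1]
        · exact sg_integrable.integrableOn
    _ ≤ ∫ u in Ioi t, sg u := setIntegral_mono_set sg_integrable.integrableOn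
        (ae_of_all _ fun u => (sg_pos u).le)
        (HasSubset.Subset.eventuallyLE Ioc_subset_Ioi_self)

lemma sqrt_two_pi_ge_one : (1 : ℝ) ≤ Real.sqrt (2 * Real.pi) := by
  rw [show (1 : ℝ) = Real.sqrt 1 by simp]
  apply Real.sqrt_le_sqrt
  nlinarith [Real.pi_gt_three]

lemma tail_le_exp {t : ℝ} (ht : 1 ≤ t) : 1 - Phi t ≤ Real.exp (-(t ^ 2) / 2) := by
  have h := tail_le (lt_of_lt_of_le one_pos ht)
  have h1 : (Real.sqrt (2 * Real.pi))⁻¹ ≤ 1 := by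
    rw [inv_le_one_iff₀]; right; exact sqrt_two_pi_ge_one
  have h2 : Real.exp (-(t ^ 2) / 2) / t ≤ Real.exp (-(t ^ 2) / 2) := by
    apply div_le_self (Real.exp_pos _).le ht
  calc 1 - Phi t ≤ (Real.sqrt (2 * Real.pi))⁻¹ * (Real.exp (-(t ^ 2) / 2) / t) := h
    _ ≤ 1 * Real.exp (-(t ^ 2) / 2) := by
        apply mul_le_mul h1 h2 (by positivity) one_pos.le
    _ = _ := one_mul _

lemma log_sg (t : ℝ) : Real.log (sg t) =
    Real.log (Real.sqrt (2 * Real.pi))⁻¹ + (-(t ^ 2) / 2) := by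
  rw [sg, Real.log_mul (by positivity) (Real.exp_ne_zero _), Real.log_exp]

lemma neg_two_log_tail {x : ℕ → ℝ} (hx : Tendsto x atTop atTop) :
    Tendsto (fun n => -2 * Real.log (1 - Phi (x n)) / (x n) ^ 2) atTop (𝓝 1) := by
  set C : ℝ := Real.log (Real.sqrt (2 * Real.pi))⁻¹ with hC
  have glim : Tendsto (fun y : ℝ => -2 * C * (1 / y) ^ 2 + (1 + 1 / y) ^ 2)
      atTop (𝓝 1) := by
    have h0 : Tendsto (fun y : ℝ => 1 / y) atTop (𝓝 0) :=
      tendsto_inv_atTop_zero.congr fun y => (one_div y).symm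
    have h1 : Tendsto (fun _ : ℝ => (1 : ℝ)) atTop (𝓝 1) := tendsto_const_nhds
    have := ((h0.pow 2).const_mul (-2 * C)).add ((h1.add h0).pow 2)
    simpa using this
  apply tendsto_of_tendsto_of_tendsto_of_le_of_le' tendsto_const_nhds (glim.comp hx)
  · -- lower bound: 1 ≤ ratio eventually
    filter_upwards [hx.eventually_ge_atTop 1] with n hn
    have hx2 : (0 : ℝ) < (x n) ^ 2 := by positivity
    have hP : 0 < 1 - Phi (x n) := by linarith [Phi_lt_one (x n)]
    have hlog : Real.log (1 - Phi (x n)) ≤ -((x n) ^ 2) / 2 := by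
      calc Real.log (1 - Phi (x n)) ≤ Real.log (Real.exp (-((x n) ^ 2) / 2)) :=
            Real.log_le_log hP (tail_le_exp hn)
        _ = _ := Real.log_exp _
    rw [le_div_iff₀ hx2]
    linarith
  · -- upper bound
    filter_upwards [hx.eventually_ge_atTop 1] with n hn
    have hx2 : (0 : ℝ) < (x n) ^ 2 := by positivity
    have hlog : C + -(x n + 1) ^ 2 / 2 ≤ Real.log (1 - Phi (x n)) := by
      have := Real.log_le_log (sg_pos (x n + 1)) (tail_ge (by linarith : (0:ℝ) ≤ x n))
      rw [log_sg] at this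
      linarith [this]
    rw [Function.comp_apply, div_le_iff₀ hx2]
    have hxne : x n ≠ 0 := by linarith
    have h2 : (1 / x n) ^ 2 * (x n) ^ 2 = 1 := by
      rw [← mul_pow]; field_simp
    have h3 : (1 + 1 / x n) ^ 2 * (x n) ^ 2 = (x n + 1) ^ 2 := by
      rw [← mul_pow]; congr 1; field_simp
    have h4 : (-2 * C * (1 / x n) ^ 2 + (1 + 1 / x n) ^ 2) * x n ^ 2
        = -2 * C * ((1 / x n) ^ 2 * x n ^ 2) + ((1 + 1 / x n) ^ 2 * x n ^ 2) := by ring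
    rw [h4, h2, h3]
    linarith [hlog]


lemma sqrt_nat_atTop : Tendsto (fun n : ℕ => Real.sqrt n) atTop atTop := by
  have h := (tendsto_rpow_atTop (by norm_num : (0:ℝ) < 1/2)).comp
    (tendsto_natCast_atTop_atTop (R := ℝ))
  apply h.congr
  intro n
  simp [Function.comp, Real.sqrt_eq_rpow]

lemma slope_of_tendsto {y : ℕ → ℝ} {s : ℝ} (hs : 0 < s)
    (hy : Tendsto (fun n : ℕ => y n / Real.sqrt n) atTop (𝓝 s)) :
    Tendsto (fun n : ℕ => -(2 / (n : ℝ)) * Real.log (1 - Phi (y n))) atTop (𝓝 (s ^ 2)) := by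
  have hyTop : Tendsto y atTop atTop := by
    have h1 : Tendsto (fun n : ℕ => Real.sqrt n * (y n / Real.sqrt n)) atTop atTop :=
      sqrt_nat_atTop.atTop_mul_pos hs hy
    apply h1.congr'
    filter_upwards [eventually_ge_atTop 1] with n hn
    have hnpos : (0 : ℝ) < n := by exact_mod_cast hn
    have hne : Real.sqrt n ≠ 0 := by positivity
    field_simp
  have hratio := neg_two_log_tail hyTop
  have hsq : Tendsto (fun n : ℕ => (y n) ^ 2 / (n : ℝ)) atTop (𝓝 (s ^ 2)) := by
    have h2 := hy.pow 2
    apply h2.congr'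
    filter_upwards [eventually_ge_atTop 1] with n hn
    have hnpos : (0 : ℝ) < n := by exact_mod_cast hn
    rw [div_pow, Real.sq_sqrt hnpos.le]
  have hmul := hratio.mul hsq
  rw [one_mul] at hmul
  apply hmul.congr'
  filter_upwards [hyTop.eventually_ge_atTop 1, eventually_ge_atTop 1] with n hy1 hn1
  have hnpos : (0 : ℝ) < n := by exact_mod_cast hn1
  have hyne : y n ≠ 0 := by linarith
  field_simp

lemma slope_inv {a : ℝ} (ha : 0 < a) {pn : ℕ → ℝ} (hp : ∀ n, pn n ∈ Ioo (0 : ℝ) 1)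
    (hsl : Tendsto (fun n : ℕ => -(2 / (n : ℝ)) * Real.log (pn n)) atTop (𝓝 a))
    {Q : ℝ → ℝ} (hQ : ∀ u ∈ Ioo (0 : ℝ) 1, Phi (Q u) = u) :
    Tendsto (fun n : ℕ => Q (1 - pn n) / Real.sqrt n) atTop (𝓝 (Real.sqrt a)) := by
  have hPx : ∀ n, 1 - Phi (Q (1 - pn n)) = pn n := by
    intro n
    have h1 : (1 - pn n) ∈ Ioo (0 : ℝ) 1 := ⟨by linarith [(hp n).2], by linarith [(hp n).1]⟩
    rw [hQ _ h1]; ring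
  -- log pn → -∞
  have hlogBot : Tendsto (fun n : ℕ => Real.log (pn n)) atTop atBot := by
    have h1 : Tendsto (fun n : ℕ => (n : ℝ) / 2 * (-(2 / (n : ℝ)) * Real.log (pn n)))
        atTop atTop :=
      ((tendsto_natCast_atTop_atTop (R := ℝ)).atTop_div_const two_pos).atTop_mul_pos ha hsl
    have h2 : Tendsto (fun n : ℕ => -Real.log (pn n)) atTop atTop := by
      apply h1.congr'
      filter_upwards [eventually_ge_atTop 1] with n hn
      have hnpos : (0 : ℝ) < n := by exact_mod_cast hn
      field_simp
    exact (tendsto_neg_atTop_atBot.comp h2).congr fun n => by simp [Function.comp]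
  have hp0 : Tendsto pn atTop (𝓝 0) := by
    have := Real.tendsto_exp_atBot.comp hlogBot
    apply this.congr
    intro n
    simp [Function.comp, Real.exp_log (hp n).1]
  -- x n → ∞
  have hxTop : Tendsto (fun n : ℕ => Q (1 - pn n)) atTop atTop := by
    rw [tendsto_atTop]
    intro M
    have hev : ∀ᶠ n in atTop, pn n < 1 - Phi M :=
      hp0.eventually_lt_const (by linarith [Phi_lt_one M])
    filter_upwards [hev] with n hn
    by_contra hcon
    push_neg at hcon
    have := Phi_mono hcon.le
    have h2 := hPx n
    linarith
  have hratio := neg_two_log_tail hxTop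
  have hratio' : Tendsto (fun n : ℕ => -2 * Real.log (pn n) / (Q (1 - pn n)) ^ 2)
      atTop (𝓝 1) := by
    apply hratio.congr
    intro n
    rw [hPx n]
  have hdiv : Tendsto (fun n : ℕ => (-(2 / (n : ℝ)) * Real.log (pn n)) /
      (-2 * Real.log (pn n) / (Q (1 - pn n)) ^ 2)) atTop (𝓝 (a / 1)) :=
    hsl.div hratio' one_ne_zero
  rw [div_one] at hdiv
  have hsq : Tendsto (fun n : ℕ => (Q (1 - pn n)) ^ 2 / (n : ℝ)) atTop (𝓝 a) := by
    apply hdiv.congr'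
    filter_upwards [hxTop.eventually_ge_atTop 1, eventually_ge_atTop 1,
      hlogBot.eventually_le_atBot (-1)] with n hx1 hn1 hlg
    have hnpos : (0 : ℝ) < n := by exact_mod_cast hn1
    have hxne : Q (1 - pn n) ≠ 0 := by linarith
    have hlne : Real.log (pn n) ≠ 0 := by linarith
    field_simp
  have := hsq.sqrt
  apply this.congr'
  filter_upwards [hxTop.eventually_ge_atTop 0, eventually_ge_atTop 1] with n hx0 hn1
  have hnpos : (0 : ℝ) < n := by exact_mod_cast hn1
  rw [Real.sqrt_div (sq_nonneg _), Real.sqrt_sq hx0]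

lemma one_sub_Phi_le {t : ℝ} (ht : 0 ≤ t) :
    1 - Phi t ≤ Real.exp (1 / 2) * Real.exp (-(t ^ 2) / 2) := by
  rcases le_or_gt 1 t with h | h
  · calc 1 - Phi t ≤ Real.exp (-(t ^ 2) / 2) := tail_le_exp h
      _ ≤ _ := by
          nlinarith [Real.exp_pos (-(t ^ 2) / 2), Real.one_le_exp (by norm_num : (0:ℝ) ≤ 1/2)]
  · have h1 : 1 - Phi t ≤ 1 := by linarith [Phi_pos t]
    have h2 : (1 : ℝ) ≤ Real.exp (1 / 2) * Real.exp (-(t ^ 2) / 2) := by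
      rw [← Real.exp_add]
      apply Real.one_le_exp
      nlinarith
    linarith

lemma null_eventually {Ω : Type*} [MeasurableSpace Ω] (μ : Measure Ω)
    [IsProbabilityMeasure μ]
    (pn : ℕ → Ω → ℝ) (hmeas : ∀ n, Measurable (pn n))
    (hval : ∀ n ω, pn n ω ∈ Ioo (0 : ℝ) 1)
    (hunif : ∀ n, Measure.map (pn n) μ = volume.restrict (Ioo (0 : ℝ) 1))
    {Q : ℝ → ℝ} (hQ : ∀ u ∈ Ioo (0 : ℝ) 1, Phi (Q u) = u)
    {ε : ℝ} (hε : 0 < ε) :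
    ∀ᵐ ω ∂μ, ∀ᶠ n : ℕ in atTop, |Q (1 - pn n ω)| / Real.sqrt n < ε := by
  set q : ℕ → Ω → Prop := fun n ω =>
    pn n ω ≤ 1 - Phi (ε * Real.sqrt n) ∨ Phi (ε * Real.sqrt n) ≤ pn n ω with hq
  -- measure bound
  have hbound : ∀ n : ℕ, μ {ω | q n ω} ≤
      ENNReal.ofReal (2 * Real.exp (1 / 2) *
        Real.exp (-(ε ^ 2) / 2) ^ n) := by
    intro n
    set t : ℝ := ε * Real.sqrt n with htdef
    have ht : 0 ≤ t := by positivity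
    have hsub : {ω | q n ω} ⊆ (pn n ⁻¹' Iic (1 - Phi t)) ∪ (pn n ⁻¹' Ici (Phi t)) := by
      intro ω hw
      exact hw.imp (fun h => h) (fun h => h)
    have h1 : μ (pn n ⁻¹' Iic (1 - Phi t)) ≤ ENNReal.ofReal (1 - Phi t) := by
      rw [← Measure.map_apply (hmeas n) measurableSet_Iic, hunif n,
        Measure.restrict_apply measurableSet_Iic]
      calc volume (Iic (1 - Phi t) ∩ Ioo 0 1) ≤ volume (Ioc (0 : ℝ) (1 - Phi t)) := by
            apply measure_mono
            rintro x ⟨hx1, hx2, _⟩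
            exact ⟨hx2, hx1⟩
        _ = ENNReal.ofReal (1 - Phi t) := by rw [Real.volume_Ioc, sub_zero]
    have h2 : μ (pn n ⁻¹' Ici (Phi t)) ≤ ENNReal.ofReal (1 - Phi t) := by
      rw [← Measure.map_apply (hmeas n) measurableSet_Ici, hunif n,
        Measure.restrict_apply measurableSet_Ici]
      calc volume (Ici (Phi t) ∩ Ioo 0 1) ≤ volume (Ico (Phi t) 1) := by
            apply measure_mono
            rintro x ⟨hx1, _, hx3⟩
            exact ⟨hx1, hx3⟩
        _ = ENNReal.ofReal (1 - Phi t) := by rw [Real.volume_Ico]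
    calc μ {ω | q n ω} ≤ μ ((pn n ⁻¹' Iic (1 - Phi t)) ∪ (pn n ⁻¹' Ici (Phi t))) :=
          measure_mono hsub
      _ ≤ μ (pn n ⁻¹' Iic (1 - Phi t)) + μ (pn n ⁻¹' Ici (Phi t)) := measure_union_le _ _
      _ ≤ ENNReal.ofReal (1 - Phi t) + ENNReal.ofReal (1 - Phi t) := add_le_add h1 h2
      _ ≤ _ := by
          rw [← ENNReal.ofReal_add (by linarith [Phi_lt_one t]) (by linarith [Phi_lt_one t])]
          apply ENNReal.ofReal_le_ofReal
          have hb := one_sub_Phi_le ht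
          have hexp : Real.exp (-(t ^ 2) / 2) ≤ Real.exp (-(ε ^ 2) / 2) ^ n := by
            rw [← Real.exp_nat_mul]
            apply Real.exp_le_exp.2
            have ht2 : t ^ 2 = ε ^ 2 * n := by
              rw [htdef, mul_pow, Real.sq_sqrt (Nat.cast_nonneg n)]
            rw [ht2]; ring_nf; rfl
          have h3 : Real.exp (1 / 2) * Real.exp (-(t ^ 2) / 2) ≤
              Real.exp (1 / 2) * Real.exp (-(ε ^ 2) / 2) ^ n :=
            mul_le_mul_of_nonneg_left hexp (Real.exp_pos _).le
          linarith
  have hr : Real.exp (-(ε ^ 2) / 2) < 1 := by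
    rw [Real.exp_lt_one_iff]
    nlinarith
  have hsummable : Summable (fun n : ℕ => 2 * Real.exp (1 / 2) *
      Real.exp (-(ε ^ 2) / 2) ^ n) :=
    (summable_geometric_of_lt_one (Real.exp_pos _).le hr).mul_left _
  have hsum : ∑' n, μ {ω | q n ω} ≠ ⊤ := by
    have heq := ENNReal.ofReal_tsum_of_nonneg
      (fun n : ℕ => by positivity : ∀ n : ℕ, 0 ≤ 2 * Real.exp (1 / 2) *
        Real.exp (-(ε ^ 2) / 2) ^ n) hsummable
    have hle : ∑' n, μ {ω | q n ω} ≤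
        ∑' n : ℕ, ENNReal.ofReal (2 * Real.exp (1 / 2) * Real.exp (-(ε ^ 2) / 2) ^ n) :=
      ENNReal.tsum_le_tsum hbound
    rw [← heq] at hle
    exact ne_top_of_le_ne_top ENNReal.ofReal_ne_top hle
  have hzero := measure_setOf_frequently_eq_zero hsum
  have hae : ∀ᵐ ω ∂μ, ∀ᶠ n in atTop, ¬ q n ω := by
    have h : ∀ᵐ ω ∂μ, ¬ (∃ᶠ n in atTop, q n ω) := by
      rw [ae_iff]
      simp only [not_not]
      exact hzero
    filter_upwards [h] with ω hω
    rwa [Filter.not_frequently] at hω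
  filter_upwards [hae] with ω hω
  filter_upwards [hω, eventually_ge_atTop 1] with n hn hn1
  by_contra hcon
  push_neg at hcon
  have hn0 : (0 : ℝ) < n := by exact_mod_cast hn1
  have hsn : 0 < Real.sqrt n := Real.sqrt_pos.2 hn0
  have habs : ε * Real.sqrt n ≤ |Q (1 - pn n ω)| := by
    rwa [le_div_iff₀ hsn] at hcon
  have hmem : (1 - pn n ω) ∈ Ioo (0 : ℝ) 1 :=
    ⟨by linarith [(hval n ω).2], by linarith [(hval n ω).1]⟩
  have hPhiQ : Phi (Q (1 - pn n ω)) = 1 - pn n ω := hQ _ hmem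
  simp only [hq, not_or] at hn
  rcases le_abs.1 habs with h | h
  · have := Phi_mono h
    rw [hPhiQ] at this
    exact absurd (by linarith : pn n ω ≤ 1 - Phi (ε * Real.sqrt n)) hn.1
  · have h2 : Q (1 - pn n ω) ≤ -(ε * Real.sqrt n) := by linarith
    have := Phi_mono h2
    rw [hPhiQ, Phi_neg] at this
    exact absurd (by linarith : Phi (ε * Real.sqrt n) ≤ pn n ω) hn.2

lemma null_tendsto {Ω : Type*} [MeasurableSpace Ω] (μ : Measure Ω)
    [IsProbabilityMeasure μ]
    (pn : ℕ → Ω → ℝ) (hmeas : ∀ n, Measurable (pn n))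
    (hval : ∀ n ω, pn n ω ∈ Ioo (0 : ℝ) 1)
    (hunif : ∀ n, Measure.map (pn n) μ = volume.restrict (Ioo (0 : ℝ) 1))
    {Q : ℝ → ℝ} (hQ : ∀ u ∈ Ioo (0 : ℝ) 1, Phi (Q u) = u) :
    ∀ᵐ ω ∂μ, Tendsto (fun n : ℕ => Q (1 - pn n ω) / Real.sqrt n) atTop (𝓝 0) := by
  have h : ∀ k : ℕ, ∀ᵐ ω ∂μ, ∀ᶠ n : ℕ in atTop,
      |Q (1 - pn n ω)| / Real.sqrt n < 1 / ((k : ℝ) + 1) :=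
    fun k => null_eventually μ pn hmeas hval hunif hQ (by positivity)
  have hall := ae_all_iff.2 h
  filter_upwards [hall] with ω hω
  rw [Metric.tendsto_atTop]
  intro ε hε
  obtain ⟨k, hk⟩ := exists_nat_one_div_lt hε
  obtain ⟨N, hN⟩ := (hω k).exists_forall_of_atTop
  refine ⟨N, fun n hn => ?_⟩
  have := hN n hn
  rw [Real.dist_eq, sub_zero, abs_div, abs_of_nonneg (Real.sqrt_nonneg _)]
  calc |Q (1 - pn n ω)| / Real.sqrt n < 1 / ((k : ℝ) + 1) := this
    _ < ε := hk

/-- Stouffer's method has exact slope `(1/K) * (∑ i ≤ ℓ, √(λ i * c i))²`, which for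
`ℓ ≥ 2` is in general strictly smaller than the maximum attainable slope
`∑ λ i * c i`: Stouffer's method is not asymptotically Bahadur optimal. -/
theorem stouffer_exact_slope
    {K : ℕ} (hK : 1 ≤ K) (ℓ : ℕ) (hℓ : 1 ≤ ℓ) (hℓK : ℓ ≤ K)
    (lam c : Fin K → ℝ)
    (hlam : ∀ i, 0 < lam i)
    (hcpos : ∀ i : Fin K, (i : ℕ) < ℓ → 0 < c i)
    (hcnull : ∀ i : Fin K, ℓ ≤ (i : ℕ) → c i = 0)
    (nseq : Fin K → ℕ → ℕ)
    (hn : ∀ i, Tendsto (fun n : ℕ => (nseq i n : ℝ) / (n : ℝ)) atTop (nhds (lam i)))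
    {Ω : Type*} [MeasurableSpace Ω] (μ : Measure Ω) [IsProbabilityMeasure μ]
    (p : ℕ → Fin K → Ω → ℝ)
    (hmeas : ∀ n i, Measurable (p n i))
    (hval : ∀ n i ω, p n i ω ∈ Ioo (0 : ℝ) 1)
    (hslope : ∀ i : Fin K, (i : ℕ) < ℓ →
      ∀ᵐ ω ∂μ, Tendsto (fun n : ℕ => -(2 / (nseq i n : ℝ)) * Real.log (p n i ω))
        atTop (nhds (c i)))
    (hnull : ∀ i : Fin K, ℓ ≤ (i : ℕ) →
      ∀ n, Measure.map (p n i) μ = volume.restrict (Ioo (0 : ℝ) 1))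
    -- `Q` is an inverse of the standard Gaussian CDF on `(0,1)`
    (Q : ℝ → ℝ)
    (hQ : ∀ u ∈ Ioo (0 : ℝ) 1, ((gaussianReal 0 1) (Iic (Q u))).toReal = u)
    -- the Stouffer statistic and its combined p-value
    (T : ℕ → Ω → ℝ)
    (hT : ∀ n ω, T n ω = ∑ i : Fin K, Q (1 - p n i ω))
    (r : ℕ → Ω → ℝ)
    (hr : ∀ n ω, r n ω =
      1 - ((gaussianReal 0 1) (Iic (T n ω / Real.sqrt (K : ℝ)))).toReal) :
    ∀ᵐ ω ∂μ, Tendsto (fun n : ℕ => -(2 / (n : ℝ)) * Real.log (r n ω))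
      atTop
      (nhds ((1 / (K : ℝ)) * (∑ i : Fin K, Real.sqrt (lam i * c i)) ^ 2)) := by
  have hQ' : ∀ u ∈ Ioo (0 : ℝ) 1, Phi (Q u) = u := hQ
  -- per-coordinate a.e. convergence
  have hcoord : ∀ i : Fin K, ∀ᵐ ω ∂μ,
      Tendsto (fun n : ℕ => Q (1 - p n i ω) / Real.sqrt n) atTop
        (𝓝 (Real.sqrt (lam i * c i))) := by
    intro i
    rcases lt_or_ge (i : ℕ) ℓ with hi | hi
    · -- alternative case
      filter_upwards [hslope i hi] with ω hω
      have hsl : Tendsto (fun n : ℕ => -(2 / (n : ℝ)) * Real.log (p n i ω)) atTop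
          (𝓝 (lam i * c i)) := by
        have hprod := (hn i).mul hω
        apply hprod.congr'
        have hev : ∀ᶠ n : ℕ in atTop, 1 ≤ nseq i n := by
          have := (hn i).eventually_const_lt (show lam i / 2 < lam i by
            linarith [hlam i])
          filter_upwards [this] with n hn2
          by_contra hc
          push_neg at hc
          interval_cases h : nseq i n
          · simp at hn2; linarith [hlam i]
        filter_upwards [hev, eventually_ge_atTop 1] with n h1 h2
        have hnn : (0 : ℝ) < (nseq i n : ℝ) := by exact_mod_cast h1
        have hnp : (0 : ℝ) < (n : ℝ) := by exact_mod_cast h2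
        field_simp
      exact slope_inv (mul_pos (hlam i) (hcpos i hi)) (fun n => hval n i ω) hsl hQ'
    · -- null case
      have h0 := null_tendsto μ (fun n => p n i) (fun n => hmeas n i)
        (fun n => hval n i) (hnull i hi) hQ'
      rw [hcnull i hi]
      simpa using h0
  have hae := ae_all_iff.2 hcoord
  filter_upwards [hae] with ω hω
  set S : ℝ := ∑ i : Fin K, Real.sqrt (lam i * c i) with hS
  have hKpos : (0 : ℝ) < K := by exact_mod_cast hK
  have hSpos : 0 < S := by
    rw [hS]
    apply Finset.sum_pos'
    · intro i _; exact Real.sqrt_nonneg _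
    · refine ⟨⟨0, lt_of_lt_of_le hℓ hℓK⟩, Finset.mem_univ _, ?_⟩
      apply Real.sqrt_pos.2
      exact mul_pos (hlam _) (hcpos _ (by show 0 < ℓ; omega))
  have hTsum : Tendsto (fun n : ℕ => T n ω / Real.sqrt n) atTop (𝓝 S) := by
    have := tendsto_finset_sum Finset.univ (fun i _ => hω i)
    apply this.congr
    intro n
    rw [hT n ω, Finset.sum_div]
  have hy : Tendsto (fun n : ℕ => (T n ω / Real.sqrt K) / Real.sqrt n) atTop
      (𝓝 (S / Real.sqrt K)) := by
    apply (hTsum.div_const (Real.sqrt K)).congr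
    intro n
    rw [div_right_comm]
  have hs : 0 < S / Real.sqrt K := div_pos hSpos (Real.sqrt_pos.2 hKpos)
  have hfinal := slope_of_tendsto hs hy
  have hsq : (S / Real.sqrt K) ^ 2 = (1 / (K : ℝ)) * S ^ 2 := by
    rw [div_pow, Real.sq_sqrt hKpos.le]
    ring
  rw [hsq] at hfinal
  apply hfinal.congr
  intro n
  rw [hr n ω]
  rfl
end

section
/- Fix an integer K ≥ 1 and an integer ℓ with 1 ≤ ℓ ≤ K. Fix reals λ_1,…,λ_K > 0 and c_1,…,c_ℓ > 0, and set c_i = 0 for ℓ < i ≤ K. Fix sequences n_1,…,n_K : ℕ → ℕ with n_i(n)/n → λ_i as n → ∞. On a probability space, for each n let p_1^{(n)},…,p_K^{(n)} be random variables with values in (0,1) such that: (i) for each 1 ≤ i ≤ ℓ, −(2/n_i(n))·log p_i^{(n)} → c_i almost surely as n → ∞; (ii) for each ℓ < i ≤ K and every n, p_i^{(n)} is uniformly distributed on (0,1). Fix τ ∈ (0,1]. Define the hard-thresholded truncated Fisher statistic T(u) = ∑_{i=1}^K (−2·log u_i)·1{u_i ≤ τ} for u ∈ (0,1)^K, its null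 survival function G(t) = μ_K{u : T(u) ≥ t}, and q_n = G(T(p_1^{(n)},…,p_K^{(n)})). Then −(2/n)·log q_n → ∑_{i=1}^ℓ λ_i·c_i almost surely as n → ∞; i.e., TFhard is asymptotically Bahadur optimal for every τ ∈ (0,1]. -/
open MeasureTheory Filter Set ProbabilityTheory

open scoped ENNReal

namespace TFhardAux

lemma lintegral_pi_prod_pow (n : ℕ) (ν : Measure ℝ) [SigmaFinite ν] (f : ℝ → ℝ≥0∞)
    (hf : Measurable f) :
    ∫⁻ u : Fin n → ℝ, ∏ i, f (u i) ∂(Measure.pi fun _ => ν) = (∫⁻ x, f x ∂ν) ^ n := by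
  induction n with
  | zero => simp
  | succ n ih =>
    have hmp := measurePreserving_piFinSuccAbove (fun _ : Fin (n+1) => ν) 0
    set e := MeasurableEquiv.piFinSuccAbove (fun _ : Fin (n+1) => ℝ) 0 with he
    have hFm : Measurable fun v : ℝ × (Fin n → ℝ) => f v.1 * ∏ j, f (v.2 j) :=
      (hf.comp measurable_fst).mul
        (Finset.measurable_prod _ fun j _ =>
          hf.comp ((measurable_pi_apply j).comp measurable_snd))
    have key : ∀ u : Fin (n+1) → ℝ, ∏ i, f (u i) = f ((e u).1) * ∏ j, f ((e u).2 j) := by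
      intro u
      rw [Fin.prod_univ_succ]
      have h1 : (e u).1 = u 0 := rfl
      have h2 : ∀ j : Fin n, (e u).2 j = u j.succ := by
        intro j
        show u ((0 : Fin (n+1)).succAbove j) = u j.succ
        rw [Fin.zero_succAbove]
      rw [h1, Finset.prod_congr rfl fun j _ => congrArg f (h2 j)]
    calc ∫⁻ u : Fin (n+1) → ℝ, ∏ i, f (u i) ∂(Measure.pi fun _ => ν)
        = ∫⁻ u, f ((e u).1) * ∏ j, f ((e u).2 j) ∂(Measure.pi fun _ => ν) := by
          simp_rw [key]
      _ = ∫⁻ v : ℝ × (Fin n → ℝ), f v.1 * ∏ j, f (v.2 j)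
            ∂(ν.prod (Measure.pi fun _ : Fin n => ν)) := hmp.lintegral_comp hFm
      _ = (∫⁻ x, f x ∂ν) * (∫⁻ x, f x ∂ν) ^ n := by
          have hg : AEMeasurable (fun y : Fin n → ℝ => ∏ j, f (y j))
              (Measure.pi fun _ : Fin n => ν) :=
            (Finset.measurable_prod Finset.univ fun j _ =>
              hf.comp (measurable_pi_apply j)).aemeasurable
          rw [lintegral_prod_mul hf.aemeasurable hg, ih]
      _ = (∫⁻ x, f x ∂ν) ^ (n + 1) := by rw [pow_succ]; ring

lemma lintegral_factor {r : ℝ} (hr : -1 < r) :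
    ∫⁻ x, ENNReal.ofReal (Real.exp (r * Real.log x)) ∂(volume.restrict (Icc (0:ℝ) 1))
      = ENNReal.ofReal (1 / (r + 1)) := by
  have h0 : volume.restrict (Icc (0:ℝ) 1) = volume.restrict (Ioc (0:ℝ) 1) :=
    (Measure.restrict_congr_set Ioc_ae_eq_Icc).symm
  rw [h0]
  have h1 : ∫⁻ x in Ioc (0:ℝ) 1, ENNReal.ofReal (Real.exp (r * Real.log x)) ∂volume
      = ∫⁻ x in Ioc (0:ℝ) 1, ENNReal.ofReal (x ^ r) ∂volume := by
    apply setLIntegral_congr_fun measurableSet_Ioc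
    intro x hx
    show ENNReal.ofReal (Real.exp (r * Real.log x)) = ENNReal.ofReal (x ^ r)
    rw [Real.rpow_def_of_pos hx.1, mul_comm]
  have h2 : IntegrableOn (fun x : ℝ => x ^ r) (Ioc (0:ℝ) 1) volume :=
    (intervalIntegral.intervalIntegrable_rpow' hr (a := 0) (b := 1)).1
  have h3 : 0 ≤ᵐ[volume.restrict (Ioc (0:ℝ) 1)] fun x : ℝ => x ^ r := by
    filter_upwards [ae_restrict_mem measurableSet_Ioc] with x hx
    exact Real.rpow_nonneg hx.1.le r
  rw [h1, ← ofReal_integral_eq_lintegral_ofReal h2 h3]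
  congr 1
  rw [← intervalIntegral.integral_of_le (by norm_num : (0:ℝ) ≤ 1),
    integral_rpow (Or.inl hr), Real.one_rpow, Real.zero_rpow (by linarith)]
  ring

lemma prob_restrict_Icc : IsProbabilityMeasure (volume.restrict (Icc (0:ℝ) 1)) :=
  ⟨by simp [Real.volume_Icc]⟩

lemma chernoff (K : ℕ) (τ : ℝ) (hτ1 : τ ≤ 1) {s : ℝ} (hs0 : 0 < s) (hs : s < 1/2) (t : ℝ) :
    (Measure.pi fun _ : Fin K => volume.restrict (Icc (0:ℝ) 1))
        {u : Fin K → ℝ | t ≤ ∑ i, if u i ≤ τ then -2 * Real.log (u i) else 0}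
      ≤ ENNReal.ofReal (Real.exp (-(s * t)) * (1 / (1 - 2 * s)) ^ K) := by
  haveI := prob_restrict_Icc
  set μK := Measure.pi fun _ : Fin K => volume.restrict (Icc (0:ℝ) 1) with hμK
  set S : Set (Fin K → ℝ) :=
    {u : Fin K → ℝ | t ≤ ∑ i, if u i ≤ τ then -2 * Real.log (u i) else 0} with hS
  set B : Set (Fin K → ℝ) := univ.pi fun _ => Icc (0:ℝ) 1 with hB
  have hBm : MeasurableSet B := MeasurableSet.univ_pi fun _ => measurableSet_Icc
  have hBc : μK Bᶜ = 0 := by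
    have hB1 : μK B = 1 := by
      rw [hB, hμK, Measure.pi_pi]
      simp [Measure.restrict_apply, measurableSet_Icc, Real.volume_Icc]
    have h := measure_compl hBm (measure_ne_top μK B)
    rw [hB1, measure_univ] at h
    simp [h]
  set f : ℝ → ℝ≥0∞ := fun x => ENNReal.ofReal (Real.exp (-(2*s) * Real.log x)) with hf
  have hfm : Measurable f :=
    ENNReal.measurable_ofReal.comp (Real.measurable_exp.comp (Real.measurable_log.const_mul _))
  set F : (Fin K → ℝ) → ℝ≥0∞ := fun u => ∏ i, f (u i) with hF
  have hFm : Measurable F :=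
    Finset.measurable_prod _ fun i _ => hfm.comp (measurable_pi_apply i)
  set ε : ℝ≥0∞ := ENNReal.ofReal (Real.exp (s * t)) with hε
  have hsub : S ∩ B ⊆ {u | ε ≤ F u} := by
    rintro u ⟨hu, huB⟩
    have hui : ∀ i, u i ∈ Icc (0:ℝ) 1 := fun i => huB i (mem_univ i)
    have hle : t ≤ ∑ i, -2 * Real.log (u i) := by
      refine le_trans hu (Finset.sum_le_sum fun i _ => ?_)
      by_cases h : u i ≤ τ
      · simp [h]
      · simp only [h, if_false]
        nlinarith [Real.log_nonpos (hui i).1 (hui i).2]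
    have hexp : Real.exp (s*t) ≤ Real.exp (∑ i, -(2*s) * Real.log (u i)) := by
      apply Real.exp_le_exp.2
      calc s * t ≤ s * ∑ i, -2 * Real.log (u i) := by nlinarith
        _ = ∑ i, -(2*s) * Real.log (u i) := by
            rw [Finset.mul_sum]; exact Finset.sum_congr rfl fun i _ => by ring
    calc ε ≤ ENNReal.ofReal (Real.exp (∑ i, -(2*s) * Real.log (u i))) :=
          ENNReal.ofReal_le_ofReal hexp
      _ = F u := by
          rw [Real.exp_sum, ENNReal.ofReal_prod_of_nonneg fun i _ => (Real.exp_pos _).le]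
  have hε0 : ε ≠ 0 := by
    simp [hε, ENNReal.ofReal_eq_zero, not_le, Real.exp_pos]
  have hεt : ε ≠ ⊤ := ENNReal.ofReal_ne_top
  have hint : ∫⁻ u, F u ∂μK = ENNReal.ofReal (1 / (1 - 2*s)) ^ K := by
    rw [hμK, hF, lintegral_pi_prod_pow K _ f hfm, hf,
      lintegral_factor (by linarith : (-1:ℝ) < -(2*s)),
      show -(2*s) + 1 = 1 - 2*s from by ring]
  have hSB : μK S = μK (S ∩ B) := by
    have h1 := measure_inter_add_diff (μ := μK) S hBm
    have h2 : μK (S \ B) = 0 := measure_mono_null (diff_subset_compl S B) hBc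
    rw [← h1, h2, add_zero]
  have hmarkov := mul_meas_ge_le_lintegral₀ hFm.aemeasurable (μ := μK) ε
  have hchain : ε * μK S ≤ ENNReal.ofReal (1 / (1 - 2*s)) ^ K := by
    rw [hSB, ← hint]
    exact le_trans (mul_le_mul_right (measure_mono hsub) ε) hmarkov
  have hfinal : μK S ≤ ε⁻¹ * ENNReal.ofReal (1 / (1 - 2*s)) ^ K := by
    calc μK S = ε⁻¹ * (ε * μK S) := by
          rw [← mul_assoc, ENNReal.inv_mul_cancel hε0 hεt, one_mul]
      _ ≤ _ := mul_le_mul_right hchain ε⁻¹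
  refine le_trans hfinal (le_of_eq ?_)
  have h2s : (0:ℝ) < 1 - 2*s := by linarith
  rw [hε, ← ENNReal.ofReal_inv_of_pos (Real.exp_pos _), ← Real.exp_neg,
    ← ENNReal.ofReal_pow (by positivity), ← ENNReal.ofReal_mul (Real.exp_pos _).le]

lemma lowerbd (K : ℕ) (hK : 0 < K) {τ : ℝ} (hτ0 : 0 < τ) (hτ1 : τ ≤ 1) {t : ℝ}
    (ht0 : 0 ≤ t) (ht : Real.exp (-(t/2)) ≤ τ) :
    ENNReal.ofReal (Real.exp (-(t/2)) * τ ^ (K-1)) ≤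
      (Measure.pi fun _ : Fin K => volume.restrict (Icc (0:ℝ) 1))
        {u : Fin K → ℝ | t ≤ ∑ i, if u i ≤ τ then -2 * Real.log (u i) else 0} := by
  classical
  set i0 : Fin K := ⟨0, hK⟩ with hi0
  set s : Fin K → Set ℝ := fun i => if i = i0 then Ioc 0 (Real.exp (-(t/2))) else Ioc 0 τ with hs
  have hmem : ∀ u : Fin K → ℝ, u ∈ univ.pi s → ∀ i, u i ∈ Ioc (0:ℝ) τ := by
    intro u hu i
    have h := hu i (mem_univ i)
    simp only [hs] at h
    by_cases hii : i = i0
    · rw [if_pos hii] at h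
      exact ⟨h.1, h.2.trans ht⟩
    · rwa [if_neg hii] at h
  have hsub : univ.pi s ⊆
      {u : Fin K → ℝ | t ≤ ∑ i, if u i ≤ τ then -2 * Real.log (u i) else 0} := by
    intro u hu
    have hm := hmem u hu
    have hterm : ∀ i ∈ Finset.univ,
        (if u i ≤ τ then -2 * Real.log (u i) else 0) = -2 * Real.log (u i) :=
      fun i _ => if_pos (hm i).2
    simp only [mem_setOf_eq]
    rw [Finset.sum_congr rfl hterm]
    have hnn : ∀ i ∈ Finset.univ, (0:ℝ) ≤ -2 * Real.log (u i) := fun i _ => by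
      nlinarith [Real.log_nonpos (hm i).1.le ((hm i).2.trans hτ1)]
    have h0 : t ≤ -2 * Real.log (u i0) := by
      have hui0 : u i0 ∈ Ioc 0 (Real.exp (-(t/2))) := by
        have h := hu i0 (mem_univ i0)
        simp only [hs] at h
        simpa using h
      have hlog := Real.log_le_log hui0.1 hui0.2
      rw [Real.log_exp] at hlog
      linarith
    exact h0.trans (Finset.single_le_sum hnn (Finset.mem_univ i0))
  have key : ∀ a : ℝ, 0 < a → a ≤ 1 →
      (volume.restrict (Icc (0:ℝ) 1)) (Ioc 0 a) = ENNReal.ofReal a := by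
    intro a _ ha
    have hss : Ioc (0:ℝ) a ⊆ Icc (0:ℝ) 1 := fun x hx => ⟨hx.1.le, hx.2.trans ha⟩
    rw [Measure.restrict_apply measurableSet_Ioc,
      inter_eq_left.2 hss, Real.volume_Ioc, sub_zero]
  have hfac : ∀ i : Fin K, (volume.restrict (Icc (0:ℝ) 1)) (s i)
      = if i = i0 then ENNReal.ofReal (Real.exp (-(t/2))) else ENNReal.ofReal τ := by
    intro i
    simp only [hs]
    by_cases hii : i = i0
    · rw [if_pos hii, if_pos hii]
      exact key _ (Real.exp_pos _) (ht.trans hτ1)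
    · rw [if_neg hii, if_neg hii]
      exact key _ hτ0 hτ1
  calc ENNReal.ofReal (Real.exp (-(t/2)) * τ ^ (K-1))
      = ∏ i : Fin K, (volume.restrict (Icc (0:ℝ) 1)) (s i) := by
        rw [Finset.prod_congr rfl fun i _ => hfac i,
          ← Finset.prod_erase_mul Finset.univ _ (Finset.mem_univ i0),
          Finset.prod_congr rfl fun i hi => if_neg (Finset.ne_of_mem_erase hi),
          Finset.prod_const, if_pos rfl, Finset.card_erase_of_mem (Finset.mem_univ i0),
          ENNReal.ofReal_mul (Real.exp_pos _).le, ← ENNReal.ofReal_pow hτ0.le, mul_comm]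
        congr 2
        simp
    _ = (Measure.pi fun _ : Fin K => volume.restrict (Icc (0:ℝ) 1)) (univ.pi s) :=
        (Measure.pi_pi _ s).symm
    _ ≤ _ := measure_mono hsub

lemma null_slope {Ω : Type*} [MeasurableSpace Ω] (μ : Measure Ω) [IsProbabilityMeasure μ]
    (X : ℕ → Ω → ℝ) (hm : ∀ n, Measurable (X n)) (hv : ∀ n ω, X n ω ∈ Ioo (0:ℝ) 1)
    (hd : ∀ n, Measure.map (X n) μ = volume.restrict (Ioo (0:ℝ) 1)) :
    ∀ᵐ ω ∂μ, Tendsto (fun n : ℕ => -(2 / (n:ℝ)) * Real.log (X n ω)) atTop (nhds 0) := by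
  have key : ∀ ε : ℝ, 0 < ε → ∀ᵐ ω ∂μ, ∀ᶠ n : ℕ in atTop,
      -(2 / (n:ℝ)) * Real.log (X n ω) ≤ 2 * ε := by
    intro ε hε
    set A : ℕ → Set Ω := fun n => X n ⁻¹' Iio (Real.exp (-(ε * n))) with hA
    have hμA : ∀ n, μ (A n) ≤ ENNReal.ofReal (Real.exp (-ε) ^ n) := by
      intro n
      rw [hA, ← Measure.map_apply (hm n) measurableSet_Iio, hd n,
        Measure.restrict_apply measurableSet_Iio]
      have hsub : Iio (Real.exp (-(ε*n))) ∩ Ioo 0 1 ⊆ Ioo 0 (Real.exp (-(ε*n))) :=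
        fun x hx => ⟨hx.2.1, hx.1⟩
      calc volume (Iio (Real.exp (-(ε*n))) ∩ Ioo 0 1)
          ≤ volume (Ioo 0 (Real.exp (-(ε*n)))) := measure_mono hsub
        _ = ENNReal.ofReal (Real.exp (-(ε*n))) := by rw [Real.volume_Ioo, sub_zero]
        _ = ENNReal.ofReal (Real.exp (-ε) ^ n) := by
            rw [← Real.exp_nat_mul]; congr 1; ring
    have hsum : (∑' n, μ (A n)) ≠ ∞ := by
      apply ne_top_of_le_ne_top _ (ENNReal.tsum_le_tsum hμA)
      rw [← ENNReal.ofReal_tsum_of_nonneg (fun n => pow_nonneg (Real.exp_pos _).le n)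
        (summable_geometric_of_lt_one (Real.exp_pos _).le
          (Real.exp_lt_one_iff.2 (by linarith)))]
      exact ENNReal.ofReal_ne_top
    filter_upwards [ae_eventually_notMem hsum] with ω hω
    filter_upwards [hω, eventually_ge_atTop 1] with n hn hn1
    have hX : Real.exp (-(ε * n)) ≤ X n ω := not_lt.1 hn
    have hlog : -(ε * n) ≤ Real.log (X n ω) := by
      have h := Real.log_le_log (Real.exp_pos _) hX
      rwa [Real.log_exp] at h
    have hnpos : (0:ℝ) < n := by exact_mod_cast hn1
    have hneg : -Real.log (X n ω) ≤ ε * n := by linarith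
    calc -(2/(n:ℝ)) * Real.log (X n ω) = (2/(n:ℝ)) * (-Real.log (X n ω)) := by ring
      _ ≤ (2/(n:ℝ)) * (ε * n) := by
          apply mul_le_mul_of_nonneg_left hneg (by positivity)
      _ = 2 * ε := by field_simp
  have hnn : ∀ ω (n : ℕ), 0 ≤ -(2/(n:ℝ)) * Real.log (X n ω) := by
    intro ω n
    have h1 : Real.log (X n ω) ≤ 0 := Real.log_nonpos (hv n ω).1.le (hv n ω).2.le
    have h2 : (0:ℝ) ≤ 2/(n:ℝ) := by positivity
    nlinarith
  have hall : ∀ᵐ ω ∂μ, ∀ m : ℕ, ∀ᶠ n : ℕ in atTop,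
      -(2/(n:ℝ)) * Real.log (X n ω) ≤ 2 * (1/(m+1)) := by
    rw [ae_all_iff]; intro m; exact key _ (by positivity)
  filter_upwards [hall] with ω hω
  refine tendsto_order.2 ⟨fun b hb => ?_, fun b hb => ?_⟩
  · exact Eventually.of_forall fun n => lt_of_lt_of_le hb (hnn ω n)
  · obtain ⟨m, hm⟩ := exists_nat_gt (2 / b)
    have hmb : 2 * ((1:ℝ)/(m+1)) < b := by
      rw [div_lt_iff₀ hb] at hm
      rw [mul_one_div, div_lt_iff₀ (by positivity : (0:ℝ) < (m:ℝ)+1)]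
      nlinarith
    filter_upwards [hω m] with n hn using lt_of_le_of_lt hn hmb

end TFhardAux

/-- The hard-thresholded truncated Fisher method (TFhard) is asymptotically Bahadur
optimal for every threshold `τ ∈ (0,1]`: its combined p-value has exact slope
`∑ i, λ i * c i`, the maximum attainable exact slope. -/
theorem TFhard_is_ABO
    {K : ℕ} (hK : 1 ≤ K) (ℓ : ℕ) (hℓ : 1 ≤ ℓ) (hℓK : ℓ ≤ K)
    (lam c : Fin K → ℝ)
    (hlam : ∀ i, 0 < lam i)
    (hcpos : ∀ i : Fin K, (i : ℕ) < ℓ → 0 < c i)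
    (hcnull : ∀ i : Fin K, ℓ ≤ (i : ℕ) → c i = 0)
    (nseq : Fin K → ℕ → ℕ)
    (hn : ∀ i, Tendsto (fun n : ℕ => (nseq i n : ℝ) / (n : ℝ)) atTop (nhds (lam i)))
    {Ω : Type*} [MeasurableSpace Ω] (μ : Measure Ω) [IsProbabilityMeasure μ]
    (p : ℕ → Fin K → Ω → ℝ)
    (hmeas : ∀ n i, Measurable (p n i))
    (hval : ∀ n i ω, p n i ω ∈ Ioo (0 : ℝ) 1)
    (hslope : ∀ i : Fin K, (i : ℕ) < ℓ →
      ∀ᵐ ω ∂μ, Tendsto (fun n : ℕ => -(2 / (nseq i n : ℝ)) * Real.log (p n i ω))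
        atTop (nhds (c i)))
    (hnull : ∀ i : Fin K, ℓ ≤ (i : ℕ) →
      ∀ n, Measure.map (p n i) μ = volume.restrict (Ioo (0 : ℝ) 1))
    (τ : ℝ) (hτ : τ ∈ Ioc (0 : ℝ) 1)
    -- the TFhard statistic
    (T : (Fin K → ℝ) → ℝ)
    (hT : ∀ u : Fin K → ℝ, T u =
      ∑ i : Fin K, if u i ≤ τ then -2 * Real.log (u i) else 0)
    -- the null survival function of `T` under the uniform measure on [0,1]^K
    (G : ℝ → ℝ)
    (hG : ∀ t, G t =
      ((Measure.pi fun _ : Fin K => volume.restrict (Icc (0 : ℝ) 1))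
        {u | t ≤ T u}).toReal)
    -- the TFhard combined p-value
    (q : ℕ → Ω → ℝ)
    (hq : ∀ n ω, q n ω = G (T (fun i => p n i ω))) :
    ∀ᵐ ω ∂μ, Tendsto (fun n : ℕ => -(2 / (n : ℝ)) * Real.log (q n ω))
      atTop (nhds (∑ i : Fin K, lam i * c i)) := by
  classical
  have hτ0 : 0 < τ := hτ.1
  have hτ1 : τ ≤ 1 := hτ.2
  have h0K : 0 < K := lt_of_lt_of_le hℓ hℓK
  set L : ℝ := ∑ i : Fin K, lam i * c i with hL
  have hLpos : 0 < L := by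
    rw [hL]
    refine Finset.sum_pos' (fun i _ => ?_) ⟨⟨0, h0K⟩, Finset.mem_univ _, ?_⟩
    · rcases lt_or_ge ((i : ℕ)) ℓ with h | h
      · exact (mul_pos (hlam i) (hcpos i h)).le
      · rw [hcnull i h, mul_zero]
    · exact mul_pos (hlam _) (hcpos _ (by show 0 < ℓ; omega))
  -- Step 1: per-coordinate a.s. slopes
  have step1 : ∀ᵐ ω ∂μ, ∀ i : Fin K,
      Tendsto (fun n : ℕ => -(2/(n:ℝ)) * Real.log (p n i ω)) atTop (nhds (lam i * c i)) := by
    rw [ae_all_iff]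
    intro i
    rcases lt_or_ge ((i : ℕ)) ℓ with hi | hi
    · filter_upwards [hslope i hi] with ω hω
      have hmul : Tendsto (fun n : ℕ => ((nseq i n : ℝ)/(n:ℝ)) *
          (-(2/(nseq i n : ℝ)) * Real.log (p n i ω))) atTop (nhds (lam i * c i)) :=
        (hn i).mul hω
      apply hmul.congr'
      have hev : ∀ᶠ n : ℕ in atTop, (nseq i n : ℝ) ≠ 0 := by
        filter_upwards [(hn i).eventually (eventually_gt_nhds (half_lt_self (hlam i)))]
          with n hn2
        intro h0
        rw [h0] at hn2
        simp at hn2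
        linarith [hlam i, hn2]
      filter_upwards [hev] with n ha
      have h1 : (nseq i n : ℝ) / (n:ℝ) * (-(2 / (nseq i n : ℝ)) * Real.log (p n i ω))
          = ((nseq i n : ℝ) / (nseq i n : ℝ)) * (-(2/(n:ℝ)) * Real.log (p n i ω)) := by
        ring
      rw [h1, div_self ha, one_mul]
    · have hc0 : c i = 0 := hcnull i hi
      rw [hc0, mul_zero]
      exact TFhardAux.null_slope μ (fun n => p n i) (fun n => hmeas n i)
        (fun n ω => hval n i ω) (hnull i hi)
  haveI := TFhardAux.prob_restrict_Icc
  set μK := Measure.pi fun _ : Fin K => volume.restrict (Icc (0:ℝ) 1) with hμK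
  have hset : ∀ t : ℝ, {u : Fin K → ℝ | t ≤ T u}
      = {u : Fin K → ℝ | t ≤ ∑ i, if u i ≤ τ then -2 * Real.log (u i) else 0} := by
    intro t; ext u; simp only [mem_setOf_eq, hT u]
  filter_upwards [step1] with ω hω
  set x : Fin K → ℕ → ℝ := fun i n => -(2/(n:ℝ)) * Real.log (p n i ω) with hx
  set y : Fin K → ℕ → ℝ := fun i n => if p n i ω ≤ τ then x i n else 0 with hy
  have hxnn : ∀ i n, 0 ≤ x i n := by
    intro i n
    have h1 := Real.log_nonpos (hval n i ω).1.le (hval n i ω).2.le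
    have h2 : (0:ℝ) ≤ 2/(n:ℝ) := by positivity
    simp only [hx]
    nlinarith
  have hyx : ∀ i n, y i n ≤ x i n := by
    intro i n
    simp only [hy]
    split
    · exact le_refl _
    · exact hxnn i n
  have hynn : ∀ i n, 0 ≤ y i n := by
    intro i n
    simp only [hy]
    split
    · exact hxnn i n
    · exact le_refl 0
  have hytend : ∀ i, Tendsto (fun n => y i n) atTop (nhds (lam i * c i)) := by
    intro i
    rcases lt_or_ge ((i : ℕ)) ℓ with hi | hi
    · have hpos : 0 < lam i * c i := mul_pos (hlam i) (hcpos i hi)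
      set η := lam i * c i / 2 with hη
      have hηpos : 0 < η := by rw [hη]; linarith
      have h1 : ∀ᶠ n : ℕ in atTop, η < x i n :=
        (hω i).eventually (eventually_gt_nhds (show η < lam i * c i by rw [hη]; linarith))
      have h2 : ∀ᶠ n : ℕ in atTop, 2 * (-Real.log τ) / η ≤ (n:ℝ) :=
        (tendsto_natCast_atTop_atTop (R := ℝ)).eventually_ge_atTop _
      have hev : ∀ᶠ n : ℕ in atTop, p n i ω ≤ τ := by
        filter_upwards [h1, h2, eventually_ge_atTop 1] with n hn1 hn2 hn3
        have hnpos : (0:ℝ) < n := by exact_mod_cast hn3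
        have hlog : Real.log (p n i ω) < -(η * n / 2) := by
          have : (2/(n:ℝ)) * (-Real.log (p n i ω)) > η := by
            have : x i n = (2/(n:ℝ)) * (-Real.log (p n i ω)) := by rw [hx]; ring
            linarith [hn1, this ▸ hn1]
          have h4 : -Real.log (p n i ω) > η * n / 2 := by
            have h5 : (0:ℝ) < 2/(n:ℝ) := by positivity
            rw [gt_iff_lt, ← div_lt_iff₀' h5] at this
            have : η / (2 / (n:ℝ)) = η * n / 2 := by field_simp
            linarith [this ▸ ‹η / (2 / (n:ℝ)) < -Real.log (p n i ω)›]
          linarith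
        have hlogτ : Real.log (p n i ω) ≤ Real.log τ := by
          have h6 : 2 * (-Real.log τ) ≤ η * (n:ℝ) := by
            rw [div_le_iff₀ hηpos] at hn2
            linarith [hn2]
          linarith
        exact (Real.log_le_log_iff (hval n i ω).1 hτ0).1 hlogτ
      refine Tendsto.congr' ?_ (hω i)
      filter_upwards [hev] with n hn
      rw [hy]
      simp only [if_pos hn]
      rfl
    · rw [hcnull i hi, mul_zero]
      have hx0 : Tendsto (fun n => x i n) atTop (nhds 0) := by
        have h := hω i
        rwa [hcnull i hi, mul_zero] at h
      exact squeeze_zero (fun n => hynn i n) (fun n => hyx i n) hx0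
  have hsumy : Tendsto (fun n => ∑ i : Fin K, y i n) atTop (nhds L) := by
    rw [hL]
    exact tendsto_finset_sum _ fun i _ => hytend i
  set Tn : ℕ → ℝ := fun n => T (fun i => p n i ω) with hTn
  have hgy : ∀ n : ℕ, (1/(n:ℝ)) * Tn n = ∑ i : Fin K, y i n := by
    intro n
    rw [hTn]
    simp only
    rw [hT, Finset.mul_sum]
    apply Finset.sum_congr rfl
    intro i _
    simp only [hy, hx]
    split_ifs with h
    · ring
    · exact mul_zero _
  have hg : Tendsto (fun n : ℕ => (1/(n:ℝ)) * Tn n) atTop (nhds L) := by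
    have h := hsumy
    rwa [show (fun n : ℕ => ∑ i : Fin K, y i n) = fun n : ℕ => (1/(n:ℝ)) * Tn n from
      funext fun n => (hgy n).symm] at h
  have hTtop : Tendsto Tn atTop atTop := by
    have h1 : ∀ᶠ n : ℕ in atTop, L/2 < (1/(n:ℝ)) * Tn n :=
      hg.eventually (eventually_gt_nhds (show L/2 < L by linarith))
    apply tendsto_atTop_mono' atTop (show (fun n : ℕ => (n:ℝ) * (L/2)) ≤ᶠ[atTop] Tn from ?_)
    · exact (tendsto_natCast_atTop_atTop (R := ℝ)).atTop_mul_const (by linarith)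
    · filter_upwards [h1, eventually_ge_atTop 1] with n hn hn1
      have hnpos : (0:ℝ) < n := by exact_mod_cast hn1
      calc (n:ℝ) * (L/2) ≤ (n:ℝ) * ((1/(n:ℝ)) * Tn n) := by
            apply mul_le_mul_of_nonneg_left hn.le hnpos.le
        _ = Tn n := by field_simp
  have hTev : ∀ᶠ n : ℕ in atTop, 0 ≤ Tn n ∧ Real.exp (-(Tn n / 2)) ≤ τ := by
    filter_upwards [hTtop.eventually_ge_atTop (max 0 (-2 * Real.log τ))] with n hn
    have h1 : 0 ≤ Tn n := le_trans (le_max_left _ _) hn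
    have h2 : -2 * Real.log τ ≤ Tn n := le_trans (le_max_right _ _) hn
    refine ⟨h1, ?_⟩
    have h3 : -(Tn n / 2) ≤ Real.log τ := by linarith
    calc Real.exp (-(Tn n / 2)) ≤ Real.exp (Real.log τ) := Real.exp_le_exp.2 h3
      _ = τ := Real.exp_log hτ0
  -- eventual positivity and lower bound for q
  have hqlb : ∀ᶠ n : ℕ in atTop,
      0 < Real.exp (-(Tn n/2)) * τ ^ (K-1) ∧
      Real.exp (-(Tn n/2)) * τ ^ (K-1) ≤ q n ω := by
    filter_upwards [hTev] with n hn
    have hlbpos : 0 < Real.exp (-(Tn n/2)) * τ ^ (K-1) := by positivity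
    refine ⟨hlbpos, ?_⟩
    have hle := TFhardAux.lowerbd K h0K hτ0 hτ1 hn.1 hn.2
    rw [← hset (Tn n)] at hle
    have hq1 : q n ω = (μK {u : Fin K → ℝ | Tn n ≤ T u}).toReal := by
      rw [hq n ω, hG, hμK, hTn]
    rw [hq1]
    calc Real.exp (-(Tn n/2)) * τ ^ (K-1)
        = (ENNReal.ofReal (Real.exp (-(Tn n/2)) * τ ^ (K-1))).toReal :=
          (ENNReal.toReal_ofReal hlbpos.le).symm
      _ ≤ _ := ENNReal.toReal_mono (measure_ne_top μK _) hle
  -- upper bound sequence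
  have hU : Tendsto (fun n : ℕ => (1/(n:ℝ)) * Tn n
      + (2 * (((K-1 : ℕ):ℝ)) * (-Real.log τ))/(n:ℝ)) atTop (nhds L) := by
    have h2 : Tendsto (fun n : ℕ => (2 * (((K-1 : ℕ):ℝ)) * (-Real.log τ))/(n:ℝ))
        atTop (nhds 0) := tendsto_const_div_atTop_nhds_zero_nat _
    have h3 := hg.add h2
    rwa [add_zero] at h3
  have hxleU : ∀ᶠ n : ℕ in atTop, -(2/(n:ℝ)) * Real.log (q n ω)
      ≤ (1/(n:ℝ)) * Tn n + (2 * (((K-1 : ℕ):ℝ)) * (-Real.log τ))/(n:ℝ) := by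
    filter_upwards [hqlb, eventually_ge_atTop 1] with n hn hn1
    have hnpos : (0:ℝ) < n := by exact_mod_cast hn1
    have hloglb : Real.log (Real.exp (-(Tn n/2)) * τ ^ (K-1)) ≤ Real.log (q n ω) :=
      Real.log_le_log hn.1 hn.2
    have hloglb2 : Real.log (Real.exp (-(Tn n/2)) * τ ^ (K-1))
        = -(Tn n/2) + ((K-1 : ℕ):ℝ) * Real.log τ := by
      rw [Real.log_mul (Real.exp_pos _).ne' (by positivity), Real.log_exp, Real.log_pow]
    rw [hloglb2] at hloglb
    have h4 : (0:ℝ) ≤ 2/(n:ℝ) := by positivity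
    have h5 : -(2/(n:ℝ)) * Real.log (q n ω)
        ≤ -(2/(n:ℝ)) * (-(Tn n/2) + ((K-1 : ℕ):ℝ) * Real.log τ) := by
      have := mul_le_mul_of_nonneg_left hloglb h4
      nlinarith [this]
    calc -(2/(n:ℝ)) * Real.log (q n ω)
        ≤ -(2/(n:ℝ)) * (-(Tn n/2) + ((K-1 : ℕ):ℝ) * Real.log τ) := h5
      _ = (1/(n:ℝ)) * Tn n + (2 * (((K-1 : ℕ):ℝ)) * (-Real.log τ))/(n:ℝ) := by ring
  -- conclude by order characterization
  refine tendsto_order.2 ⟨fun b hb => ?_, fun b hb => ?_⟩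
  · -- lower: b < L
    set β := max b 0 with hβdef
    have hβL : β < L := max_lt hb hLpos
    have hβ0 : 0 ≤ β := le_max_right _ _
    set s : ℝ := (β / L + 1)/4 with hsdef
    have hβdiv : 0 ≤ β / L := div_nonneg hβ0 hLpos.le
    have hβdiv1 : β / L < 1 := (div_lt_one hLpos).2 hβL
    have hs0 : 0 < s := by rw [hsdef]; linarith
    have hs12 : s < 1/2 := by rw [hsdef]; linarith
    have h2sL : b < 2 * s * L := by
      have h1 : 2 * s * L = (β / L + 1) * L / 2 := by rw [hsdef]; ring
      have h2 : (β / L + 1) * L = β + L := by field_simp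
      have h3 : 2 * s * L = (β + L)/2 := by rw [h1, h2]
      have h4 : b ≤ β := le_max_left _ _
      rw [h3]; linarith
    have hVt : Tendsto (fun n : ℕ => 2*s*((1/(n:ℝ))*Tn n)
        - (2*(K:ℝ)*Real.log (1/(1-2*s)))/(n:ℝ)) atTop (nhds (2*s*L - 0)) :=
      (hg.const_mul _).sub (tendsto_const_div_atTop_nhds_zero_nat _)
    rw [sub_zero] at hVt
    have hVb : ∀ᶠ n : ℕ in atTop, b < 2*s*((1/(n:ℝ))*Tn n)
        - (2*(K:ℝ)*Real.log (1/(1-2*s)))/(n:ℝ) :=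
      hVt.eventually (eventually_gt_nhds h2sL)
    filter_upwards [hqlb, hVb, eventually_ge_atTop 1] with n hn hVn hn1
    have hnpos : (0:ℝ) < n := by exact_mod_cast hn1
    have hqpos : 0 < q n ω := lt_of_lt_of_le hn.1 hn.2
    have h2s : (0:ℝ) < 1 - 2*s := by linarith
    -- Chernoff upper bound on q
    have hub : q n ω ≤ Real.exp (-(s * Tn n)) * (1/(1-2*s))^K := by
      have hch := TFhardAux.chernoff K τ hτ1 hs0 hs12 (Tn n)
      rw [← hset (Tn n), ← hμK] at hch
      have hq1 : q n ω = (μK {u : Fin K → ℝ | Tn n ≤ T u}).toReal := by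
        rw [hq n ω, hG, hμK, hTn]
      rw [hq1]
      exact ENNReal.toReal_le_of_le_ofReal (by positivity) hch
    have hlogub : Real.log (q n ω) ≤ -(s * Tn n) + (K:ℝ) * Real.log (1/(1-2*s)) := by
      have h1 := Real.log_le_log hqpos hub
      rwa [Real.log_mul (Real.exp_pos _).ne' (by positivity), Real.log_exp,
        Real.log_pow] at h1
    have h4 : (0:ℝ) ≤ 2/(n:ℝ) := by positivity
    have h5 : -(2/(n:ℝ)) * (-(s * Tn n) + (K:ℝ) * Real.log (1/(1-2*s)))
        ≤ -(2/(n:ℝ)) * Real.log (q n ω) := by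
      have := mul_le_mul_of_nonneg_left hlogub h4
      nlinarith [this]
    have h6 : -(2/(n:ℝ)) * (-(s * Tn n) + (K:ℝ) * Real.log (1/(1-2*s)))
        = 2*s*((1/(n:ℝ))*Tn n) - (2*(K:ℝ)*Real.log (1/(1-2*s)))/(n:ℝ) := by ring
    rw [h6] at h5
    exact lt_of_lt_of_le hVn h5
  · -- upper: L < b
    have hUb : ∀ᶠ n : ℕ in atTop, (1/(n:ℝ)) * Tn n
        + (2 * (((K-1 : ℕ):ℝ)) * (-Real.log τ))/(n:ℝ) < b :=
      hU.eventually (eventually_lt_nhds hb)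
    filter_upwards [hxleU, hUb] with n h1 h2
    exact lt_of_le_of_lt h1 h2
end

section
/- Fix an integer K ≥ 1 and an integer ℓ with 1 ≤ ℓ ≤ K. Fix reals λ_1,…,λ_K > 0 and c_1,…,c_ℓ > 0, and set c_i = 0 for ℓ < i ≤ K. Fix sequences n_1,…,n_K : ℕ → ℕ with n_i(n)/n → λ_i as n → ∞. On a probability space, for each n let p_1^{(n)},…,p_K^{(n)} be random variables with values in (0,1) such that: (i) for each 1 ≤ i ≤ ℓ, −(2/n_i(n))·log p_i^{(n)} → c_i almost surely as n → ∞; (ii) for each ℓ < i ≤ K and every n, p_i^{(n)} is uniformly distributed on (0,1). Fix τ ∈ (0,1]. Define the soft-thresholded truncated Fisher statistic T(u) = ∑_{i=1}^K max(−2·log u_i + 2·log τ, 0) for u ∈ (0,1)^K, its null survival function G(t) = μ_K{u : T(u) ≥ t}, and q_n = G(T(p_1^{(n)},…,p_K^{(n)})). Then −(2/n)·log q_n → ∑_{i=1}^ℓ λ_i·c_i almost surely as n → ∞; i.e., TFsoft is asymptotically Bahadur optimal for every τ ∈ (0,1]. -/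
open MeasureTheory Filter Set ProbabilityTheory


theorem lintegral_pi_pow {n : ℕ} (μ : Measure ℝ) [SigmaFinite μ] (f : ℝ → ENNReal)
    (hf : Measurable f) :
    ∫⁻ x : Fin n → ℝ, ∏ i, f (x i) ∂(Measure.pi fun _ => μ) = (∫⁻ x, f x ∂μ) ^ n := by
  induction n with
  | zero => simp
  | succ n ih =>
      have h := (measurePreserving_piFinSuccAbove (fun _ : Fin (n+1) => μ) 0).symm
      rw [← h.lintegral_comp_emb (MeasurableEquiv.measurableEmbedding _)]
      simp_rw [MeasurableEquiv.piFinSuccAbove_symm_apply, Fin.insertNthEquiv,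
        Fin.prod_univ_succ, Fin.insertNth_zero]
      simp only [Fin.zero_succAbove, Function.comp_def, Equiv.coe_fn_mk,
        Fin.cons_zero, Fin.cons_succ, cast_eq]
      have hg : Measurable (fun y : Fin n → ℝ => ∏ i, f (y i)) :=
        Finset.measurable_prod Finset.univ (fun i _ => hf.comp (measurable_pi_apply i))
      rw [lintegral_prod_mul (f := f) (g := fun y : Fin n → ℝ => ∏ i, f (y i))
        hf.aemeasurable hg.aemeasurable, ih, pow_succ]
      ring

-- the one-dimensional moment computation
lemma moment_one_dim {s : ℝ} (hs0 : 0 < s) (hs1 : s < 1) :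
    ∫⁻ x, ENNReal.ofReal (Real.exp (-(s * Real.log x))) ∂(volume.restrict (Icc (0:ℝ) 1))
      = ENNReal.ofReal (1 / (1 - s)) := by
  have hrpow : IntegrableOn (fun x : ℝ => x ^ (-s)) (Ioc (0:ℝ) 1) volume := by
    have h := intervalIntegral.intervalIntegrable_rpow' (a := 0) (b := 1) (r := -s)
      (by linarith)
    rwa [intervalIntegrable_iff_integrableOn_Ioc_of_le zero_le_one] at h
  have heq : EqOn (fun x : ℝ => x ^ (-s)) (fun x => Real.exp (-(s * Real.log x)))
      (Ioc (0:ℝ) 1) := by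
    intro x hx
    simp only
    rw [Real.rpow_def_of_pos hx.1]
    ring_nf
  have hint : Integrable (fun x => Real.exp (-(s * Real.log x)))
      (volume.restrict (Icc (0:ℝ) 1)) := by
    rw [← IntegrableOn, integrableOn_Icc_iff_integrableOn_Ioc]
    exact hrpow.congr_fun heq measurableSet_Ioc
  rw [← ofReal_integral_eq_lintegral_ofReal hint
    (Filter.Eventually.of_forall fun x => Real.exp_nonneg _)]
  congr 1
  rw [show ∫ x in Icc (0:ℝ) 1, Real.exp (-(s * Real.log x))
      = ∫ x in Ioc (0:ℝ) 1, Real.exp (-(s * Real.log x)) from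
        integral_Icc_eq_integral_Ioc,
    ← setIntegral_congr_fun measurableSet_Ioc heq,
    ← intervalIntegral.integral_of_le zero_le_one,
    integral_rpow (Or.inl (by linarith)),
    Real.one_rpow, Real.zero_rpow (by linarith)]
  ring_nf

lemma aux_upper {K : ℕ} {τ : ℝ} (hτ0 : 0 < τ) (hτ : τ ≤ 1) {t : ℝ} (ht : 1 < t) :
    (Measure.pi fun _ : Fin K => volume.restrict (Icc (0:ℝ) 1))
      {u | t ≤ ∑ i, max (-2 * Real.log (u i) + 2 * Real.log τ) 0} ≤
    ENNReal.ofReal (Real.exp (1/2 - t/2) * t ^ K) := by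
  haveI : IsProbabilityMeasure (volume.restrict (Icc (0:ℝ) 1)) := ⟨by simp [Real.volume_Icc]⟩
  set ν := volume.restrict (Icc (0:ℝ) 1)
  set P := Measure.pi fun _ : Fin K => ν with hP
  haveI : IsProbabilityMeasure P := by rw [hP]; infer_instance
  obtain ⟨s, hsdef⟩ : ∃ s : ℝ, s = 1 - 1/t := ⟨_, rfl⟩
  have ht0 : (0:ℝ) < t := lt_trans one_pos ht
  have hs0 : 0 < s := by
    rw [hsdef, sub_pos, div_lt_one ht0]; exact ht
  have hs1 : s < 1 := by
    rw [hsdef]; have : 0 < 1/t := by positivity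
    linarith
  set g : ℝ → ENNReal := fun x => ENNReal.ofReal (Real.exp (-(s * Real.log x))) with hg
  have hgmeas : Measurable g := by
    apply Measurable.ennreal_ofReal
    exact Real.measurable_exp.comp ((Real.measurable_log.const_mul s).neg)
  have hfmeas : Measurable (fun u : Fin K → ℝ => ∏ i, g (u i)) :=
    Finset.measurable_prod Finset.univ (fun i _ => hgmeas.comp (measurable_pi_apply i))
  set box : Set (Fin K → ℝ) := Set.pi univ (fun _ => Icc (0:ℝ) 1) with hbox
  have hboxmeas : MeasurableSet box := MeasurableSet.univ_pi (fun _ => measurableSet_Icc)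
  have hboxfull : P boxᶜ = 0 := by
    have : P box = 1 := by
      rw [hbox, hP, Measure.pi_pi]
      have : ν (Icc (0:ℝ) 1) = 1 := by
        rw [Measure.restrict_apply measurableSet_Icc, inter_self, Real.volume_Icc]; simp
      simp [this]
    rw [measure_compl hboxmeas (by simp), this, measure_univ, tsub_self]
  set S := {u : Fin K → ℝ | t ≤ ∑ i, max (-2 * Real.log (u i) + 2 * Real.log τ) 0} with hS
  set ε : ENNReal := ENNReal.ofReal (Real.exp (s * t / 2)) with hε
  have hsub : S ∩ box ⊆ {u | ε ≤ ∏ i, g (u i)} := by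
    intro u ⟨huS, hubox⟩
    have hui : ∀ i, u i ∈ Icc (0:ℝ) 1 := fun i => hubox i (mem_univ i)
    have hterm : ∀ i, max (-2 * Real.log (u i) + 2 * Real.log τ) 0 ≤ -2 * Real.log (u i) := by
      intro i
      have hlognp : Real.log (u i) ≤ 0 := Real.log_nonpos (hui i).1 (hui i).2
      have hlogτ : Real.log τ ≤ 0 := Real.log_nonpos hτ0.le hτ
      apply max_le <;> linarith
    have hsum : t ≤ ∑ i, -2 * Real.log (u i) :=
      le_trans huS (Finset.sum_le_sum (fun i _ => hterm i))
    have hexp : Real.exp (s * t / 2) ≤ Real.exp (∑ i, -(s * Real.log (u i))) := by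
      apply Real.exp_le_exp.2
      have hkey : ∑ i, -(s * Real.log (u i)) = s/2 * (∑ i, -2 * Real.log (u i)) := by
        rw [Finset.mul_sum]
        congr 1; funext i; ring
      rw [hkey]
      have h2 := mul_le_mul_of_nonneg_left hsum (by linarith : (0:ℝ) ≤ s/2)
      nlinarith [h2]
    show ε ≤ ∏ i, g (u i)
    rw [hε, hg]
    calc ENNReal.ofReal (Real.exp (s * t / 2))
        ≤ ENNReal.ofReal (Real.exp (∑ i, -(s * Real.log (u i)))) := ENNReal.ofReal_le_ofReal hexp
      _ = ENNReal.ofReal (∏ i, Real.exp (-(s * Real.log (u i)))) := by rw [Real.exp_sum]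
      _ = ∏ i, ENNReal.ofReal (Real.exp (-(s * Real.log (u i)))) :=
          ENNReal.ofReal_prod_of_nonneg (fun i _ => Real.exp_nonneg _)
  have hmarkov : P {u | ε ≤ ∏ i, g (u i)} ≤ (∫⁻ u, ∏ i, g (u i) ∂P) / ε :=
    meas_ge_le_lintegral_div hfmeas.aemeasurable
      (by rw [hε]; simp [Real.exp_pos]) (by rw [hε]; exact ENNReal.ofReal_ne_top)
  have h1s : 1/(1-s) = t := by
    rw [hsdef]; field_simp; ring
  have hst : s * t / 2 = t/2 - 1/2 := by
    rw [hsdef]; field_simp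
  have hlint : ∫⁻ u, ∏ i, g (u i) ∂P = ENNReal.ofReal t ^ K := by
    rw [hP, lintegral_pi_pow ν g hgmeas, moment_one_dim hs0 hs1, h1s]
  have hPS : P S ≤ P (S ∩ box) := by
    calc P S ≤ P ((S ∩ box) ∪ boxᶜ) := measure_mono (by
          intro u hu
          by_cases h : u ∈ box
          · exact Or.inl ⟨hu, h⟩
          · exact Or.inr h)
      _ ≤ P (S ∩ box) + P boxᶜ := measure_union_le _ _
      _ = P (S ∩ box) := by rw [hboxfull, add_zero]
  calc P S ≤ P (S ∩ box) := hPS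
    _ ≤ P {u | ε ≤ ∏ i, g (u i)} := measure_mono hsub
    _ ≤ (∫⁻ u, ∏ i, g (u i) ∂P) / ε := hmarkov
    _ = ENNReal.ofReal t ^ K / ε := by rw [hlint]
    _ = ENNReal.ofReal (Real.exp (1/2 - t/2) * t ^ K) := by
        rw [hε, ← ENNReal.ofReal_pow ht0.le, ← ENNReal.ofReal_div_of_pos (Real.exp_pos _)]
        congr 1
        rw [hst, ← neg_sub (t/2) (1/2), Real.exp_neg, div_eq_mul_inv, mul_comm]

lemma prob_restrict_Icc : IsProbabilityMeasure (volume.restrict (Icc (0:ℝ) 1)) :=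
  ⟨by simp [Real.volume_Icc]⟩

lemma aux_lower {K : ℕ} (hK : 1 ≤ K) {τ : ℝ} (hτ : τ ∈ Ioc (0:ℝ) 1) {t : ℝ} (ht : 0 ≤ t) :
    ENNReal.ofReal (τ * Real.exp (-(t/2))) ≤
      (Measure.pi fun _ : Fin K => volume.restrict (Icc (0:ℝ) 1))
        {u | t ≤ ∑ i, max (-2 * Real.log (u i) + 2 * Real.log τ) 0} := by
  set a : ℝ := τ * Real.exp (-(t/2)) with ha
  have ha0 : 0 < a := mul_pos hτ.1 (Real.exp_pos _)
  have ha1 : a ≤ 1 := by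
    have h1 : Real.exp (-(t/2)) ≤ 1 := Real.exp_le_one_iff.2 (by linarith)
    nlinarith [Real.exp_nonneg (-(t/2)), hτ.1, hτ.2]
  set i0 : Fin K := ⟨0, hK⟩
  classical
  set s : Fin K → Set ℝ := fun i => if i = i0 then Ioc 0 a else Icc 0 1 with hs
  have hsub : Set.pi univ s ⊆
      {u | t ≤ ∑ i, max (-2 * Real.log (u i) + 2 * Real.log τ) 0} := by
    intro u hu
    have h0 : u i0 ∈ Ioc 0 a := by simpa [hs] using hu i0 (mem_univ i0)
    have hlog : Real.log (u i0) ≤ Real.log a := by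
      rw [Real.log_le_log_iff h0.1 ha0]; exact h0.2
    have hla : Real.log a = Real.log τ + (-(t/2)) := by
      rw [ha, Real.log_mul (ne_of_gt hτ.1) (ne_of_gt (Real.exp_pos _)), Real.log_exp]
    have key : t ≤ max (-2 * Real.log (u i0) + 2 * Real.log τ) 0 := by
      have : t ≤ -2 * Real.log (u i0) + 2 * Real.log τ := by
        rw [hla] at hlog; linarith
      exact le_trans this (le_max_left _ _)
    refine le_trans key ?_
    exact Finset.single_le_sum (f := fun i => max (-2 * Real.log (u i) + 2 * Real.log τ) 0)
      (fun i _ => le_max_right _ _) (Finset.mem_univ i0)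
  refine le_trans (le_of_eq ?_) (measure_mono hsub)
  haveI := prob_restrict_Icc
  rw [Measure.pi_pi]
  have h1 : (volume.restrict (Icc (0:ℝ) 1)) (Ioc 0 a) = ENNReal.ofReal a := by
    rw [Measure.restrict_apply measurableSet_Ioc,
      inter_eq_left.2 (fun x hx => mem_Icc.2 ⟨le_of_lt (mem_Ioc.1 hx).1, le_trans (mem_Ioc.1 hx).2 ha1⟩),
      Real.volume_Ioc, sub_zero]
  have h2 : (volume.restrict (Icc (0:ℝ) 1)) (Icc 0 1) = 1 := by
    rw [Measure.restrict_apply measurableSet_Icc, inter_self, Real.volume_Icc]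
    simp
  rw [Finset.prod_eq_single i0 (fun b _ hb => by simp [hs, hb, h2]) (by simp)]
  simp [hs, h1]

lemma squeeze_zero_seq {f : ℕ → ℝ} (h0 : ∀ n, 0 ≤ f n)
    (h : ∀ k : ℕ, ∀ᶠ n in atTop, f n < 1/(k+1)) :
    Tendsto f atTop (nhds 0) := by
  rw [Metric.tendsto_atTop]
  intro ε hε
  obtain ⟨k, hk⟩ := exists_nat_one_div_lt hε
  obtain ⟨N, hN⟩ := (h k).exists_forall_of_atTop
  exact ⟨N, fun n hn => by
    rw [Real.dist_eq, sub_zero, abs_of_nonneg (h0 n)]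
    exact lt_trans (hN n hn) hk⟩

-- null coordinates: a.s. the term over n is o(n)
lemma null_term_tendsto {Ω : Type*} [MeasurableSpace Ω] (μ : Measure Ω) [IsProbabilityMeasure μ]
    (X : ℕ → Ω → ℝ) (hmeas : ∀ n, Measurable (X n))
    (hval : ∀ n ω, X n ω ∈ Ioo (0 : ℝ) 1)
    (hnull : ∀ n, Measure.map (X n) μ = volume.restrict (Ioo (0 : ℝ) 1)) {τ : ℝ} (hτ : τ ∈ Ioc (0:ℝ) 1) :
    ∀ᵐ ω ∂μ, Tendsto (fun n : ℕ => max (-2 * Real.log (X n ω) + 2 * Real.log τ) 0 / n)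
      atTop (nhds 0) := by
  set s : ℕ → ℕ → Set Ω := fun k n => {ω | X n ω ≤ Real.exp (-(n:ℝ)/(2*(k+1)))} with hs
  have key : ∀ k : ℕ, ∀ᵐ ω ∂μ, ∀ᶠ n in atTop, ω ∉ s k n := by
    intro k
    apply ae_eventually_notMem
    have hbound : ∀ n : ℕ, μ (s k n) ≤ ENNReal.ofReal (Real.exp (-(1/(2*(k+1):ℝ)))) ^ n := by
      intro n
      have h1 : μ (s k n) = (Measure.map (X n) μ) (Iic (Real.exp (-(n:ℝ)/(2*(k+1))))) := by
        rw [Measure.map_apply (hmeas n) measurableSet_Iic]; rfl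
      rw [h1, hnull n, Measure.restrict_apply measurableSet_Iic]
      calc volume (Iic (Real.exp (-(n:ℝ)/(2*(k+1)))) ∩ Ioo 0 1)
          ≤ volume (Ioc (0:ℝ) (Real.exp (-(n:ℝ)/(2*(k+1))))) := by
            apply measure_mono
            intro x hx
            exact ⟨hx.2.1, hx.1⟩
        _ = ENNReal.ofReal (Real.exp (-(n:ℝ)/(2*(k+1)))) := by rw [Real.volume_Ioc, sub_zero]
        _ = ENNReal.ofReal (Real.exp (-(1/(2*(k+1):ℝ)))) ^ n := by
            rw [← ENNReal.ofReal_pow (Real.exp_nonneg _), ← Real.exp_nat_mul]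
            congr 1
            ring
    have hgeo : (∑' n : ℕ, ENNReal.ofReal (Real.exp (-(1/(2*(k+1):ℝ)))) ^ n) ≠ ⊤ := by
      rw [ENNReal.tsum_geometric]
      apply ENNReal.inv_ne_top.2
      rw [ne_eq, tsub_eq_zero_iff_le, not_le]
      apply ENNReal.ofReal_lt_one.2
      apply Real.exp_lt_one_iff.2
      rw [neg_lt, neg_zero]
      positivity
    exact ne_top_of_le_ne_top hgeo (ENNReal.tsum_le_tsum hbound)
  rw [← ae_all_iff] at key
  filter_upwards [key] with ω hω
  apply squeeze_zero_seq
  · intro n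
    apply div_nonneg (le_max_right _ _) (Nat.cast_nonneg n)
  · intro k
    filter_upwards [hω k, eventually_ge_atTop 1] with n hn hn1
    have hnpos : (0:ℝ) < n := by exact_mod_cast hn1
    have hx : Real.exp (-(n:ℝ)/(2*(k+1))) < X n ω := lt_of_not_ge hn
    have hlog : -(n:ℝ)/(2*(k+1)) < Real.log (X n ω) := by
      have := Real.log_lt_log (Real.exp_pos _) hx
      rwa [Real.log_exp] at this
    have hlogτ : Real.log τ ≤ 0 := Real.log_nonpos hτ.1.le hτ.2
    have hτ' : max (-2 * Real.log (X n ω) + 2 * Real.log τ) 0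
        ≤ max (-2 * Real.log (X n ω)) 0 := max_le_max (by linarith) le_rfl
    have hk1 : (0:ℝ) < (k:ℝ) + 1 := by positivity
    have hlt : max (-2 * Real.log (X n ω) + 2 * Real.log τ) 0 < (n:ℝ)/(k+1) :=
      lt_of_le_of_lt hτ' (max_lt (by
        have hid : (n:ℝ)/(k+1) = -2 * (-(n:ℝ)/(2*(k+1))) := by field_simp
        rw [hid]
        linarith [hlog]) (by positivity))
    rw [div_lt_iff₀ hnpos]
    exact hlt.trans_le (le_of_eq (by ring))

lemma signal_term_tendsto (nseq : ℕ → ℕ) (lami ci : ℝ) (hlam : 0 < lami) (hc : 0 < ci)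
    (hn : Tendsto (fun n : ℕ => (nseq n : ℝ) / (n : ℝ)) atTop (nhds lami))
    (x : ℕ → ℝ)
    (hx : Tendsto (fun n : ℕ => -(2 / (nseq n : ℝ)) * Real.log (x n)) atTop (nhds ci))
    (τ : ℝ) :
    Tendsto (fun n : ℕ => max (-2 * Real.log (x n) + 2 * Real.log τ) 0 / n)
      atTop (nhds (lami * ci)) := by
  have h1 : Tendsto (fun n : ℕ => (nseq n : ℝ)/n * (-(2 / (nseq n : ℝ)) * Real.log (x n)))
      atTop (nhds (lami * ci)) := hn.mul hx
  have h2 : Tendsto (fun n : ℕ => -2 * Real.log (x n) / n) atTop (nhds (lami * ci)) := by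
    apply h1.congr'
    filter_upwards [hn.eventually (eventually_gt_nhds hlam), eventually_ge_atTop 1] with n h0 h1'
    have hnne : (n:ℝ) ≠ 0 := by
      have : (0:ℝ) < n := by exact_mod_cast h1'
      exact this.ne'
    have hm : (nseq n : ℝ) ≠ 0 := by
      intro hcon
      rw [hcon, zero_div] at h0
      linarith
    field_simp
  have h3 : Tendsto (fun n : ℕ => (-2 * Real.log (x n) + 2 * Real.log τ) / n)
      atTop (nhds (lami * ci)) := by
    have := h2.add (tendsto_const_div_atTop_nhds_zero_nat (2 * Real.log τ))
    rw [add_zero] at this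
    apply this.congr
    intro n
    rw [add_div]
  have h4 := h3.max (tendsto_const_nhds (x := (0:ℝ)) (f := atTop (α := ℕ)))
  rw [max_eq_left (by positivity : (0:ℝ) ≤ lami * ci)] at h4
  apply h4.congr
  intro n
  rw [← max_div_div_right (Nat.cast_nonneg n : (0:ℝ) ≤ n) (-2 * Real.log (x n) + 2 * Real.log τ) 0,
    zero_div]

/-- The soft-thresholded truncated Fisher method (TFsoft) is asymptotically Bahadur
optimal for every threshold `τ ∈ (0,1]`: its combined p-value has exact slope
`∑ i, λ i * c i`, the maximum attainable exact slope. -/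
theorem TFsoft_is_ABO
    {K : ℕ} (hK : 1 ≤ K) (ℓ : ℕ) (hℓ : 1 ≤ ℓ) (hℓK : ℓ ≤ K)
    (lam c : Fin K → ℝ)
    (hlam : ∀ i, 0 < lam i)
    (hcpos : ∀ i : Fin K, (i : ℕ) < ℓ → 0 < c i)
    (hcnull : ∀ i : Fin K, ℓ ≤ (i : ℕ) → c i = 0)
    (nseq : Fin K → ℕ → ℕ)
    (hn : ∀ i, Tendsto (fun n : ℕ => (nseq i n : ℝ) / (n : ℝ)) atTop (nhds (lam i)))
    {Ω : Type*} [MeasurableSpace Ω] (μ : Measure Ω) [IsProbabilityMeasure μ]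
    (p : ℕ → Fin K → Ω → ℝ)
    (hmeas : ∀ n i, Measurable (p n i))
    (hval : ∀ n i ω, p n i ω ∈ Ioo (0 : ℝ) 1)
    (hslope : ∀ i : Fin K, (i : ℕ) < ℓ →
      ∀ᵐ ω ∂μ, Tendsto (fun n : ℕ => -(2 / (nseq i n : ℝ)) * Real.log (p n i ω))
        atTop (nhds (c i)))
    (hnull : ∀ i : Fin K, ℓ ≤ (i : ℕ) →
      ∀ n, Measure.map (p n i) μ = volume.restrict (Ioo (0 : ℝ) 1))
    (τ : ℝ) (hτ : τ ∈ Ioc (0 : ℝ) 1)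
    -- the TFsoft statistic
    (T : (Fin K → ℝ) → ℝ)
    (hT : ∀ u : Fin K → ℝ, T u =
      ∑ i : Fin K, max (-2 * Real.log (u i) + 2 * Real.log τ) 0)
    -- the null survival function of `T` under the uniform measure on [0,1]^K
    (G : ℝ → ℝ)
    (hG : ∀ t, G t =
      ((Measure.pi fun _ : Fin K => volume.restrict (Icc (0 : ℝ) 1))
        {u | t ≤ T u}).toReal)
    -- the TFsoft combined p-value
    (q : ℕ → Ω → ℝ)
    (hq : ∀ n ω, q n ω = G (T (fun i => p n i ω))) :
    ∀ᵐ ω ∂μ, Tendsto (fun n : ℕ => -(2 / (n : ℝ)) * Real.log (q n ω))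
      atTop (nhds (∑ i : Fin K, lam i * c i)) := by
  have hτ0 : (0:ℝ) < τ := hτ.1
  have hτ1 : τ ≤ 1 := hτ.2
  haveI : IsProbabilityMeasure (volume.restrict (Icc (0:ℝ) 1)) := prob_restrict_Icc
  -- positivity of the limit
  set L : ℝ := ∑ i : Fin K, lam i * c i with hLdef
  have hlc : ∀ i : Fin K, 0 ≤ lam i * c i := by
    intro i
    rcases lt_or_ge (i:ℕ) ℓ with hi | hi
    · exact (mul_pos (hlam i) (hcpos i hi)).le
    · rw [hcnull i hi, mul_zero]
  have hLpos : 0 < L := by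
    set i0 : Fin K := ⟨0, hK⟩
    have h1 : lam i0 * c i0 ≤ L :=
      Finset.single_le_sum (fun i _ => hlc i) (Finset.mem_univ i0)
    have h2 : 0 < lam i0 * c i0 := mul_pos (hlam i0) (hcpos i0 hℓ)
    linarith
  -- bounds on G
  have hGlb : ∀ t : ℝ, 0 ≤ t → τ * Real.exp (-(t/2)) ≤ G t := by
    intro t ht
    have haux := aux_lower hK hτ ht (K := K)
    calc τ * Real.exp (-(t/2))
        = (ENNReal.ofReal (τ * Real.exp (-(t/2)))).toReal :=
          (ENNReal.toReal_ofReal (by positivity)).symm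
      _ ≤ G t := by
          rw [hG t]
          apply ENNReal.toReal_mono (measure_ne_top _ _)
          simpa only [hT] using haux
  have hGpos : ∀ t : ℝ, 0 ≤ t → 0 < G t := by
    intro t ht
    exact lt_of_lt_of_le (by positivity) (hGlb t ht)
  have hGub : ∀ t : ℝ, 1 < t → G t ≤ Real.exp (1/2 - t/2) * t ^ K := by
    intro t ht
    have haux := aux_upper hτ0 hτ1 ht (K := K)
    calc G t ≤ (ENNReal.ofReal (Real.exp (1/2 - t/2) * t ^ K)).toReal := by
          rw [hG t]
          apply ENNReal.toReal_mono ENNReal.ofReal_ne_top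
          simpa only [hT] using haux
      _ = Real.exp (1/2 - t/2) * t ^ K :=
          ENNReal.toReal_ofReal
            (mul_nonneg (Real.exp_nonneg _) (pow_nonneg (by linarith) K))
  -- a.s. per-coordinate limits
  have hcoord : ∀ i : Fin K, ∀ᵐ ω ∂μ,
      Tendsto (fun n : ℕ => max (-2 * Real.log (p n i ω) + 2 * Real.log τ) 0 / n) atTop
        (nhds (lam i * c i)) := by
    intro i
    rcases lt_or_ge (i:ℕ) ℓ with hi | hi
    · filter_upwards [hslope i hi] with ω hω
      exact signal_term_tendsto (nseq i) (lam i) (c i) (hlam i) (hcpos i hi) (hn i)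
        (fun n => p n i ω) hω τ
    · have h0 : lam i * c i = 0 := by rw [hcnull i hi, mul_zero]
      rw [h0]
      exact null_term_tendsto μ (fun n => p n i) (fun n => hmeas n i)
        (fun n ω => hval n i ω) (hnull i hi) hτ
  filter_upwards [(ae_all_iff).2 hcoord] with ω hω
  -- the statistic along the sample path
  set Tn : ℕ → ℝ := fun n => ∑ i : Fin K, max (-2 * Real.log (p n i ω) + 2 * Real.log τ) 0
    with hTndef
  have hTnn : ∀ n, T (fun i => p n i ω) = Tn n := fun n => hT _
  have hTnonneg : ∀ n, 0 ≤ Tn n :=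
    fun n => Finset.sum_nonneg fun i _ => le_max_right _ _
  have hqn : ∀ n, q n ω = G (Tn n) := fun n => by rw [hq, hTnn]
  have hLlim : Tendsto (fun n : ℕ => Tn n / n) atTop (nhds L) := by
    have h := tendsto_finset_sum Finset.univ (fun i (_ : i ∈ Finset.univ) => hω i)
    apply h.congr
    intro n
    rw [hTndef, Finset.sum_div]
  -- Tn tends to infinity
  have hTatTop : Tendsto Tn atTop atTop := by
    refine tendsto_atTop_mono' atTop ?_
      ((tendsto_natCast_atTop_atTop (R := ℝ)).atTop_mul_const (half_pos hLpos))
    filter_upwards [hLlim.eventually (eventually_gt_nhds (half_lt_self hLpos)),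
      eventually_ge_atTop 1] with n h1 h2
    have hnpos : (0:ℝ) < n := by exact_mod_cast h2
    show (n:ℝ) * (L/2) ≤ Tn n
    have h3 : L/2 * (n:ℝ) < Tn n := (lt_div_iff₀ hnpos).1 h1
    nlinarith [h3]
  have hTgt1 : ∀ᶠ n in atTop, 1 < Tn n := hTatTop.eventually (eventually_gt_atTop 1)
  -- log Tn / n → 0
  have hlogT : Tendsto (fun n : ℕ => Real.log (Tn n) / n) atTop (nhds 0) := by
    have h1 : Tendsto (fun n : ℕ => Real.log (Tn n) / Tn n) atTop (nhds 0) :=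
      (Real.isLittleO_log_id_atTop.comp_tendsto hTatTop).tendsto_div_nhds_zero
    have h2 := h1.mul hLlim
    rw [zero_mul] at h2
    apply h2.congr'
    filter_upwards [hTgt1] with n hn1
    have hTne : Tn n ≠ 0 := by linarith
    field_simp
  -- squeeze
  have hup : Tendsto (fun n : ℕ => Tn n / n - 2 * Real.log τ / n) atTop (nhds L) := by
    have := hLlim.sub (tendsto_const_div_atTop_nhds_zero_nat (2 * Real.log τ))
    rwa [sub_zero] at this
  have hlow : Tendsto (fun n : ℕ => Tn n / n - 1 / n - 2 * K * (Real.log (Tn n) / n))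
      atTop (nhds L) := by
    have := (hLlim.sub (tendsto_const_div_atTop_nhds_zero_nat 1)).sub
      (hlogT.const_mul (2 * (K:ℝ)))
    rwa [sub_zero, mul_zero, sub_zero] at this
  apply tendsto_of_tendsto_of_tendsto_of_le_of_le' hlow hup
  · -- lower bound
    filter_upwards [hTgt1, eventually_ge_atTop 1] with n h1 h2
    have hnpos : (0:ℝ) < n := by exact_mod_cast h2
    have hT0 : (0:ℝ) ≤ Tn n := hTnonneg n
    have hGp : 0 < G (Tn n) := hGpos _ hT0
    have hub := hGub (Tn n) h1
    have hlog : Real.log (G (Tn n)) ≤ 1/2 - Tn n/2 + K * Real.log (Tn n) := by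
      calc Real.log (G (Tn n)) ≤ Real.log (Real.exp (1/2 - Tn n/2) * Tn n ^ K) :=
            Real.log_le_log hGp hub
        _ = 1/2 - Tn n/2 + K * Real.log (Tn n) := by
            rw [Real.log_mul (Real.exp_ne_zero _) (by positivity : Tn n ^ K ≠ 0),
              Real.log_exp, Real.log_pow]
    rw [hqn n]
    have hmul := mul_le_mul_of_nonneg_left hlog (by positivity : (0:ℝ) ≤ 2/n)
    have hid : 2/(n:ℝ) * (1/2 - Tn n/2 + K * Real.log (Tn n))
        = -(Tn n / n - 1/n - 2 * K * (Real.log (Tn n) / n)) + 0 := by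
      field_simp
      ring
    nlinarith [hmul, hid]
  · -- upper bound
    filter_upwards [eventually_ge_atTop 1] with n h2
    have hnpos : (0:ℝ) < n := by exact_mod_cast h2
    have hT0 : (0:ℝ) ≤ Tn n := hTnonneg n
    have hGp : 0 < G (Tn n) := hGpos _ hT0
    have hlb := hGlb (Tn n) hT0
    have hlog : Real.log τ + -(Tn n/2) ≤ Real.log (G (Tn n)) := by
      calc Real.log τ + -(Tn n/2)
          = Real.log (τ * Real.exp (-(Tn n/2))) := by
            rw [Real.log_mul hτ0.ne' (Real.exp_ne_zero _), Real.log_exp]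
        _ ≤ Real.log (G (Tn n)) := Real.log_le_log (by positivity) hlb
    rw [hqn n]
    have hmul := mul_le_mul_of_nonneg_left hlog (by positivity : (0:ℝ) ≤ 2/n)
    have hid : 2/(n:ℝ) * (Real.log τ + -(Tn n/2))
        = -(Tn n / n - 2 * Real.log τ / n) + 0 := by
      field_simp
      ring
    nlinarith [hmul, hid]
end

section
/- Fix an integer K ≥ 1 and τ ∈ (0,1]. Define, for u ∈ (0,1)^K, the truncated Fisher statistics T_hard(u) = ∑_{i=1}^K (−2·log u_i)·1{u_i ≤ τ} and T_soft(u) = ∑_{i=1}^K max(−2·log u_i + 2·log τ, 0), and their null survival functions G_hard(t) = μ_K{u : T_hard(u) ≥ t} and G_soft(t) = μ_K{u : T_soft(u) ≥ t}. Then log(G_hard(t))/t → −1/2 and log(G_soft(t))/t → −1/2 as t → ∞. -/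
open MeasureTheory Filter Set ProbabilityTheory
open scoped ENNReal


lemma TF_lintegral_pi_pow {μ1 : Measure ℝ} [SigmaFinite μ1] :
    ∀ (K : ℕ) (f : ℝ → ℝ≥0∞), Measurable f →
    ∫⁻ u : Fin K → ℝ, ∏ i, f (u i) ∂(Measure.pi fun _ => μ1) = (∫⁻ x, f x ∂μ1) ^ K := by
  intro K
  induction K with
  | zero =>
    intro f hf
    simp [lintegral_one, Measure.pi_univ]
  | succ n ih =>
    intro f hf
    have hmp := (measurePreserving_piFinSuccAbove (fun _ : Fin (n + 1) => μ1) 0).symm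
    have hmeas : Measurable fun u : Fin (n + 1) → ℝ => ∏ i, f (u i) :=
      Finset.measurable_prod _ fun i _ => hf.comp (measurable_pi_apply i)
    rw [← hmp.lintegral_comp hmeas]
    simp only [MeasurableEquiv.piFinSuccAbove_symm_apply, Fin.insertNthEquiv,
      Equiv.coe_fn_mk, Fin.insertNth_zero, Fin.prod_univ_succ, Fin.cons_zero, Fin.cons_succ, cast_eq]
    have hg : Measurable fun y : Fin n → ℝ => ∏ x : Fin n, f (y x) :=
      Finset.measurable_prod _ fun i _ => hf.comp (measurable_pi_apply i)
    rw [show (fun a : ℝ × (Fin n → ℝ) => f a.1 * ∏ x : Fin n, f (a.2 x))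
        = fun a => f a.1 * (fun y : Fin n → ℝ => ∏ x : Fin n, f (y x)) a.2 from rfl]
    rw [lintegral_prod_mul hf.aemeasurable hg.aemeasurable, ih f hf, pow_succ]
    ring

lemma TF_onedim_bound {τ l : ℝ} (hτ : τ ∈ Ioc (0:ℝ) 1) (hl : l ∈ Ioo (0:ℝ) (1/2)) :
    ∫⁻ x, ENNReal.ofReal (Real.exp (l * max (-2 * Real.log x + 2 * Real.log τ) 0))
      ∂(volume.restrict (Icc (0:ℝ) 1)) ≤ ENNReal.ofReal (1 + 1 / (1 - 2 * l)) := by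
  obtain ⟨hl0, hl2⟩ := hl
  have hr : (-1 : ℝ) < -(2 * l) := by linarith
  have hτ0 := hτ.1
  rw [← Measure.restrict_congr_set Ioc_ae_eq_Icc]
  have key : ∀ x ∈ Ioc (0:ℝ) 1,
      ENNReal.ofReal (Real.exp (l * max (-2 * Real.log x + 2 * Real.log τ) 0))
      ≤ 1 + ENNReal.ofReal (x ^ (-(2 * l)) : ℝ) := by
    intro x hx
    have hx0 : 0 < x := hx.1
    have hlogτ : Real.log τ ≤ 0 := Real.log_nonpos hτ0.le hτ.2
    have h1 : Real.exp (l * max (-2 * Real.log x + 2 * Real.log τ) 0)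
        ≤ 1 + x ^ (-(2 * l)) := by
      rw [mul_max_of_nonneg _ _ hl0.le, mul_zero, Real.exp_monotone.map_max]
      have h2 : Real.exp (l * (-2 * Real.log x + 2 * Real.log τ)) ≤ x ^ (-(2 * l)) := by
        rw [Real.rpow_def_of_pos hx0, Real.exp_le_exp]
        nlinarith [hlogτ]
      have h3 : (0:ℝ) ≤ x ^ (-(2 * l)) := Real.rpow_nonneg hx0.le _
      rw [Real.exp_zero]
      exact max_le (by linarith) (by linarith)
    calc ENNReal.ofReal (Real.exp (l * max (-2 * Real.log x + 2 * Real.log τ) 0))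
        ≤ ENNReal.ofReal (1 + x ^ (-(2 * l))) := ENNReal.ofReal_le_ofReal h1
      _ = 1 + ENNReal.ofReal (x ^ (-(2 * l)) : ℝ) := by
          rw [ENNReal.ofReal_add zero_le_one (Real.rpow_nonneg hx0.le _), ENNReal.ofReal_one]
  have hint : IntegrableOn (fun x : ℝ => x ^ (-(2 * l))) (Ioc (0:ℝ) 1) volume := by
    have := intervalIntegral.intervalIntegrable_rpow' (a := 0) (b := 1) hr
    rwa [intervalIntegrable_iff_integrableOn_Ioc_of_le (by norm_num)] at this
  have hval : ∫ x in Ioc (0:ℝ) 1, x ^ (-(2 * l)) = 1 / (1 - 2 * l) := by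
    rw [← intervalIntegral.integral_of_le (by norm_num : (0:ℝ) ≤ 1)]
    rw [integral_rpow (Or.inl hr)]
    rw [Real.one_rpow, Real.zero_rpow (by linarith)]
    norm_num
    ring
  calc ∫⁻ x in Ioc (0:ℝ) 1, ENNReal.ofReal (Real.exp (l * max (-2 * Real.log x + 2 * Real.log τ) 0)) ∂volume
      ≤ ∫⁻ x in Ioc (0:ℝ) 1, (1 + ENNReal.ofReal (x ^ (-(2 * l)) : ℝ)) ∂volume := by
        apply setLIntegral_mono (by fun_prop) key
    _ = volume (Ioc (0:ℝ) 1) + ∫⁻ x in Ioc (0:ℝ) 1, ENNReal.ofReal (x ^ (-(2 * l)) : ℝ) ∂volume := by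
        rw [lintegral_add_left measurable_const, setLIntegral_one]
    _ = 1 + ENNReal.ofReal (1 / (1 - 2 * l)) := by
        have hnn : 0 ≤ᵐ[volume.restrict (Ioc (0:ℝ) 1)] fun x : ℝ => x ^ (-(2 * l)) :=
          ae_restrict_of_forall_mem measurableSet_Ioc fun x hx => Real.rpow_nonneg hx.1.le _
        rw [← ofReal_integral_eq_lintegral_ofReal hint hnn, hval, Real.volume_Ioc]
        norm_num
    _ = ENNReal.ofReal (1 + 1 / (1 - 2 * l)) := by
        have h12 : (0:ℝ) < 1 - 2 * l := by linarith
        rw [ENNReal.ofReal_add zero_le_one (by positivity), ENNReal.ofReal_one]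

lemma TF_lower {K : ℕ} (hK : 1 ≤ K) {τ : ℝ} (hτ : τ ∈ Ioc (0:ℝ) 1) (t : ℝ) (ht : 0 ≤ t) :
    ENNReal.ofReal (τ * Real.exp (-(t / 2)))
    ≤ (Measure.pi fun _ : Fin K => volume.restrict (Icc (0:ℝ) 1))
      {u | t ≤ ∑ i, max (-2 * Real.log (u i) + 2 * Real.log τ) 0} := by
  obtain ⟨hτ0, hτ1⟩ := hτ
  set c : ℝ := τ * Real.exp (-(t / 2)) with hc
  have hc0 : 0 < c := by positivity
  have hc1 : c ≤ 1 := by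
    have h1 : Real.exp (-(t / 2)) ≤ 1 := Real.exp_le_one_iff.mpr (by linarith)
    nlinarith
  have hlogc : Real.log c = Real.log τ + (-(t / 2)) := by
    rw [hc, Real.log_mul (ne_of_gt hτ0) (ne_of_gt (Real.exp_pos _)), Real.log_exp]
  set i0 : Fin K := ⟨0, hK⟩ with hi0
  classical
  set s : Fin K → Set ℝ := fun i => if i = i0 then Ioc 0 c else univ with hs
  have hsub : Set.pi univ s ⊆
      {u : Fin K → ℝ | t ≤ ∑ i, max (-2 * Real.log (u i) + 2 * Real.log τ) 0} := by
    intro u hu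
    have hu0 : u i0 ∈ Ioc 0 c := by
      have := hu i0 (mem_univ i0); simpa [hs] using this
    have hlog : Real.log (u i0) ≤ Real.log c := Real.log_le_log hu0.1 hu0.2
    have hterm : t ≤ max (-2 * Real.log (u i0) + 2 * Real.log τ) 0 := by
      refine le_trans ?_ (le_max_left _ _)
      rw [hlogc] at hlog
      linarith
    refine le_trans hterm ?_
    exact Finset.single_le_sum (f := fun i => max (-2 * Real.log (u i) + 2 * Real.log τ) 0)
      (fun i _ => le_max_right _ _) (Finset.mem_univ i0)
  refine le_trans ?_ (measure_mono hsub)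
  rw [Measure.pi_pi]
  have h1 : (volume.restrict (Icc (0:ℝ) 1)) (Ioc 0 c) = ENNReal.ofReal c := by
    rw [Measure.restrict_apply measurableSet_Ioc,
      inter_eq_self_of_subset_left (Ioc_subset_Icc_self.trans (Icc_subset_Icc le_rfl hc1)),
      Real.volume_Ioc, sub_zero]
  have h2 : (volume.restrict (Icc (0:ℝ) 1)) univ = 1 := by
    rw [Measure.restrict_apply_univ, Real.volume_Icc]; norm_num
  rw [Finset.prod_eq_single i0 (fun b _ hb => by simp [hs, hb, h2])
    (fun h => absurd (Finset.mem_univ i0) h)]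
  simp [hs, h1]



lemma TF_chernoff {K : ℕ} {τ l : ℝ} (hτ : τ ∈ Ioc (0:ℝ) 1) (hl : l ∈ Ioo (0:ℝ) (1/2))
    (t : ℝ) :
    (Measure.pi fun _ : Fin K => volume.restrict (Icc (0:ℝ) 1))
      {u | t ≤ ∑ i, max (-2 * Real.log (u i) + 2 * Real.log τ) 0}
    ≤ ENNReal.ofReal ((1 + 1 / (1 - 2 * l)) ^ K * Real.exp (-(l * t))) := by
  obtain ⟨hl0, hl2⟩ := hl
  set μ := Measure.pi fun _ : Fin K => volume.restrict (Icc (0:ℝ) 1) with hμ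
  set g : ℝ → ℝ≥0∞ := fun x =>
    ENNReal.ofReal (Real.exp (l * max (-2 * Real.log x + 2 * Real.log τ) 0)) with hg
  have hgm : Measurable g := by
    apply ENNReal.measurable_ofReal.comp
    apply Real.measurable_exp.comp
    exact measurable_const.mul (((measurable_const.mul
      (Real.measurable_log)).add measurable_const).max measurable_const)
  have hfm : Measurable fun u : Fin K → ℝ => ∏ i, g (u i) :=
    Finset.measurable_prod _ fun i _ => hgm.comp (measurable_pi_apply i)
  have hfeq : ∀ u : Fin K → ℝ, (∏ i, g (u i)) =
      ENNReal.ofReal (Real.exp (l * ∑ i, max (-2 * Real.log (u i) + 2 * Real.log τ) 0)) := by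
    intro u
    rw [Finset.mul_sum, Real.exp_sum,
      ENNReal.ofReal_prod_of_nonneg (fun _ _ => (Real.exp_pos _).le)]
  have hset : {u : Fin K → ℝ | t ≤ ∑ i, max (-2 * Real.log (u i) + 2 * Real.log τ) 0}
      = {u | ENNReal.ofReal (Real.exp (l * t)) ≤ ∏ i, g (u i)} := by
    ext u
    rw [mem_setOf_eq, mem_setOf_eq, hfeq u,
      ENNReal.ofReal_le_ofReal_iff (Real.exp_pos _).le, Real.exp_le_exp,
      mul_le_mul_iff_right₀ hl0]
  have hmarkov := mul_meas_ge_le_lintegral₀ hfm.aemeasurable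
    (ENNReal.ofReal (Real.exp (l * t))) (μ := μ)
  have hint : ∫⁻ u, ∏ i, g (u i) ∂μ ≤ ENNReal.ofReal ((1 + 1 / (1 - 2 * l)) ^ K) := by
    have h12 : (0:ℝ) < 1 - 2 * l := by linarith
    have hM : (0:ℝ) ≤ 1 + 1 / (1 - 2 * l) := by positivity
    rw [hμ, TF_lintegral_pi_pow K g hgm, ENNReal.ofReal_pow hM]
    exact pow_le_pow_left' (TF_onedim_bound hτ ⟨hl0, hl2⟩) K
  have hε0 : ENNReal.ofReal (Real.exp (l * t)) ≠ 0 := by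
    simp [ENNReal.ofReal_eq_zero, not_le, Real.exp_pos]
  have hεtop : ENNReal.ofReal (Real.exp (l * t)) ≠ ⊤ := ENNReal.ofReal_ne_top
  rw [hset]
  have hdiv : μ {u | ENNReal.ofReal (Real.exp (l * t)) ≤ ∏ i, g (u i)}
      ≤ (∫⁻ u, ∏ i, g (u i) ∂μ) / ENNReal.ofReal (Real.exp (l * t)) :=
    (ENNReal.le_div_iff_mul_le (Or.inl hε0) (Or.inl hεtop)).mpr (by rwa [mul_comm] at hmarkov)
  calc μ {u | ENNReal.ofReal (Real.exp (l * t)) ≤ ∏ i, g (u i)}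
      ≤ (∫⁻ u, ∏ i, g (u i) ∂μ) / ENNReal.ofReal (Real.exp (l * t)) := hdiv
    _ ≤ ENNReal.ofReal ((1 + 1 / (1 - 2 * l)) ^ K) / ENNReal.ofReal (Real.exp (l * t)) :=
        ENNReal.div_le_div_right hint _
    _ = ENNReal.ofReal ((1 + 1 / (1 - 2 * l)) ^ K * Real.exp (-(l * t))) := by
        rw [← ENNReal.ofReal_div_of_pos (Real.exp_pos _), Real.exp_neg, div_eq_mul_inv]

lemma TF_tail_tendsto (G : ℝ → ℝ) (a : ℝ) (ha : 0 < a)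
    (hlow : ∀ t, 0 ≤ t → a * Real.exp (-(t / 2)) ≤ G t)
    (hupp : ∀ l, l ∈ Ioo (0:ℝ) (1/2) →
      ∃ C, 0 < C ∧ ∀ t, 0 ≤ t → G t ≤ C * Real.exp (-(l * t))) :
    Tendsto (fun t : ℝ => Real.log (G t) / t) atTop (nhds (-(1 / 2))) := by
  rw [Metric.tendsto_atTop]
  intro ε hε
  set m := min ε (1/2) with hm
  have hm0 : 0 < m := lt_min hε one_half_pos
  have hmε : m ≤ ε := min_le_left _ _
  have hm2 : m ≤ 1/2 := min_le_right _ _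
  set l := 1/2 - m/2 with hldef
  have hl : l ∈ Ioo (0:ℝ) (1/2) := ⟨by rw [hldef]; linarith, by rw [hldef]; linarith⟩
  obtain ⟨C, hC0, hCb⟩ := hupp l hl
  refine ⟨max 1 (max (2 * |Real.log C| / ε + 1) (|Real.log a| / ε + 1)), fun t ht => ?_⟩
  have ht1 : (1:ℝ) ≤ t := le_trans (le_max_left _ _) ht
  have ht0 : (0:ℝ) < t := by linarith
  have htC : 2 * |Real.log C| / ε + 1 ≤ t :=
    le_trans ((le_max_left _ _).trans (le_max_right _ _)) ht
  have hta : |Real.log a| / ε + 1 ≤ t :=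
    le_trans ((le_max_right _ _).trans (le_max_right _ _)) ht
  have hG0 : 0 < G t := lt_of_lt_of_le (by positivity) (hlow t ht0.le)
  rw [Real.dist_eq, sub_neg_eq_add]
  have habsC : |Real.log C| / t < ε / 2 := by
    rw [div_lt_iff₀ ht0]
    have h1 : 2 * |Real.log C| / ε < t := by linarith
    rw [div_lt_iff₀ hε] at h1
    linarith
  have habsa : |Real.log a| / t < ε := by
    rw [div_lt_iff₀ ht0]
    have h1 : |Real.log a| / ε < t := by linarith
    rw [div_lt_iff₀ hε] at h1
    nlinarith [abs_nonneg (Real.log a)]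
  have hup : Real.log (G t) / t + 1 / 2 < ε := by
    have h1 : Real.log (G t) ≤ Real.log C + -(l * t) := by
      calc Real.log (G t) ≤ Real.log (C * Real.exp (-(l * t))) :=
            Real.log_le_log hG0 (hCb t ht0.le)
        _ = Real.log C + -(l * t) := by
            rw [Real.log_mul (ne_of_gt hC0) (ne_of_gt (Real.exp_pos _)), Real.log_exp]
    have h2 : Real.log (G t) / t ≤ (Real.log C + -(l * t)) / t := by gcongr
    have h3 : (Real.log C + -(l * t)) / t + 1 / 2 = Real.log C / t + m / 2 := by
      rw [hldef]; field_simp; ring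
    have h4 : Real.log C / t ≤ |Real.log C| / t := by
      gcongr; exact le_abs_self _
    linarith
  have hlo : -ε < Real.log (G t) / t + 1 / 2 := by
    have h1 : Real.log a + -(t / 2) ≤ Real.log (G t) := by
      calc Real.log a + -(t / 2)
          = Real.log (a * Real.exp (-(t / 2))) := by
            rw [Real.log_mul (ne_of_gt ha) (ne_of_gt (Real.exp_pos _)), Real.log_exp]
        _ ≤ Real.log (G t) := Real.log_le_log (by positivity) (hlow t ht0.le)
    have h2 : (Real.log a + -(t / 2)) / t ≤ Real.log (G t) / t := by gcongr
    have h3 : (Real.log a + -(t / 2)) / t + 1 / 2 = Real.log a / t := by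
      field_simp; ring
    have h4 : -(|Real.log a| / t) ≤ Real.log a / t := by
      rw [← neg_div]; gcongr; exact neg_abs_le _
    linarith
  exact abs_lt.mpr ⟨hlo, hup⟩

/-- Log-tail asymptotics of the null distributions of the truncated Fisher statistics:
for any `τ ∈ (0,1]`, both the hard-thresholded and the soft-thresholded truncated
Fisher statistics have null survival functions `G` satisfying `log G(t) / t → -1/2`. -/
theorem truncated_fisher_null_tail
    {K : ℕ} (hK : 1 ≤ K) (τ : ℝ) (hτ : τ ∈ Ioc (0 : ℝ) 1)
    (Thard Tsoft : (Fin K → ℝ) → ℝ)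
    (hThard : ∀ u : Fin K → ℝ, Thard u =
      ∑ i : Fin K, if u i ≤ τ then -2 * Real.log (u i) else 0)
    (hTsoft : ∀ u : Fin K → ℝ, Tsoft u =
      ∑ i : Fin K, max (-2 * Real.log (u i) + 2 * Real.log τ) 0)
    (Ghard Gsoft : ℝ → ℝ)
    (hGhard : ∀ t, Ghard t =
      ((Measure.pi fun _ : Fin K => volume.restrict (Icc (0 : ℝ) 1))
        {u | t ≤ Thard u}).toReal)
    (hGsoft : ∀ t, Gsoft t =
      ((Measure.pi fun _ : Fin K => volume.restrict (Icc (0 : ℝ) 1))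
        {u | t ≤ Tsoft u}).toReal) :
    Tendsto (fun t : ℝ => Real.log (Ghard t) / t) atTop (nhds (-(1 / 2))) ∧
    Tendsto (fun t : ℝ => Real.log (Gsoft t) / t) atTop (nhds (-(1 / 2))) := by
  obtain ⟨hτ0, hτ1⟩ := hτ
  set μ := Measure.pi fun _ : Fin K => volume.restrict (Icc (0 : ℝ) 1) with hμdef
  have hlogτ : Real.log τ ≤ 0 := Real.log_nonpos hτ0.le hτ1
  haveI hprob : IsProbabilityMeasure μ := by
    constructor
    rw [hμdef, Measure.pi_univ]
    simp [Measure.restrict_apply_univ, Real.volume_Icc]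
  -- set rewriting
  have hsetS : ∀ t : ℝ, {u : Fin K → ℝ | t ≤ Tsoft u}
      = {u | t ≤ ∑ i, max (-2 * Real.log (u i) + 2 * Real.log τ) 0} := by
    intro t; ext u; rw [mem_setOf_eq, mem_setOf_eq, hTsoft u]
  -- lower bound for Gsoft
  have hsoftlow : ∀ t, 0 ≤ t → τ * Real.exp (-(t / 2)) ≤ Gsoft t := by
    intro t ht
    rw [hGsoft t, hsetS t]
    calc τ * Real.exp (-(t / 2))
        = (ENNReal.ofReal (τ * Real.exp (-(t / 2)))).toReal :=
          (ENNReal.toReal_ofReal (by positivity)).symm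
      _ ≤ _ := ENNReal.toReal_mono (measure_ne_top μ _) (TF_lower hK ⟨hτ0, hτ1⟩ t ht)
  -- upper bound for Gsoft
  have hsoftupp : ∀ l ∈ Ioo (0:ℝ) (1/2), ∃ C, 0 < C ∧
      ∀ t, 0 ≤ t → Gsoft t ≤ C * Real.exp (-(l * t)) := by
    intro l hl
    have h12 : (0:ℝ) < 1 - 2 * l := by have := hl.2; linarith
    refine ⟨(1 + 1 / (1 - 2 * l)) ^ K, by positivity, fun t ht => ?_⟩
    rw [hGsoft t, hsetS t]
    calc (μ {u | t ≤ ∑ i, max (-2 * Real.log (u i) + 2 * Real.log τ) 0}).toReal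
        ≤ (ENNReal.ofReal ((1 + 1 / (1 - 2 * l)) ^ K * Real.exp (-(l * t)))).toReal :=
          ENNReal.toReal_mono ENNReal.ofReal_ne_top (TF_chernoff ⟨hτ0, hτ1⟩ hl t)
      _ = (1 + 1 / (1 - 2 * l)) ^ K * Real.exp (-(l * t)) :=
          ENNReal.toReal_ofReal (by positivity)
  have hsoft : Tendsto (fun t : ℝ => Real.log (Gsoft t) / t) atTop (nhds (-(1 / 2))) :=
    TF_tail_tendsto Gsoft τ hτ0 hsoftlow hsoftupp
  -- box a.e. statement
  have hboxm : MeasurableSet (Set.pi univ fun _ : Fin K => Icc (0:ℝ) 1) :=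
    MeasurableSet.univ_pi fun _ => measurableSet_Icc
  have hboxfull : μ (Set.pi univ fun _ : Fin K => Icc (0:ℝ) 1) = 1 := by
    rw [hμdef, Measure.pi_pi]
    simp [Measure.restrict_apply_univ, Real.volume_Icc]
  have hbox : ∀ᵐ u ∂μ, ∀ i, u i ∈ Icc (0:ℝ) 1 := by
    have hc : μ (Set.pi univ fun _ : Fin K => Icc (0:ℝ) 1)ᶜ = 0 := by
      rw [measure_compl hboxm (measure_ne_top _ _), hboxfull, measure_univ, tsub_self]
    have heq : {u : Fin K → ℝ | ¬ ∀ i, u i ∈ Icc (0:ℝ) 1}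
        = (Set.pi univ fun _ : Fin K => Icc (0:ℝ) 1)ᶜ := by
      ext u
      simp only [mem_setOf_eq, mem_compl_iff, Set.mem_pi, mem_univ, true_implies]
    rw [ae_iff, heq]
    exact hc
  -- soft ≤ hard on the box
  have hsoft_le_hard : ∀ u : Fin K → ℝ, (∀ i, u i ∈ Icc (0:ℝ) 1) → Tsoft u ≤ Thard u := by
    intro u hu
    rw [hTsoft u, hThard u]
    apply Finset.sum_le_sum
    intro i _
    obtain ⟨h0, h1⟩ := hu i
    by_cases h : u i ≤ τ
    · simp only [h, if_true]
      have hlogu : Real.log (u i) ≤ 0 := Real.log_nonpos h0 h1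
      exact max_le (by linarith) (by linarith)
    · simp only [h, if_false]
      push_neg at h
      have h2 : Real.log τ ≤ Real.log (u i) := Real.log_le_log hτ0 h.le
      exact max_le (by linarith) le_rfl
  have hmono1 : ∀ t : ℝ, μ {u | t ≤ Tsoft u} ≤ μ {u | t ≤ Thard u} := by
    intro t
    apply measure_mono_ae
    filter_upwards [hbox] with u hu
    intro hts
    exact le_trans hts (hsoft_le_hard u hu)
  -- hard ≤ soft + constant, everywhere
  set C0 : ℝ := (K : ℝ) * (-(2 * Real.log τ)) with hC0def
  have hC0 : 0 ≤ C0 := by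
    apply mul_nonneg (Nat.cast_nonneg _); linarith
  have hhard_le : ∀ u : Fin K → ℝ, Thard u ≤ Tsoft u + C0 := by
    intro u
    have hconst : C0 = ∑ _i : Fin K, (-(2 * Real.log τ)) := by
      rw [Finset.sum_const, Finset.card_univ, Fintype.card_fin, nsmul_eq_mul, hC0def]
    rw [hThard u, hTsoft u, hconst, ← Finset.sum_add_distrib]
    apply Finset.sum_le_sum
    intro i _
    by_cases h : u i ≤ τ
    · simp only [h, if_true]
      have := le_max_left (-2 * Real.log (u i) + 2 * Real.log τ) 0
      linarith
    · simp only [h, if_false]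
      have := le_max_right (-2 * Real.log (u i) + 2 * Real.log τ) 0
      linarith
  -- lower bound for Ghard
  have hhardlow : ∀ t, 0 ≤ t → τ * Real.exp (-(t / 2)) ≤ Ghard t := by
    intro t ht
    refine le_trans (hsoftlow t ht) ?_
    rw [hGsoft t, hGhard t]
    exact ENNReal.toReal_mono (measure_ne_top μ _) (hmono1 t)
  -- upper bound for Ghard
  have hhardupp : ∀ l ∈ Ioo (0:ℝ) (1/2), ∃ C, 0 < C ∧
      ∀ t, 0 ≤ t → Ghard t ≤ C * Real.exp (-(l * t)) := by
    intro l hl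
    have h12 : (0:ℝ) < 1 - 2 * l := by have := hl.2; linarith
    refine ⟨(1 + 1 / (1 - 2 * l)) ^ K * Real.exp (l * C0), by positivity, fun t ht => ?_⟩
    have hsub : {u : Fin K → ℝ | t ≤ Thard u}
        ⊆ {u | t - C0 ≤ ∑ i, max (-2 * Real.log (u i) + 2 * Real.log τ) 0} := by
      intro u hu
      rw [mem_setOf_eq] at hu ⊢
      have := hhard_le u
      rw [hTsoft u] at this
      linarith
    rw [hGhard t]
    calc (μ {u | t ≤ Thard u}).toReal
        ≤ (μ {u | t - C0 ≤ ∑ i, max (-2 * Real.log (u i) + 2 * Real.log τ) 0}).toReal :=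
          ENNReal.toReal_mono (measure_ne_top μ _) (measure_mono hsub)
      _ ≤ (ENNReal.ofReal ((1 + 1 / (1 - 2 * l)) ^ K
            * Real.exp (-(l * (t - C0))))).toReal :=
          ENNReal.toReal_mono ENNReal.ofReal_ne_top (TF_chernoff ⟨hτ0, hτ1⟩ hl (t - C0))
      _ = (1 + 1 / (1 - 2 * l)) ^ K * Real.exp (-(l * (t - C0))) :=
          ENNReal.toReal_ofReal (by positivity)
      _ = (1 + 1 / (1 - 2 * l)) ^ K * Real.exp (l * C0) * Real.exp (-(l * t)) := by
          rw [show -(l * (t - C0)) = l * C0 + -(l * t) by ring, Real.exp_add, ← mul_assoc]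
  have hhard : Tendsto (fun t : ℝ => Real.log (Ghard t) / t) atTop (nhds (-(1 / 2))) :=
    TF_tail_tendsto Ghard τ hτ0 hhardlow hhardupp
  exact ⟨hhard, hsoft⟩
end

section
/- Fix an integer K ≥ 1 and an integer ℓ with 1 ≤ ℓ ≤ K. Fix reals λ_1,…,λ_K > 0 and c_1,…,c_ℓ > 0, and set c_i = 0 for ℓ < i ≤ K. Fix sequences n_1,…,n_K : ℕ → ℕ with n_i(n)/n → λ_i as n → ∞. On a probability space, for each n let p_1^{(n)},…,p_K^{(n)} be random variables with values in (0,1) such that: (i) for each 1 ≤ i ≤ ℓ, −(2/n_i(n))·log p_i^{(n)} → c_i almost surely as n → ∞; (ii) for each ℓ < i ≤ K and every n, p_i^{(n)} is uniformly distributed on (0,1). Define the Cauchy combination statistic T_n = (1/K)·∑_{i=1}^K tan(π·(1/2 − p_i^{(n)})) and its combined p-value q_n = 1/2 − arctan(T_n)/π. Then −(2/n)·log q_n → max_{1≤i≤ℓ} λ_i·c_i almost surely as n → ∞; in particular, when ℓ ≥ 2 the Cauchy combination test is not asymptotically Bahadur optimal since max_{1≤i≤ℓ} λ_i c_i < ∑_{i=1}^ℓ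 λ_i c_i. -/
open MeasureTheory Filter Set ProbabilityTheory

section AuxCauchyComb
open Real Filter Set MeasureTheory


-- tan x ≤ 2x on [0, π/4]
lemma aux_tan_le_two_mul {x : ℝ} (h0 : 0 ≤ x) (h1 : x ≤ Real.pi / 4) :
    Real.tan x ≤ 2 * x := by
  have hpi := Real.pi_pos
  have hcos : (1:ℝ)/2 ≤ Real.cos x := by
    have h2 : Real.cos (Real.pi/4) ≤ Real.cos x :=
      Real.cos_le_cos_of_nonneg_of_le_pi h0 (by linarith) h1
    rw [Real.cos_pi_div_four] at h2
    nlinarith [Real.sq_sqrt (by norm_num : (2:ℝ) ≥ 0), Real.sqrt_nonneg 2]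
  have hsin : Real.sin x ≤ x := Real.sin_le h0
  have hcpos : 0 < Real.cos x := by linarith
  rw [Real.tan_eq_sin_div_cos, div_le_iff₀ hcpos]
  nlinarith

-- cot bounds: for 0 < p ≤ 1/4, (2πp)⁻¹ ≤ tan(π(1/2-p)) ≤ (πp)⁻¹
lemma aux_cot_bounds {x : ℝ} (h0 : 0 < x) (h1 : x ≤ 1/4) :
    (2 * Real.pi * x)⁻¹ ≤ Real.tan (Real.pi * (1/2 - x)) ∧
    Real.tan (Real.pi * (1/2 - x)) ≤ (Real.pi * x)⁻¹ := by
  have hpi := Real.pi_pos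
  have he : Real.pi * (1/2 - x) = Real.pi/2 - Real.pi * x := by ring
  rw [he, Real.tan_pi_div_two_sub]
  have hx2 : Real.pi * x ≤ Real.pi / 4 := by nlinarith
  have hxp : 0 < Real.pi * x := by positivity
  have hlow : Real.pi * x ≤ Real.tan (Real.pi * x) :=
    (Real.lt_tan hxp (by linarith)).le
  have hhigh : Real.tan (Real.pi * x) ≤ 2 * (Real.pi * x) :=
    aux_tan_le_two_mul hxp.le hx2
  have htpos : 0 < Real.tan (Real.pi * x) := lt_of_lt_of_le hxp hlow
  constructor
  · rw [inv_le_inv₀ (by positivity) htpos]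
    calc Real.tan (Real.pi * x) ≤ 2 * (Real.pi * x) := hhigh
      _ = 2 * Real.pi * x := by ring
  · exact inv_anti₀ hxp hlow

-- q bounds: for 1 ≤ t, (2πt)⁻¹ ≤ 1/2 - arctan t / π ≤ (πt)⁻¹
lemma aux_q_bounds {t : ℝ} (ht : 1 ≤ t) :
    (2 * Real.pi * t)⁻¹ ≤ 1/2 - Real.arctan t / Real.pi ∧
    1/2 - Real.arctan t / Real.pi ≤ (Real.pi * t)⁻¹ := by
  have hpi := Real.pi_pos
  have ht0 : (0:ℝ) < t := by linarith
  have hinv : Real.arctan t⁻¹ = Real.pi/2 - Real.arctan t := Real.arctan_inv_of_pos ht0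
  have hqeq : 1/2 - Real.arctan t / Real.pi = Real.arctan t⁻¹ / Real.pi := by
    rw [hinv]; field_simp
  have hy0 : 0 < t⁻¹ := by positivity
  have hy1 : t⁻¹ ≤ 1 := by rw [inv_le_one_iff₀]; right; exact ht
  -- arctan y ≤ y
  have hub : Real.arctan t⁻¹ ≤ t⁻¹ := by
    have h := Real.lt_tan (by rw [← Real.arctan_zero]; exact Real.arctan_strictMono hy0) (Real.arctan_lt_pi_div_two _)
    rw [Real.tan_arctan] at h
    exact h.le
  -- y/2 ≤ arctan y
  have hlb : t⁻¹/2 ≤ Real.arctan t⁻¹ := by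
    have h1' : Real.tan (t⁻¹/2) ≤ 2 * (t⁻¹/2) :=
      aux_tan_le_two_mul (by positivity) (by nlinarith [Real.pi_gt_three])
    have h2' : Real.arctan (Real.tan (t⁻¹/2)) = t⁻¹/2 :=
      Real.arctan_tan (by nlinarith [Real.pi_gt_three]) (by nlinarith [Real.pi_gt_three])
    calc t⁻¹/2 = Real.arctan (Real.tan (t⁻¹/2)) := h2'.symm
      _ ≤ Real.arctan t⁻¹ := Real.arctan_strictMono.monotone (by linarith)
  rw [hqeq]
  constructor
  · have h : (2 * Real.pi * t)⁻¹ = (t⁻¹/2)/Real.pi := by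
      field_simp
    rw [h]
    gcongr
  · have h : (Real.pi * t)⁻¹ = t⁻¹/Real.pi := by
      field_simp
    rw [h]
    gcongr

lemma aux_tail {Ω : Type*} [MeasurableSpace Ω] (μ : Measure Ω) (X : Ω → ℝ)
    (hX : Measurable X)
    (hmap : Measure.map X μ = volume.restrict (Ioo (0:ℝ) 1))
    (hval : ∀ ω, X ω ∈ Ioo (0:ℝ) 1)
    {t : ℝ} (ht : 1 ≤ t) :
    μ {ω | t < |Real.tan (Real.pi * (1/2 - X ω))| } ≤ ENNReal.ofReal (2/t) := by
  have hpi := Real.pi_pos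
  have ht0 : (0:ℝ) < t := by linarith
  set a : ℝ := 1/2 - Real.arctan t / Real.pi with ha
  have hb := aux_q_bounds ht
  have ha0 : 0 < a := lt_of_lt_of_le (by positivity) hb.1
  have hat : a ≤ 1/t := by
    refine hb.2.trans ?_
    rw [one_div]
    apply inv_anti₀ ht0
    nlinarith [Real.pi_gt_three]
  have ha1 : a ≤ 1 := hat.trans (by rw [div_le_one ht0] at *; linarith)
  -- subset claim
  have hsub : {ω | t < |Real.tan (Real.pi * (1/2 - X ω))| } ⊆
      X ⁻¹' (Iio a ∪ Ioi (1 - a)) := by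
    intro ω hω
    simp only [mem_setOf_eq] at hω
    obtain ⟨hx0, hx1⟩ := hval ω
    have hmem1 : Real.pi * (1/2 - X ω) ∈ Ioo (-(Real.pi/2)) (Real.pi/2) := by
      constructor
      · nlinarith
      · nlinarith
    rcases lt_abs.mp hω with h | h
    · -- tan θ > t with θ = π(1/2 - X ω); show X ω < a
      left
      simp only [mem_Iio]
      by_contra hc
      push_neg at hc   -- a ≤ X ω
      have hθ : Real.pi * (1/2 - X ω) ≤ Real.arctan t := by
        have : 1/2 - X ω ≤ Real.arctan t / Real.pi := by
          rw [ha] at hc; linarith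
        calc Real.pi * (1/2 - X ω) ≤ Real.pi * (Real.arctan t / Real.pi) := by
              exact mul_le_mul_of_nonneg_left this hpi.le
          _ = Real.arctan t := by field_simp
      have := Real.strictMonoOn_tan.monotoneOn hmem1 (Real.arctan_mem_Ioo t) hθ
      rw [Real.tan_arctan] at this
      linarith
    · -- tan θ < -t; show 1 - a < X ω
      right
      simp only [mem_Ioi]
      by_contra hc
      push_neg at hc  -- X ω ≤ 1 - a
      have hθ : -Real.arctan t ≤ Real.pi * (1/2 - X ω) := by
        have h2 : 1/2 - X ω ≥ -(Real.arctan t / Real.pi) := by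
          rw [ha] at hc; linarith
        calc -Real.arctan t = Real.pi * (-(Real.arctan t / Real.pi)) := by
              field_simp
          _ ≤ Real.pi * (1/2 - X ω) := mul_le_mul_of_nonneg_left h2 hpi.le
      have hmem2 : -Real.arctan t ∈ Ioo (-(Real.pi/2)) (Real.pi/2) := by
        have h1 := Real.arctan_lt_pi_div_two t
        have h2 := Real.neg_pi_div_two_lt_arctan t
        constructor
        · simp only [neg_lt_neg_iff]; exact h1
        · linarith
      have := Real.strictMonoOn_tan.monotoneOn hmem2 hmem1 hθ
      rw [Real.tan_neg, Real.tan_arctan] at this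
      linarith
  calc μ {ω | t < |Real.tan (Real.pi * (1/2 - X ω))| }
      ≤ μ (X ⁻¹' (Iio a ∪ Ioi (1 - a))) := measure_mono hsub
    _ = (Measure.map X μ) (Iio a ∪ Ioi (1 - a)) := by
        rw [Measure.map_apply hX (measurableSet_Iio.union measurableSet_Ioi)]
    _ = volume ((Iio a ∪ Ioi (1 - a)) ∩ Ioo (0:ℝ) 1) := by
        rw [hmap, Measure.restrict_apply (measurableSet_Iio.union measurableSet_Ioi)]
    _ ≤ volume (Iio a ∩ Ioo (0:ℝ) 1) + volume (Ioi (1-a) ∩ Ioo (0:ℝ) 1) := by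
        rw [union_inter_distrib_right]; exact measure_union_le _ _
    _ ≤ volume (Ioo (0:ℝ) a) + volume (Ioo (1-a) (1:ℝ)) := by
        gcongr
        · intro x hx; exact ⟨hx.2.1, hx.1⟩
        · intro x hx; exact ⟨hx.1, hx.2.2⟩
    _ = ENNReal.ofReal a + ENNReal.ofReal a := by
        rw [Real.volume_Ioo, Real.volume_Ioo]; norm_num
    _ = ENNReal.ofReal (2*a) := by
        rw [← ENNReal.ofReal_add ha0.le ha0.le]; ring_nf
    _ ≤ ENNReal.ofReal (2/t) := by
        apply ENNReal.ofReal_le_ofReal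
        rw [div_eq_mul_inv, ← one_div]
        linarith

lemma aux_core {K : ℕ} (hK : 0 < K) (g : Fin K → ℕ → ℝ) (M : ℝ) (hM : 0 < M)
    (hcase : ∀ i, (∃ s, s ≤ M ∧ (∀ᶠ n : ℕ in atTop, 0 < g i n) ∧
        Tendsto (fun n : ℕ => Real.log (g i n) / n) atTop (nhds (s/2))) ∨
      (∀ᶠ n : ℕ in atTop, |g i n| ≤ Real.exp (n * (M/4))))
    (i₀ : Fin K)
    (hpos₀ : ∀ᶠ n : ℕ in atTop, 0 < g i₀ n)
    (hmax : Tendsto (fun n : ℕ => Real.log (g i₀ n) / n) atTop (nhds (M/2))) :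
    (∀ᶠ n : ℕ in atTop, 1 ≤ (K:ℝ)⁻¹ * ∑ i, g i n) ∧
    Tendsto (fun n : ℕ => Real.log ((K:ℝ)⁻¹ * ∑ i, g i n) / n) atTop (nhds (M/2)) := by
  have hKR : (0:ℝ) < (K:ℝ) := by exact_mod_cast hK
  -- the key two-sided bound
  have key : ∀ δ : ℝ, 0 < δ → δ ≤ M/8 →
      ∀ᶠ n : ℕ in atTop,
        Real.exp (n * (M/2 - δ)) / (2*K) ≤ (K:ℝ)⁻¹ * ∑ i, g i n ∧
        (K:ℝ)⁻¹ * ∑ i, g i n ≤ Real.exp (n * (M/2 + δ)) := by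
    intro δ hδ hδM
    -- per-index eventual bounds
    have ev1 : ∀ᶠ n : ℕ in atTop, ∀ i, g i n ≤ Real.exp (n * (M/2 + δ)) ∧
        -Real.exp (n * (M/4)) ≤ g i n := by
      rw [eventually_all]
      intro i
      rcases hcase i with ⟨s, hs, hp, htd⟩ | hnull
      · have h1 : ∀ᶠ n : ℕ in atTop, Real.log (g i n) / n < M/2 + δ :=
          htd.eventually_lt_const (by linarith)
        filter_upwards [h1, hp, eventually_ge_atTop 1] with n h1 hp hn1
        have hn0 : (0:ℝ) < n := by exact_mod_cast hn1
        constructor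
        · have : Real.log (g i n) ≤ n * (M/2 + δ) := by
            rw [div_lt_iff₀ hn0] at h1; nlinarith
          calc g i n = Real.exp (Real.log (g i n)) := (Real.exp_log hp).symm
            _ ≤ Real.exp (n * (M/2 + δ)) := Real.exp_le_exp.2 this
        · have := Real.exp_pos ((n:ℝ) * (M/4)); linarith
      · filter_upwards [hnull] with n hn
        rcases abs_le.1 hn with ⟨h1, h2⟩
        refine ⟨h2.trans (Real.exp_le_exp.2 ?_), h1⟩
        have : (0:ℝ) ≤ n := Nat.cast_nonneg n
        nlinarith
    have ev2 : ∀ᶠ n : ℕ in atTop, Real.exp (n * (M/2 - δ)) ≤ g i₀ n := by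
      have h1 : ∀ᶠ n : ℕ in atTop, M/2 - δ < Real.log (g i₀ n) / n :=
        hmax.eventually_const_lt (by linarith)
      filter_upwards [h1, hpos₀, eventually_ge_atTop 1] with n h1 hp hn1
      have hn0 : (0:ℝ) < n := by exact_mod_cast hn1
      have : (n:ℝ) * (M/2 - δ) ≤ Real.log (g i₀ n) := by
        rw [lt_div_iff₀ hn0] at h1; nlinarith
      calc Real.exp ((n:ℝ) * (M/2 - δ)) ≤ Real.exp (Real.log (g i₀ n)) :=
            Real.exp_le_exp.2 this
        _ = g i₀ n := Real.exp_log hp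
    have ev3 : ∀ᶠ n : ℕ in atTop,
        (K:ℝ) * Real.exp (n * (M/4)) ≤ (1/2) * Real.exp (n * (M/2 - δ)) := by
      have hlim : Tendsto (fun n : ℕ => (n:ℝ) * (M/4 - δ)) atTop atTop :=
        tendsto_natCast_atTop_atTop.atTop_mul_const (by linarith)
      filter_upwards [hlim.eventually_ge_atTop (Real.log (2*K))] with n hn
      have h2K : Real.exp (Real.log (2*(K:ℝ))) ≤ Real.exp ((n:ℝ)*(M/4 - δ)) :=
        Real.exp_le_exp.2 hn
      rw [Real.exp_log (by positivity)] at h2K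
      have hsplit : Real.exp ((n:ℝ) * (M/2 - δ)) =
          Real.exp ((n:ℝ)*(M/4 - δ)) * Real.exp ((n:ℝ) * (M/4)) := by
        rw [← Real.exp_add]; ring_nf
      rw [hsplit]
      nlinarith [Real.exp_pos ((n:ℝ) * (M/4)), Real.exp_pos ((n:ℝ)*(M/4 - δ))]
    filter_upwards [ev1, ev2, ev3] with n h1 h2 h3
    have hEpos := Real.exp_pos ((n:ℝ) * (M/4))
    have hsum_ub : ∑ i, g i n ≤ (K:ℝ) * Real.exp (n * (M/2 + δ)) := by
      calc ∑ i, g i n ≤ ∑ _i : Fin K, Real.exp ((n:ℝ) * (M/2 + δ)) :=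
            Finset.sum_le_sum (fun i _ => (h1 i).1)
        _ = (K:ℝ) * Real.exp (n * (M/2 + δ)) := by
            rw [Finset.sum_const, Finset.card_univ, Fintype.card_fin, nsmul_eq_mul]
    have hsum_lb : g i₀ n - (K:ℝ) * Real.exp (n * (M/4)) ≤ ∑ i, g i n := by
      have hsplit : ∑ i, g i n = g i₀ n + ∑ i ∈ Finset.univ.erase i₀, g i n :=
        (Finset.add_sum_erase _ _ (Finset.mem_univ i₀)).symm
      have hrest : -((K:ℝ) * Real.exp (n * (M/4))) ≤ ∑ i ∈ Finset.univ.erase i₀, g i n := by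
        calc -((K:ℝ) * Real.exp (n * (M/4)))
            ≤ -(((Finset.univ.erase i₀).card : ℝ) * Real.exp (n * (M/4))) := by
              have hcard : ((Finset.univ.erase i₀).card : ℝ) ≤ (K:ℝ) := by
                have h2 : (Finset.univ.erase i₀).card ≤ K := by
                  simpa using Finset.card_erase_le (a := i₀) (s := (Finset.univ : Finset (Fin K)))
                exact_mod_cast h2
              nlinarith
          _ = ∑ _i ∈ Finset.univ.erase i₀, -Real.exp ((n:ℝ) * (M/4)) := by
              rw [Finset.sum_const, nsmul_eq_mul]; ring
          _ ≤ ∑ i ∈ Finset.univ.erase i₀, g i n :=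
              Finset.sum_le_sum (fun i _ => (h1 i).2)
      linarith
    constructor
    · rw [div_le_iff₀ (by positivity)]
      have h5 : (1/2) * Real.exp ((n:ℝ)*(M/2 - δ)) ≤ ∑ i, g i n := by linarith
      calc Real.exp ((n:ℝ)*(M/2 - δ)) = ((1/2) * Real.exp ((n:ℝ)*(M/2-δ))) * 2 := by ring
        _ ≤ (∑ i, g i n) * 2 := by nlinarith
        _ = ((K:ℝ)⁻¹ * ∑ i, g i n) * (2 * K) := by field_simp
    · rw [inv_mul_le_iff₀ hKR]
      linarith [hsum_ub]
  -- first conjunct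
  have hone : ∀ᶠ n : ℕ in atTop, 1 ≤ (K:ℝ)⁻¹ * ∑ i, g i n := by
    have hlim : Tendsto (fun n : ℕ => (n:ℝ) * (M/2 - M/8)) atTop atTop :=
      tendsto_natCast_atTop_atTop.atTop_mul_const (by linarith)
    filter_upwards [key (M/8) (by linarith) le_rfl,
        hlim.eventually_ge_atTop (Real.log (2*K))] with n hk hn
    have h2K : (2:ℝ)*(K:ℝ) ≤ Real.exp ((n:ℝ)*(M/2 - M/8)) := by
      have := Real.exp_le_exp.2 hn
      rwa [Real.exp_log (by positivity)] at this
    calc (1:ℝ) = (2*(K:ℝ)) / (2*K) := by field_simp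
      _ ≤ Real.exp ((n:ℝ)*(M/2 - M/8)) / (2*K) := by gcongr
      _ ≤ (K:ℝ)⁻¹ * ∑ i, g i n := hk.1
  refine ⟨hone, ?_⟩
  rw [Metric.tendsto_nhds]
  intro ε hε
  set δ := min (ε/3) (M/8) with hδdef
  have hδ0 : 0 < δ := lt_min (by linarith) (by linarith)
  have hδM : δ ≤ M/8 := min_le_right _ _
  have hδε : δ ≤ ε/3 := min_le_left _ _
  have hlog : Tendsto (fun n : ℕ => Real.log (2*(K:ℝ))/n) atTop (nhds 0) :=
    tendsto_const_div_atTop_nhds_zero_nat _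
  filter_upwards [key δ hδ0 hδM, hlog.eventually_lt_const (by linarith : (0:ℝ) < ε/3),
      eventually_ge_atTop 1] with n hk hl hn1
  have hn0 : (0:ℝ) < n := by exact_mod_cast hn1
  set Tv := (K:ℝ)⁻¹ * ∑ i, g i n with hTv
  have hTpos : 0 < Tv := lt_of_lt_of_le (by positivity) hk.1
  have hub : Real.log Tv ≤ n*(M/2+δ) := by
    calc Real.log Tv ≤ Real.log (Real.exp (n*(M/2+δ))) :=
          Real.log_le_log hTpos hk.2
      _ = n*(M/2+δ) := Real.log_exp _
  have hlb : (n:ℝ)*(M/2-δ) - Real.log (2*(K:ℝ)) ≤ Real.log Tv := by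
    have h4 := Real.log_le_log (by positivity) hk.1
    rwa [Real.log_div (Real.exp_ne_zero _) (by positivity), Real.log_exp] at h4
  have hub' : Real.log Tv / n ≤ M/2 + δ := by
    rw [div_le_iff₀ hn0]; nlinarith
  have hlb' : M/2 - δ - Real.log (2*(K:ℝ))/n ≤ Real.log Tv / n := by
    have hc : Real.log (2*(K:ℝ))/n * n = Real.log (2*(K:ℝ)) :=
      div_mul_cancel₀ _ hn0.ne'
    rw [le_div_iff₀ hn0]; nlinarith
  rw [Real.dist_eq, abs_lt]
  constructor <;> [linarith; linarith]

lemma aux_signal {lam c : ℝ} (hlam : 0 < lam) (hc : 0 < c)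
    (nseq : ℕ → ℕ) (hn : Tendsto (fun n : ℕ => (nseq n : ℝ)/(n:ℝ)) atTop (nhds lam))
    (p : ℕ → ℝ) (hval : ∀ n, p n ∈ Ioo (0:ℝ) 1)
    (hsl : Tendsto (fun n : ℕ => -(2/(nseq n : ℝ)) * Real.log (p n)) atTop (nhds c)) :
    (∀ᶠ n : ℕ in atTop, 0 < Real.tan (Real.pi * (1/2 - p n))) ∧
    Tendsto (fun n : ℕ => Real.log (Real.tan (Real.pi * (1/2 - p n))) / n) atTop
      (nhds ((lam * c)/2)) := by
  have hpi := Real.pi_pos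
  -- step 1 : -(2/n) log p → lam * c
  have h1 : Tendsto (fun n : ℕ =>
      ((nseq n : ℝ)/(n:ℝ)) * (-(2/(nseq n : ℝ)) * Real.log (p n))) atTop
      (nhds (lam * c)) := hn.mul hsl
  have heq : (fun n : ℕ => ((nseq n : ℝ)/(n:ℝ)) * (-(2/(nseq n : ℝ)) * Real.log (p n)))
      =ᶠ[atTop] (fun n : ℕ => -(2/(n:ℝ)) * Real.log (p n)) := by
    filter_upwards [hn.eventually_const_lt (half_lt_self hlam), eventually_ge_atTop 1]
      with n hgt hn1
    have hn0 : (0:ℝ) < (n:ℝ) := by exact_mod_cast hn1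
    have hq0 : (0:ℝ) < (nseq n : ℝ) := by
      by_contra hcon
      push_neg at hcon
      have : (nseq n : ℝ)/(n:ℝ) ≤ 0 := div_nonpos_of_nonpos_of_nonneg hcon hn0.le
      linarith
    field_simp
  have h2 : Tendsto (fun n : ℕ => -(2/(n:ℝ)) * Real.log (p n)) atTop (nhds (lam * c)) :=
    h1.congr' heq
  -- step 2 : log p / n → -(lam c)/2
  have h3 : Tendsto (fun n : ℕ => Real.log (p n) / (n:ℝ)) atTop (nhds (-(lam*c)/2)) := by
    have h := h2.const_mul (-1/2 : ℝ)
    have hl : (-1/2 : ℝ) * (lam * c) = -(lam*c)/2 := by ring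
    rw [hl] at h
    refine h.congr (fun n => ?_)
    rcases eq_or_ne ((n:ℝ)) 0 with h0 | h0
    · rw [h0]; simp
    · field_simp
  -- step 3 : p → 0
  have h4 : Tendsto p atTop (nhds 0) := by
    have hev : ∀ᶠ n : ℕ in atTop, Real.log (p n) ≤ (n:ℝ) * (-(lam*c)/4) := by
      filter_upwards [h3.eventually_le_const
        (by nlinarith : (-(lam*c)/2) < (-(lam*c)/4)), eventually_ge_atTop 1] with n hle hn1
      have hn0 : (0:ℝ) < (n:ℝ) := by exact_mod_cast hn1
      rw [div_le_iff₀ hn0] at hle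
      nlinarith
    have hbot : Tendsto (fun n : ℕ => (n:ℝ) * (-(lam*c)/4)) atTop atBot :=
      tendsto_natCast_atTop_atTop.atTop_mul_const_of_neg (by nlinarith)
    have hlogbot : Tendsto (fun n : ℕ => Real.log (p n)) atTop atBot :=
      tendsto_atBot_mono' atTop hev hbot
    have := Real.tendsto_exp_atBot.comp hlogbot
    refine this.congr (fun n => Real.exp_log (hval n).1)
  have h5 : ∀ᶠ n : ℕ in atTop, p n ≤ 1/4 := by
    exact h4.eventually_le_const (by norm_num : (0:ℝ) < 1/4)
  constructor
  · filter_upwards [h5] with n hp4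
    have hb := aux_cot_bounds (hval n).1 hp4
    have : (0:ℝ) < (2 * Real.pi * p n)⁻¹ := by
      have := (hval n).1; positivity
    linarith [hb.1]
  · have hlow : Tendsto (fun n : ℕ => (-Real.log (2*Real.pi) - Real.log (p n))/(n:ℝ))
        atTop (nhds ((lam*c)/2)) := by
      have ha := tendsto_const_div_atTop_nhds_zero_nat (-Real.log (2*Real.pi))
      have hcomb := ha.sub h3
      have hl : (0:ℝ) - (-(lam*c)/2) = (lam*c)/2 := by ring
      rw [hl] at hcomb
      exact hcomb.congr (fun n => (sub_div _ _ _).symm)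
    have hhigh : Tendsto (fun n : ℕ => (-Real.log (Real.pi) - Real.log (p n))/(n:ℝ))
        atTop (nhds ((lam*c)/2)) := by
      have ha := tendsto_const_div_atTop_nhds_zero_nat (-Real.log (Real.pi))
      have hcomb := ha.sub h3
      have hl : (0:ℝ) - (-(lam*c)/2) = (lam*c)/2 := by ring
      rw [hl] at hcomb
      exact hcomb.congr (fun n => (sub_div _ _ _).symm)
    refine tendsto_of_tendsto_of_tendsto_of_le_of_le' hlow hhigh ?_ ?_
    · filter_upwards [h5, eventually_ge_atTop 1] with n hp4 hn1
      have hn0 : (0:ℝ) < (n:ℝ) := by exact_mod_cast hn1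
      have hppos := (hval n).1
      have hb := aux_cot_bounds hppos hp4
      have l1 : -Real.log (2*Real.pi) - Real.log (p n) = Real.log ((2*Real.pi*(p n))⁻¹) := by
        rw [Real.log_inv, Real.log_mul (by positivity) hppos.ne']
        ring
      rw [l1]
      have hnum : Real.log ((2*Real.pi*(p n))⁻¹) ≤
          Real.log (Real.tan (Real.pi * (1/2 - p n))) :=
        Real.log_le_log (by positivity) hb.1
      gcongr
    · filter_upwards [h5, eventually_ge_atTop 1] with n hp4 hn1
      have hn0 : (0:ℝ) < (n:ℝ) := by exact_mod_cast hn1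
      have hppos := (hval n).1
      have hb := aux_cot_bounds hppos hp4
      have htanpos : 0 < Real.tan (Real.pi * (1/2 - p n)) := by
        have h2' : (0:ℝ) < (2 * Real.pi * p n)⁻¹ := by positivity
        linarith [hb.1]
      have l2 : -Real.log (Real.pi) - Real.log (p n) = Real.log ((Real.pi*(p n))⁻¹) := by
        rw [Real.log_inv, Real.log_mul (by positivity) hppos.ne']
        ring
      rw [l2]
      have hnum : Real.log (Real.tan (Real.pi * (1/2 - p n))) ≤
          Real.log ((Real.pi*(p n))⁻¹) :=
        Real.log_le_log htanpos hb.2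
      gcongr

lemma aux_q_conv {M : ℝ} (hM : 0 < M) (Tn : ℕ → ℝ) (qn : ℕ → ℝ)
    (hq : ∀ n, qn n = 1/2 - Real.arctan (Tn n)/Real.pi)
    (hone : ∀ᶠ n : ℕ in atTop, 1 ≤ Tn n)
    (hlog : Tendsto (fun n : ℕ => Real.log (Tn n)/(n:ℝ)) atTop (nhds (M/2))) :
    Tendsto (fun n : ℕ => -(2/(n:ℝ)) * Real.log (qn n)) atTop (nhds M) := by
  have hpi := Real.pi_pos
  have hlow : Tendsto (fun n : ℕ => 2*(Real.log (Tn n)/(n:ℝ)) + 2*Real.log Real.pi/(n:ℝ))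
      atTop (nhds M) := by
    have h1 := hlog.const_mul (2:ℝ)
    have h2 := tendsto_const_div_atTop_nhds_zero_nat (2*Real.log Real.pi)
    have h3 := h1.add h2
    have hl : (2:ℝ)*(M/2) + 0 = M := by ring
    rwa [hl] at h3
  have hhigh : Tendsto (fun n : ℕ =>
      2*(Real.log (Tn n)/(n:ℝ)) + 2*Real.log (2*Real.pi)/(n:ℝ)) atTop (nhds M) := by
    have h1 := hlog.const_mul (2:ℝ)
    have h2 := tendsto_const_div_atTop_nhds_zero_nat (2*Real.log (2*Real.pi))
    have h3 := h1.add h2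
    have hl : (2:ℝ)*(M/2) + 0 = M := by ring
    rwa [hl] at h3
  refine tendsto_of_tendsto_of_tendsto_of_le_of_le' hlow hhigh ?_ ?_
  · filter_upwards [hone, eventually_ge_atTop 1] with n hT hn1
    have hn0 : (0:ℝ) < (n:ℝ) := by exact_mod_cast hn1
    have hT0 : (0:ℝ) < Tn n := by linarith
    have hb := aux_q_bounds hT
    rw [← hq n] at hb
    have hqpos : 0 < qn n := lt_of_lt_of_le (by positivity) hb.1
    have hlq : Real.log (qn n) ≤ -(Real.log Real.pi + Real.log (Tn n)) := by
      calc Real.log (qn n) ≤ Real.log ((Real.pi * Tn n)⁻¹) :=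
            Real.log_le_log hqpos hb.2
        _ = -(Real.log Real.pi + Real.log (Tn n)) := by
            rw [Real.log_inv, Real.log_mul hpi.ne' hT0.ne']
    have hmul := mul_le_mul_of_nonneg_left hlq (by positivity : (0:ℝ) ≤ 2/(n:ℝ))
    have hid : 2/(n:ℝ) * Real.log (qn n) = 2 * Real.log (qn n) * ((n:ℝ))⁻¹ := by
      field_simp
    simp only [div_eq_mul_inv] at hmul ⊢
    nlinarith [hmul]
  · filter_upwards [hone, eventually_ge_atTop 1] with n hT hn1
    have hn0 : (0:ℝ) < (n:ℝ) := by exact_mod_cast hn1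
    have hT0 : (0:ℝ) < Tn n := by linarith
    have hb := aux_q_bounds hT
    rw [← hq n] at hb
    have hqpos : 0 < qn n := lt_of_lt_of_le (by positivity) hb.1
    have hlq : -(Real.log (2*Real.pi) + Real.log (Tn n)) ≤ Real.log (qn n) := by
      calc -(Real.log (2*Real.pi) + Real.log (Tn n))
          = Real.log ((2*Real.pi * Tn n)⁻¹) := by
            rw [Real.log_inv, Real.log_mul (by positivity) hT0.ne']
        _ ≤ Real.log (qn n) := Real.log_le_log (by positivity) hb.1
    have hmul := mul_le_mul_of_nonneg_left hlq (by positivity : (0:ℝ) ≤ 2/(n:ℝ))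
    simp only [div_eq_mul_inv] at hmul ⊢
    nlinarith [hmul]

end AuxCauchyComb

/-- The Cauchy combination test has exact slope `max_{i ≤ ℓ} λ i * c i`; in particular,
when `ℓ ≥ 2` it is not asymptotically Bahadur optimal since
`max_{i ≤ ℓ} λ i c i < ∑ λ i c i`. -/
theorem cauchy_combination_exact_slope
    {K : ℕ} (hK : 1 ≤ K) (ℓ : ℕ) (hℓ : 1 ≤ ℓ) (hℓK : ℓ ≤ K)
    (lam c : Fin K → ℝ)
    (hlam : ∀ i, 0 < lam i)
    (hcpos : ∀ i : Fin K, (i : ℕ) < ℓ → 0 < c i)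
    (hcnull : ∀ i : Fin K, ℓ ≤ (i : ℕ) → c i = 0)
    (nseq : Fin K → ℕ → ℕ)
    (hn : ∀ i, Tendsto (fun n : ℕ => (nseq i n : ℝ) / (n : ℝ)) atTop (nhds (lam i)))
    {Ω : Type*} [MeasurableSpace Ω] (μ : Measure Ω) [IsProbabilityMeasure μ]
    (p : ℕ → Fin K → Ω → ℝ)
    (hmeas : ∀ n i, Measurable (p n i))
    (hval : ∀ n i ω, p n i ω ∈ Ioo (0 : ℝ) 1)
    (hslope : ∀ i : Fin K, (i : ℕ) < ℓ →
      ∀ᵐ ω ∂μ, Tendsto (fun n : ℕ => -(2 / (nseq i n : ℝ)) * Real.log (p n i ω))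
        atTop (nhds (c i)))
    (hnull : ∀ i : Fin K, ℓ ≤ (i : ℕ) →
      ∀ n, Measure.map (p n i) μ = volume.restrict (Ioo (0 : ℝ) 1))
    -- the Cauchy combination statistic and its combined p-value
    (T : ℕ → Ω → ℝ)
    (hT : ∀ n ω, T n ω =
      (1 / (K : ℝ)) * ∑ i : Fin K, Real.tan (Real.pi * (1 / 2 - p n i ω)))
    (q : ℕ → Ω → ℝ)
    (hq : ∀ n ω, q n ω = 1 / 2 - Real.arctan (T n ω) / Real.pi) :
    (∀ᵐ ω ∂μ, Tendsto (fun n : ℕ => -(2 / (n : ℝ)) * Real.log (q n ω))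
      atTop (nhds (⨆ i : Fin ℓ, lam (Fin.castLE hℓK i) * c (Fin.castLE hℓK i)))) ∧
    (2 ≤ ℓ →
      (⨆ i : Fin ℓ, lam (Fin.castLE hℓK i) * c (Fin.castLE hℓK i)) <
        ∑ i : Fin K, lam i * c i) := by
  classical
  have hpi := Real.pi_pos
  set f : Fin ℓ → ℝ := fun i => lam (Fin.castLE hℓK i) * c (Fin.castLE hℓK i) with hf
  haveI : Nonempty (Fin ℓ) := ⟨⟨0, hℓ⟩⟩
  obtain ⟨j, hj⟩ := Finite.exists_max f
  set M : ℝ := ⨆ i : Fin ℓ, f i with hMdef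
  have hMj : M = f j :=
    le_antisymm (ciSup_le hj) (le_ciSup (Set.finite_range f).bddAbove j)
  have hjlt : ((Fin.castLE hℓK j : Fin K) : ℕ) < ℓ := j.isLt
  have hMpos : 0 < M := by
    rw [hMj]
    exact mul_pos (hlam _) (hcpos _ hjlt)
  have hMub : ∀ i : Fin K, (i : ℕ) < ℓ → lam i * c i ≤ M := by
    intro i hi
    have h1 : f ⟨(i:ℕ), hi⟩ ≤ f j := hj _
    have h2 : Fin.castLE hℓK ⟨(i:ℕ), hi⟩ = i := rfl
    rw [hMj]
    calc lam i * c i = f ⟨(i:ℕ), hi⟩ := by rw [hf]; simp only [h2]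
      _ ≤ f j := h1
  have part2 : 2 ≤ ℓ → M < ∑ i : Fin K, lam i * c i := by
    intro h2ℓ
    haveI : Nontrivial (Fin ℓ) := Fin.nontrivial_iff_two_le.mpr h2ℓ
    obtain ⟨j', hj'⟩ := exists_ne j
    have hab : Fin.castLE hℓK j ≠ Fin.castLE hℓK j' := by
      intro h
      exact hj' ((Fin.castLE_injective hℓK h).symm)
    have hnn : ∀ i : Fin K, 0 ≤ lam i * c i := by
      intro i
      rcases lt_or_ge (i:ℕ) ℓ with hi | hi
      · exact (mul_pos (hlam i) (hcpos i hi)).le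
      · rw [hcnull i hi, mul_zero]
    have hbpos : 0 < lam (Fin.castLE hℓK j') * c (Fin.castLE hℓK j') :=
      mul_pos (hlam _) (hcpos _ j'.isLt)
    have hsum : lam (Fin.castLE hℓK j) * c (Fin.castLE hℓK j) +
        lam (Fin.castLE hℓK j') * c (Fin.castLE hℓK j') ≤ ∑ i : Fin K, lam i * c i := by
      have hle := Finset.sum_le_sum_of_subset_of_nonneg
        (Finset.subset_univ ({Fin.castLE hℓK j, Fin.castLE hℓK j'} : Finset (Fin K)))
        (fun i _ _ => hnn i)
      rwa [Finset.sum_pair hab] at hle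
    have hfj : M = lam (Fin.castLE hℓK j) * c (Fin.castLE hℓK j) := hMj
    rw [hfj]
    linarith
  refine ⟨?_, part2⟩
  -- Borel–Cantelli for null indices
  have hBC : ∀ i : Fin K, ℓ ≤ (i:ℕ) → ∀ᵐ ω ∂μ, ∀ᶠ n : ℕ in atTop,
      |Real.tan (Real.pi * (1/2 - p n i ω))| ≤ Real.exp (n * (M/4)) := by
    intro i hi
    set s : ℕ → Set Ω := fun n =>
      {ω | Real.exp ((n:ℝ)*(M/4)) < |Real.tan (Real.pi * (1/2 - p n i ω))|} with hs
    have hsum : ∑' n, μ (s n) ≠ ⊤ := by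
      set r : ENNReal := ENNReal.ofReal (Real.exp (-(M/4))) with hr
      have hr1 : r < 1 := by
        rw [hr]
        exact ENNReal.ofReal_lt_one.2 (Real.exp_lt_one_iff.2 (by linarith))
      have hle : ∀ n : ℕ, μ (s n) ≤ ENNReal.ofReal 2 * r ^ n := by
        intro n
        have ht1 : (1:ℝ) ≤ Real.exp ((n:ℝ)*(M/4)) := Real.one_le_exp (by positivity)
        have htail := aux_tail μ (p n i) (hmeas n i) (hnull i hi n)
          (fun ω => hval n i ω) ht1
        refine htail.trans ?_
        have he : 2 / Real.exp ((n:ℝ)*(M/4)) = 2 * Real.exp (-(M/4)) ^ n := by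
          rw [← Real.exp_nat_mul, div_eq_mul_inv, ← Real.exp_neg]
          ring_nf
        rw [he, ENNReal.ofReal_mul (by norm_num : (0:ℝ) ≤ 2),
          ENNReal.ofReal_pow (Real.exp_nonneg _)]
      have hfin : ENNReal.ofReal 2 * (1 - r)⁻¹ ≠ ⊤ := by
        apply ENNReal.mul_ne_top ENNReal.ofReal_ne_top
        refine ENNReal.inv_ne_top.2 ?_
        rw [Ne, tsub_eq_zero_iff_le]
        exact fun hle1 => absurd hr1 (not_lt.2 hle1)
      have hcalc : ∑' n, μ (s n) ≤ ENNReal.ofReal 2 * (1 - r)⁻¹ := by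
        calc ∑' n, μ (s n) ≤ ∑' n, ENNReal.ofReal 2 * r ^ n := ENNReal.tsum_le_tsum hle
          _ = ENNReal.ofReal 2 * ∑' n, r ^ n := by rw [ENNReal.tsum_mul_left]
          _ = ENNReal.ofReal 2 * (1 - r)⁻¹ := by rw [ENNReal.tsum_geometric]
      exact ne_top_of_le_ne_top hfin hcalc
    filter_upwards [MeasureTheory.ae_eventually_notMem hsum] with ω hω
    filter_upwards [hω] with n hn
    have : ¬ (Real.exp ((n:ℝ)*(M/4)) < |Real.tan (Real.pi * (1/2 - p n i ω))|) := hn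
    exact not_lt.1 this
  have hae : ∀ᵐ ω ∂μ, ∀ i : Fin K,
      (((i:ℕ) < ℓ → Tendsto (fun n : ℕ => -(2/(nseq i n : ℝ)) * Real.log (p n i ω))
        atTop (nhds (c i))) ∧
       (ℓ ≤ (i:ℕ) → ∀ᶠ n : ℕ in atTop,
        |Real.tan (Real.pi * (1/2 - p n i ω))| ≤ Real.exp (n * (M/4)))) := by
    rw [ae_all_iff]
    intro i
    rcases lt_or_ge ((i:ℕ)) ℓ with hi | hi
    · filter_upwards [hslope i hi] with ω h
      exact ⟨fun _ => h, fun h' => absurd hi (not_lt.2 h')⟩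
    · filter_upwards [hBC i hi] with ω h
      exact ⟨fun h' => absurd h' (not_lt.2 hi), fun _ => h⟩
  filter_upwards [hae] with ω hω
  set g : Fin K → ℕ → ℝ := fun i n => Real.tan (Real.pi * (1/2 - p n i ω)) with hg
  have hsig : ∀ i : Fin K, (i:ℕ) < ℓ →
      (∀ᶠ n : ℕ in atTop, 0 < g i n) ∧
      Tendsto (fun n : ℕ => Real.log (g i n) / (n:ℝ)) atTop (nhds ((lam i * c i)/2)) := by
    intro i hi
    exact aux_signal (hlam i) (hcpos i hi) (nseq i) (hn i) (fun n => p n i ω)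
      (fun n => hval n i ω) ((hω i).1 hi)
  have hcase : ∀ i, (∃ sl, sl ≤ M ∧ (∀ᶠ n : ℕ in atTop, 0 < g i n) ∧
      Tendsto (fun n : ℕ => Real.log (g i n) / (n:ℝ)) atTop (nhds (sl/2))) ∨
      (∀ᶠ n : ℕ in atTop, |g i n| ≤ Real.exp ((n:ℝ) * (M/4))) := by
    intro i
    rcases lt_or_ge ((i:ℕ)) ℓ with hi | hi
    · exact Or.inl ⟨lam i * c i, hMub i hi, (hsig i hi).1, (hsig i hi).2⟩
    · exact Or.inr ((hω i).2 hi)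
  have hmaxT := (hsig (Fin.castLE hℓK j) hjlt).2
  have hMi₀ : lam (Fin.castLE hℓK j) * c (Fin.castLE hℓK j) = M := hMj.symm
  rw [hMi₀] at hmaxT
  obtain ⟨honeT, hlogT⟩ := aux_core (by omega : 0 < K) g M hMpos hcase
    (Fin.castLE hℓK j) (hsig (Fin.castLE hℓK j) hjlt).1 hmaxT
  have hTeq : ∀ n, T n ω = (K:ℝ)⁻¹ * ∑ i, g i n := by
    intro n
    rw [hT n ω, one_div]
  have hone' : ∀ᶠ n : ℕ in atTop, 1 ≤ T n ω := by
    filter_upwards [honeT] with n h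
    rw [hTeq n]; exact h
  have hlog' : Tendsto (fun n : ℕ => Real.log (T n ω)/(n:ℝ)) atTop (nhds (M/2)) := by
    refine hlogT.congr (fun n => ?_)
    rw [hTeq n]
  exact aux_q_conv hMpos (fun n => T n ω) (fun n => q n ω) (fun n => hq n ω) hone' hlog'
end
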